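/- arXiv:1406.0352 — 3 statements merged into one kernel-verified Lean document; each statement's English description precedes it below -/
import Mathlib

section
/- Let α and β be fixed partitions. There exists a bijection between the set of triples ((𝐢,𝐣), T, U), where (𝐢,𝐣) is a biword (a finite multiset of pairs of positive integers) and, for some partition μ contained in both α and β, T is an SSYT of skew shape α/μ and U is an SSYT of skew shape β/μ, and the set of pairs (P, Q), where, for some partition λ containing both α and β, P is an SSYT of skew shape λ/β and Q is an SSYT of skew shape λ/α, such that the bijection satisfies: the multiset of entries of P equals the multiset sum of the multiset of first components of the biletters of (𝐢,𝐣) and the multiset of entries of T, and the multiset of entries of Q equals the multiset sum of the multiset of second components of the biletters of (𝐢,𝐣) and the multiset of entries of U. -/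
/-- A semistandard Young tableau of skew shape `lam / mu`: a filling of the cells of `lam`
not in `mu` with positive integers, weakly increasing along rows and strictly increasing
down columns (cells are indexed by `(row, column)`, both `0`-indexed). -/
structure SkewSSYT (lam mu : YoungDiagram) where
  entry : ℕ → ℕ → ℕ
  pos : ∀ i j, (i, j) ∈ lam → (i, j) ∉ mu → 0 < entry i j
  zeros : ∀ i j, ¬((i, j) ∈ lam ∧ (i, j) ∉ mu) → entry i j = 0
  row_weak : ∀ i j1 j2, j1 < j2 → (i, j1) ∈ lam → (i, j1) ∉ mu →
    (i, j2) ∈ lam → (i, j2) ∉ mu → entry i j1 ≤ entry i j2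
  col_strict : ∀ i1 i2 j, i1 < i2 → (i1, j) ∈ lam → (i1, j) ∉ mu →
    (i2, j) ∈ lam → (i2, j) ∉ mu → entry i1 j < entry i2 j

/-- The multiset of entries of a skew semistandard Young tableau. -/
def SkewSSYT.entries {lam mu : YoungDiagram} (T : SkewSSYT lam mu) : Multiset ℕ :=
  (lam.cells \ mu.cells).val.map fun p => T.entry p.1 p.2

/-- The input data of the Sagan–Stanley skew RSK correspondence (for fixed partitions
`α`, `β`): a biword, i.e. a finite multiset of biletters (pairs of positive integers),
together with a partition `μ` contained in both `α` and `β`, a skew SSYT `T` of shape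
`α/μ` and a skew SSYT `U` of shape `β/μ`. -/
structure SkewRSKInput (α β : YoungDiagram) where
  bw : Multiset (ℕ × ℕ)
  bw_pos : ∀ p ∈ bw, 0 < p.1 ∧ 0 < p.2
  μ : YoungDiagram
  hμα : μ ≤ α
  hμβ : μ ≤ β
  T : SkewSSYT α μ
  U : SkewSSYT β μ

/-- The output data of the Sagan–Stanley skew RSK correspondence (for fixed partitions
`α`, `β`): a partition `lam` containing both `α` and `β`, a skew SSYT `P` of shape
`lam/β` and a skew SSYT `Q` of shape `lam/α`. -/
structure SkewRSKOutput (α β : YoungDiagram) where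
  lam : YoungDiagram
  hαlam : α ≤ lam
  hβlam : β ≤ lam
  P : SkewSSYT lam β
  Q : SkewSSYT lam α


namespace SS

abbrev Seq := ℕ → ℕ

/-- `f` vanishes from `N` on. -/
def UB (f : Seq) (N : ℕ) : Prop := ∀ i, N ≤ i → f i = 0

def Anti (f : Seq) : Prop := ∀ i, f (i+1) ≤ f i

/-- horizontal strip relation: `μ ⊆ l` and `l/μ` is a horizontal strip. -/
def HS (μ l : Seq) : Prop := (∀ i, μ i ≤ l i) ∧ (∀ i, l (i+1) ≤ μ i)

theorem HS.anti_lo {μ l : Seq} (h : HS μ l) : Anti μ :=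
  fun i => le_trans (h.1 (i+1)) (h.2 i)

theorem HS.anti_hi {μ l : Seq} (h : HS μ l) : Anti l :=
  fun i => le_trans (h.2 i) (h.1 i)

theorem HS.refl {f : Seq} (hf : Anti f) : HS f f := ⟨fun _ => le_rfl, hf⟩

theorem UB.mono {f : Seq} {N M : ℕ} (h : UB f N) (hNM : N ≤ M) : UB f M :=
  fun i hi => h i (le_trans hNM hi)

/-- Partial sums. -/
def W (f : Seq) (M : ℕ) : ℕ := ∑ i ∈ Finset.range M, f i

theorem W_stab {f : Seq} {N M : ℕ} (h : UB f N) (hNM : N ≤ M) : W f M = W f N := by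
  induction M with
  | zero => obtain rfl : N = 0 := by omega
            rfl
  | succ M ih =>
    rcases Nat.lt_or_ge N (M+1) with hlt | hge
    · have : N ≤ M := by omega
      rw [W, Finset.sum_range_succ, ← W, ih this, h M this, add_zero]
    · obtain rfl : N = M + 1 := by omega
      rfl

theorem W_mono {f g : Seq} (h : ∀ i, f i ≤ g i) (M : ℕ) : W f M ≤ W g M :=
  Finset.sum_le_sum fun i _ => h i

/-- The forward local growth rule. -/
def fc (μ a b : Seq) (k : ℕ) : Seq
  | 0 => max (a 0) (b 0) + k
  | i+1 => max (a (i+1)) (b (i+1)) + (min (a i) (b i) - μ i)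

/-- The backward local rule: the multiplicity. -/
def bk (a b l : Seq) : ℕ := l 0 - max (a 0) (b 0)

/-- The backward local rule: the inner partition. -/
def bm (a b l : Seq) : Seq := fun i => min (a i) (b i) - (l (i+1) - max (a (i+1)) (b (i+1)))

section cell
variable {μ a b l : Seq} {k : ℕ}

theorem fc_hs_a (hμa : HS μ a) (hμb : HS μ b) : HS a (fc μ a b k) := by
  constructor <;> intro i
  · cases i with
    | zero => simp only [fc]; omega
    | succ i => simp only [fc]; omega
  · have h1 := hμa.2 i; have h2 := hμb.2 i; have h3 := hμa.1 i; have h4 := hμb.1 i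
    simp only [fc]; omega

theorem fc_hs_b (hμa : HS μ a) (hμb : HS μ b) : HS b (fc μ a b k) := by
  constructor <;> intro i
  · cases i with
    | zero => simp only [fc]; omega
    | succ i => simp only [fc]; omega
  · have h1 := hμa.2 i; have h2 := hμb.2 i; have h3 := hμa.1 i; have h4 := hμb.1 i
    simp only [fc]; omega

theorem fc_ub {P Q : ℕ} (ha : UB a P) (hb : UB b Q) : UB (fc μ a b k) (max P Q + 1) := by
  intro i hi
  obtain ⟨i, rfl⟩ : ∃ i', i = i' + 1 := ⟨i - 1, by omega⟩
  have h1 := ha (i+1) (by omega); have h2 := hb (i+1) (by omega)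
  have h3 := ha i (by omega); have h4 := hb i (by omega)
  simp only [fc]; omega

theorem bm_hs_a (hal : HS a l) (hbl : HS b l) : HS (bm a b l) a := by
  constructor <;> intro i
  · simp only [bm]; omega
  · have h1 := hal.2 i; have h2 := hbl.2 i; have h3 := hal.1 (i+1); have h4 := hbl.1 (i+1)
    simp only [bm]; omega

theorem bm_hs_b (hal : HS a l) (hbl : HS b l) : HS (bm a b l) b := by
  constructor <;> intro i
  · simp only [bm]; omega
  · have h1 := hal.2 i; have h2 := hbl.2 i; have h3 := hal.1 (i+1); have h4 := hbl.1 (i+1)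
    simp only [bm]; omega

theorem bm_ub {P : ℕ} (ha : UB a P) : UB (bm a b l) P := by
  intro i hi; have := ha i hi; simp only [bm]; omega

theorem fc_bm (hal : HS a l) (hbl : HS b l) : fc (bm a b l) a b (bk a b l) = l := by
  funext i
  cases i with
  | zero =>
    have h1 := hal.1 0; have h2 := hbl.1 0
    simp only [fc, bk]; omega
  | succ i =>
    have h1 := hal.1 (i+1); have h2 := hbl.1 (i+1); have h3 := hal.2 i; have h4 := hbl.2 i
    simp only [fc, bm]; omega

theorem bm_fc (hμa : HS μ a) (hμb : HS μ b) : bm a b (fc μ a b k) = μ := by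
  funext i
  have h1 := hμa.1 i; have h2 := hμb.1 i
  simp only [bm, fc]; omega

theorem bk_fc : bk a b (fc μ a b k) = k := by simp only [bk, fc]; omega

/-- degenerate forward rule: trivial on the `a` side. -/
theorem fc_left (h : HS μ b) : fc μ μ b 0 = b := by
  funext i
  cases i with
  | zero => have := h.1 0; simp only [fc]; omega
  | succ i =>
    have h1 := h.1 i; have h2 := h.1 (i+1); have h3 := h.2 i
    simp only [fc]; omega

/-- degenerate forward rule: trivial on the `b` side. -/
theorem fc_right (h : HS μ a) : fc μ a μ 0 = a := by
  funext i
  cases i with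
  | zero => have := h.1 0; simp only [fc]; omega
  | succ i =>
    have h1 := h.1 i; have h2 := h.1 (i+1); have h3 := h.2 i
    simp only [fc]; omega

/-- degenerate backward rule: `b = l`. -/
theorem bm_deg_b (hal : HS a l) : bm a l l = a := by
  funext i
  have h1 := hal.1 i; have h2 := hal.1 (i+1)
  simp only [bm]; omega

theorem bk_deg_b (hal : HS a l) : bk a l l = 0 := by
  have := hal.1 0; simp only [bk]; omega

theorem bm_deg_a (hbl : HS b l) : bm l b l = b := by
  funext i
  have h1 := hbl.1 i; have h2 := hbl.1 (i+1)
  simp only [bm]; omega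

theorem bk_deg_a (hbl : HS b l) : bk l b l = 0 := by
  have := hbl.1 0; simp only [bk]; omega

theorem fc_W_aux (hμ : ∀ i, μ i ≤ min (a i) (b i)) (M : ℕ) :
    W (fc μ a b k) (M+1) + W μ M + min (a M) (b M) = k + W a (M+1) + W b (M+1) := by
  induction M with
  | zero =>
    simp only [W, zero_add, Finset.sum_range_one, Finset.sum_range_zero, fc]; omega
  | succ M ih =>
    have h1 := hμ M; have h2 := hμ (M+1)
    simp only [W, Finset.sum_range_succ] at ih ⊢
    have hfc : fc μ a b k (M+1) = max (a (M+1)) (b (M+1)) + (min (a M) (b M) - μ M) := rfl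
    omega

/-- The local weight identity `|l| + |μ| = k + |a| + |b|`. -/
theorem fc_W {M : ℕ} (hμ : ∀ i, μ i ≤ min (a i) (b i)) (hM : 0 < M)
    (ha : UB a (M-1) ∨ UB b (M-1)) (hμ0 : UB μ (M-1)) :
    W (fc μ a b k) M + W μ M = k + W a M + W b M := by
  obtain ⟨M, rfl⟩ : ∃ M', M = M' + 1 := ⟨M - 1, by omega⟩
  have h := fc_W_aux (k := k) hμ M
  have hmin : min (a M) (b M) = 0 := by
    rcases ha with h' | h' <;> (have := h' M (by omega); omega)
  have hμM : μ M = 0 := hμ0 M (by omega)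
  simp only [W, Finset.sum_range_succ] at h ⊢
  omega

end cell

end SS
/-! ### grids -/

namespace SS

/-- One row of the forward growth diagram. -/
def frow (prev : ℕ → Seq) (kr : ℕ → ℕ) (s : Seq) : ℕ → Seq
  | 0 => s
  | j+1 => fc (prev j) (frow prev kr s j) (prev (j+1)) (kr (j+1))

/-- The forward growth diagram. -/
def fgrid (a : ℕ → ℕ → ℕ) (t u : ℕ → Seq) : ℕ → ℕ → Seq
  | 0 => u
  | i+1 => frow (fgrid a t u i) (a (i+1)) (t (i+1))

/-- Hypotheses on the input data. -/
structure CInH (a : ℕ → ℕ → ℕ) (t u : ℕ → Seq) : Prop where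
  ha0 : ∀ i j, i = 0 ∨ j = 0 → a i j = 0
  ht : ∀ n, HS (t n) (t (n+1))
  hu : ∀ n, HS (u n) (u (n+1))
  htu : t 0 = u 0

variable {a : ℕ → ℕ → ℕ} {t u : ℕ → Seq} {α β : Seq} {N : ℕ}

theorem fgrid_zero (htu : t 0 = u 0) : ∀ i, fgrid a t u i 0 = t i
  | 0 => htu.symm
  | _+1 => rfl

theorem fgrid_succ (i j : ℕ) : fgrid a t u (i+1) (j+1) =
    fc (fgrid a t u i j) (fgrid a t u (i+1) j) (fgrid a t u i (j+1)) (a (i+1) (j+1)) := rfl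

theorem frow_inv {prev : ℕ → Seq} {kr : ℕ → ℕ} {s : Seq}
    (hprev : ∀ j, HS (prev j) (prev (j+1))) (hs0 : HS (prev 0) s) :
    ∀ j, HS (prev j) (frow prev kr s j) ∧ HS (frow prev kr s j) (frow prev kr s (j+1)) := by
  have V : ∀ j, HS (prev j) (frow prev kr s j) := by
    intro j; induction j with
    | zero => exact hs0
    | succ j ih => exact fc_hs_b ih (hprev j)
  exact fun j => ⟨V j, fc_hs_a (V j) (hprev j)⟩

theorem fgrid_inv (H : CInH a t u) : ∀ i,
    (∀ j, HS (fgrid a t u i j) (fgrid a t u i (j+1))) ∧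
    (∀ j, HS (fgrid a t u i j) (fgrid a t u (i+1) j)) := by
  intro i; induction i with
  | zero =>
    refine ⟨H.hu, fun j => (frow_inv H.hu ?_ j).1⟩
    show HS (u 0) (t 1); rw [← H.htu]; exact H.ht 0
  | succ i ih =>
    have hs0 : HS (fgrid a t u i 0) (t (i+1)) := by rw [fgrid_zero H.htu]; exact H.ht i
    have hor : ∀ j, HS (fgrid a t u (i+1) j) (fgrid a t u (i+1) (j+1)) :=
      fun j => (frow_inv ih.1 hs0 j).2
    have hs1 : HS (fgrid a t u (i+1) 0) (t (i+2)) := H.ht (i+1)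
    exact ⟨hor, fun j => (frow_inv hor hs1 j).1⟩

theorem fgrid_ub (hta : ∀ n, UB (t n) N) (hua : ∀ n, UB (u n) N) :
    ∀ i j, UB (fgrid a t u i j) (N + i + j) := by
  intro i; induction i with
  | zero => exact fun j => (hua j).mono (by omega)
  | succ i ih =>
    intro j; induction j with
    | zero => exact (hta (i+1)).mono (by omega)
    | succ j ihj => exact (fc_ub ihj (ih (j+1))).mono (by omega)

/-- a bound for the input data. -/
def Bnd (α β : Seq) (a : ℕ → ℕ → ℕ) (t u : ℕ → Seq) (N : ℕ) : Prop :=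
  (∀ i j, N < i ∨ N < j → a i j = 0) ∧ (∀ n, N ≤ n → t n = α) ∧ (∀ n, N ≤ n → u n = β) ∧
  (∀ n, UB (t n) N) ∧ (∀ n, UB (u n) N)

theorem Bnd.mono {N' : ℕ} (h : Bnd α β a t u N) (hn : N ≤ N') : Bnd α β a t u N' :=
  ⟨fun i j hij => h.1 i j (by omega),
   fun n hn' => h.2.1 n (by omega), fun n hn' => h.2.2.1 n (by omega),
   fun n => (h.2.2.2.1 n).mono hn, fun n => (h.2.2.2.2 n).mono hn⟩

theorem fgrid_rowstab (H : CInH a t u) (hB : Bnd α β a t u N) :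
    ∀ i, N ≤ i → ∀ j, fgrid a t u i j = fgrid a t u N j := by
  have key : ∀ i, N ≤ i → ∀ j, fgrid a t u (i+1) j = fgrid a t u i j := by
    intro i hi j
    induction j with
    | zero =>
      rw [fgrid_zero H.htu, fgrid_zero H.htu, hB.2.1 (i+1) (by omega), hB.2.1 i hi]
    | succ j ihj =>
      rw [fgrid_succ, ihj, hB.1 (i+1) (j+1) (Or.inl (by omega)),
        fc_left ((fgrid_inv H i).1 j)]
  intro i hi
  induction i with
  | zero =>
    intro j; have h0 : N = 0 := by omega
    subst h0; rfl
  | succ i ih =>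
    rcases Nat.lt_or_ge N (i+1) with h' | h'
    · intro j; rw [key i (by omega) j, ih (by omega) j]
    · intro j; have h0 : N = i + 1 := by omega
      subst h0; rfl

theorem fgrid_colstab (H : CInH a t u) (hB : Bnd α β a t u N) :
    ∀ j, N ≤ j → ∀ i, fgrid a t u i j = fgrid a t u i N := by
  have key : ∀ j, N ≤ j → ∀ i, fgrid a t u i (j+1) = fgrid a t u i j := by
    intro j hj i
    induction i with
    | zero => show u (j+1) = u j; rw [hB.2.2.1 (j+1) (by omega), hB.2.2.1 j hj]
    | succ i ih =>
      rw [fgrid_succ, ih, hB.1 (i+1) (j+1) (Or.inr (by omega)),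
        fc_right ((fgrid_inv H i).2 j)]
  intro j hj
  induction j with
  | zero =>
    intro i; have h0 : N = 0 := by omega
    subst h0; rfl
  | succ j ih =>
    rcases Nat.lt_or_ge N (j+1) with h' | h'
    · intro i; rw [key j (by omega) i, ih (by omega) i]
    · intro i; have h0 : N = j + 1 := by omega
      subst h0; rfl

theorem fgrid_W_col (H : CInH a t u) (hB : Bnd α β a t u N) (n : ℕ) {M : ℕ} :
    ∀ i, N + i + n + 2 ≤ M →
      W (fgrid a t u i (n+1)) M + W (u n) M =
        (∑ i' ∈ Finset.range (i+1), a i' (n+1)) + W (u (n+1)) M + W (fgrid a t u i n) M := by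
  intro i
  induction i with
  | zero =>
    intro _
    have h1 : fgrid a t u 0 (n+1) = u (n+1) := rfl
    have h2 : fgrid a t u 0 n = u n := rfl
    rw [h1, h2, Finset.sum_range_one, H.ha0 0 (n+1) (Or.inl rfl)]
    omega
  | succ i ih =>
    intro hM
    have hub := fgrid_ub (a := a) hB.2.2.2.1 hB.2.2.2.2
    have hc := fc_W (M := M) (μ := fgrid a t u i n) (a := fgrid a t u (i+1) n)
        (b := fgrid a t u i (n+1)) (k := a (i+1) (n+1))
      (fun i' => le_min (((fgrid_inv H i).2 n).1 i') (((fgrid_inv H i).1 n).1 i'))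
      (by omega)
      (Or.inr ((hub i (n+1)).mono (by omega)))
      ((hub i n).mono (by omega))
    rw [← fgrid_succ] at hc
    have := ih (by omega)
    rw [Finset.sum_range_succ]
    omega

theorem fgrid_W_row (H : CInH a t u) (hB : Bnd α β a t u N) (m : ℕ) {M : ℕ} :
    ∀ j, N + m + j + 3 ≤ M →
      W (fgrid a t u (m+1) j) M + W (t m) M =
        (∑ j' ∈ Finset.range (j+1), a (m+1) j') + W (t (m+1)) M + W (fgrid a t u m j) M := by
  intro j
  induction j with
  | zero =>
    intro _
    rw [fgrid_zero H.htu, fgrid_zero H.htu, Finset.sum_range_one,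
      H.ha0 (m+1) 0 (Or.inr rfl)]
    omega
  | succ j ih =>
    intro hM
    have hub := fgrid_ub (a := a) hB.2.2.2.1 hB.2.2.2.2
    have hc := fc_W (M := M) (μ := fgrid a t u m j) (a := fgrid a t u (m+1) j)
        (b := fgrid a t u m (j+1)) (k := a (m+1) (j+1))
      (fun i' => le_min (((fgrid_inv H m).2 j).1 i') (((fgrid_inv H m).1 j).1 i'))
      (by omega)
      (Or.inr ((hub m (j+1)).mono (by omega)))
      ((hub m j).mono (by omega))
    rw [← fgrid_succ] at hc
    have := ih (by omega)
    rw [Finset.sum_range_succ]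
    omega

theorem fgrid_bk (i j : ℕ) :
    bk (fgrid a t u (i+1) j) (fgrid a t u i (j+1)) (fgrid a t u (i+1) (j+1)) = a (i+1) (j+1) := by
  rw [fgrid_succ, bk_fc]

/-! ### backward grid -/

def brow (prev : ℕ → Seq) (s : Seq) : ℕ → Seq
  | 0 => s
  | e+1 => bm (prev (e+1)) (brow prev s e) (prev e)

def bgrid (qr pr : ℕ → Seq) : ℕ → ℕ → Seq
  | 0 => qr
  | d+1 => brow (bgrid qr pr d) (pr (d+1))

variable {qr pr p q : ℕ → Seq}

theorem bgrid_zero : ∀ d, 1 ≤ d → bgrid qr pr d 0 = pr d := by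
  rintro (_ | d) h
  · omega
  · rfl

theorem bgrid_succ (d e : ℕ) : bgrid qr pr (d+1) (e+1) =
    bm (bgrid qr pr d (e+1)) (bgrid qr pr (d+1) e) (bgrid qr pr d e) := rfl

theorem brow_inv {prev : ℕ → Seq} {s : Seq}
    (hprev : ∀ e, HS (prev (e+1)) (prev e)) (hs0 : HS s (prev 0)) :
    ∀ e, HS (brow prev s e) (prev e) ∧ HS (brow prev s (e+1)) (brow prev s e) := by
  have V : ∀ e, HS (brow prev s e) (prev e) := by
    intro e; induction e with
    | zero => exact hs0
    | succ e ih => exact bm_hs_a (hprev e) ih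
  exact fun e => ⟨V e, bm_hs_b (hprev e) (V e)⟩

theorem bgrid_inv (hq : ∀ e, HS (qr (e+1)) (qr e)) (hp : ∀ d, HS (pr (d+1)) (pr d))
    (hp0 : pr 0 = qr 0) : ∀ d,
    (∀ e, HS (bgrid qr pr d (e+1)) (bgrid qr pr d e)) ∧
    (∀ e, HS (bgrid qr pr (d+1) e) (bgrid qr pr d e)) := by
  intro d; induction d with
  | zero =>
    refine ⟨hq, fun e => (brow_inv hq ?_ e).1⟩
    show HS (pr 1) (qr 0); rw [← hp0]; exact hp 0
  | succ d ih =>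
    have hs0 : HS (pr (d+1)) (bgrid qr pr d 0) := by
      cases d with
      | zero => show HS (pr 1) (qr 0); rw [← hp0]; exact hp 0
      | succ d => exact hp (d+1)
    have hor : ∀ e, HS (bgrid qr pr (d+1) (e+1)) (bgrid qr pr (d+1) e) :=
      fun e => (brow_inv ih.1 hs0 e).2
    have hs1 : HS (pr (d+2)) (bgrid qr pr (d+1) 0) := hp (d+1)
    exact ⟨hor, fun e => (brow_inv hor hs1 e).1⟩

theorem bgrid_ub (hq : ∀ e, UB (qr e) N) (hp : ∀ d, UB (pr d) N) :
    ∀ d e, UB (bgrid qr pr d e) N := by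
  intro d; induction d with
  | zero => exact hq
  | succ d ih =>
    intro e; induction e with
    | zero => exact hp (d+1)
    | succ e _ => exact bm_ub (ih (e+1))

/-- Reconstructing the forward grid backwards. -/
theorem bgrid_of_fgrid (H : CInH a t u) (N : ℕ) :
    ∀ d, d ≤ N → ∀ e, e ≤ N →
      bgrid (fun e' => fgrid a t u N (N-e')) (fun d' => fgrid a t u (N-d') N) d e =
        fgrid a t u (N-d) (N-e) := by
  intro d
  induction d with
  | zero => intro _ e _; rfl
  | succ d ihd =>
    intro hd e
    induction e with
    | zero => intro _; rfl
    | succ e ihe =>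
      intro he
      obtain ⟨i, hi1, hi2⟩ : ∃ i, N - d = i + 1 ∧ N - (d+1) = i := ⟨N - d - 1, by omega⟩
      obtain ⟨j, hj1, hj2⟩ : ∃ j, N - e = j + 1 ∧ N - (e+1) = j := ⟨N - e - 1, by omega⟩
      rw [bgrid_succ, ihd (by omega) (e+1) he, ihe (by omega), ihd (by omega) e (by omega),
        hi1, hi2, hj1, hj2, fgrid_succ, bm_fc ((fgrid_inv H i).2 j) ((fgrid_inv H i).1 j)]

/-- Reconstructing the backward grid forwards. -/
theorem fgrid_of_bgrid (hq : ∀ e, HS (qr (e+1)) (qr e)) (hp : ∀ d, HS (pr (d+1)) (pr d))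
    (hp0 : pr 0 = qr 0) (N : ℕ) {a' : ℕ → ℕ → ℕ} {t' u' : ℕ → Seq}
    (ha' : ∀ i j, 1 ≤ i → i ≤ N → 1 ≤ j → j ≤ N → a' i j =
      bk (bgrid qr pr (N-i) (N-j+1)) (bgrid qr pr (N-i+1) (N-j)) (bgrid qr pr (N-i) (N-j)))
    (ht' : ∀ i, i ≤ N → t' i = bgrid qr pr (N-i) N)
    (hu' : ∀ j, j ≤ N → u' j = bgrid qr pr N (N-j)) :
    ∀ i, i ≤ N → ∀ j, j ≤ N → fgrid a' t' u' i j = bgrid qr pr (N-i) (N-j) := by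
  intro i
  induction i with
  | zero => intro _ j hj; exact hu' j hj
  | succ i ihi =>
    intro hi j
    induction j with
    | zero => intro _; exact ht' (i+1) hi
    | succ j ihj =>
      intro hj
      obtain ⟨d, hd1, hd2⟩ : ∃ d, N - i = d + 1 ∧ N - (i+1) = d := ⟨N - i - 1, by omega⟩
      obtain ⟨e, he1, he2⟩ : ∃ e, N - j = e + 1 ∧ N - (j+1) = e := ⟨N - j - 1, by omega⟩
      have hinv := bgrid_inv hq hp hp0
      rw [fgrid_succ, ihi (by omega) j (by omega), ihj (by omega),
        ihi (by omega) (j+1) hj, ha' (i+1) (j+1) (by omega) hi (by omega) hj]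
      have h1 : N - (i+1) + 1 = N - i := by omega
      have h2 : N - (j+1) + 1 = N - j := by omega
      rw [h1, h2, hd1, hd2, he1, he2]
      rw [show bgrid qr pr (d+1) (e+1) = bm (bgrid qr pr d (e+1)) (bgrid qr pr (d+1) e)
            (bgrid qr pr d e) from rfl]
      exact fc_bm ((hinv d).1 e) ((hinv d).2 e)

end SS
/-! ### chain-level correspondence -/

namespace SS

variable {α β : Seq}

def OBnd (p q : ℕ → Seq) (N : ℕ) : Prop :=
  (∀ m n, N ≤ m → N ≤ n → p m = q n) ∧ (∀ n, UB (p n) N) ∧ (∀ n, UB (q n) N)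

theorem OBnd.mono {p q : ℕ → Seq} {N N' : ℕ} (h : OBnd p q N) (hn : N ≤ N') :
    OBnd p q N' :=
  ⟨fun m n hm hn' => h.1 m n (by omega) (by omega),
   fun n => (h.2.1 n).mono hn, fun n => (h.2.2 n).mono hn⟩

/-- input data for the chain-level correspondence. -/
structure CIn (α β : Seq) where
  a : ℕ → ℕ → ℕ
  t : ℕ → Seq
  u : ℕ → Seq
  ha0 : ∀ i j, i = 0 ∨ j = 0 → a i j = 0
  ht : ∀ n, HS (t n) (t (n+1))
  hu : ∀ n, HS (u n) (u (n+1))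
  htu : t 0 = u 0
  hbnd : ∃ N, Bnd α β a t u N

/-- output data for the chain-level correspondence. -/
structure COut (α β : Seq) where
  p : ℕ → Seq
  q : ℕ → Seq
  hp : ∀ n, HS (p n) (p (n+1))
  hq : ∀ n, HS (q n) (q (n+1))
  hp0 : p 0 = β
  hq0 : q 0 = α
  hbnd : ∃ N, OBnd p q N

theorem CIn.ext2 {c d : CIn α β} (ha : c.a = d.a) (ht : c.t = d.t) (hu : c.u = d.u) :
    c = d := by
  cases c; cases d
  cases ha; cases ht; cases hu
  rfl

theorem COut.ext2 {c d : COut α β} (hp : c.p = d.p) (hq : c.q = d.q) : c = d := by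
  cases c; cases d
  cases hp; cases hq
  rfl

def CIn.H (c : CIn α β) : CInH c.a c.t c.u := ⟨c.ha0, c.ht, c.hu, c.htu⟩

theorem chain_le {q : ℕ → Seq} (hq : ∀ n, HS (q n) (q (n+1))) {m n : ℕ} (h : m ≤ n) :
    ∀ i, q m i ≤ q n i := by
  induction n with
  | zero =>
    obtain rfl : m = 0 := by omega
    exact fun i => le_rfl
  | succ n ih =>
    rcases Nat.lt_or_ge m (n+1) with h' | h'
    · exact fun i => (ih (by omega) i).trans ((hq n).1 i)
    · obtain rfl : m = n + 1 := by omega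
      exact fun i => le_rfl

theorem hs_pred {q : ℕ → Seq} (hq : ∀ n, HS (q n) (q (n+1))) (m : ℕ) :
    HS (q (m-1)) (q m) := by
  cases m with
  | zero => exact HS.refl (hq 0).anti_lo
  | succ m => exact hq m

/-! ### the forward map -/

noncomputable def F (c : CIn α β) : COut α β := by
  refine
    { p := fun i => fgrid c.a c.t c.u i c.hbnd.choose
      q := fun n => fgrid c.a c.t c.u c.hbnd.choose n
      hp := fun n => (fgrid_inv c.H n).2 c.hbnd.choose
      hq := fun n => (fgrid_inv c.H c.hbnd.choose).1 n
      hp0 := ?_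
      hq0 := ?_
      hbnd := ?_ }
  · show fgrid c.a c.t c.u 0 c.hbnd.choose = β
    exact c.hbnd.choose_spec.2.2.1 _ le_rfl
  · show fgrid c.a c.t c.u c.hbnd.choose 0 = α
    rw [fgrid_zero c.htu]
    exact c.hbnd.choose_spec.2.1 _ le_rfl
  · set N := c.hbnd.choose with hNdef
    have hB := c.hbnd.choose_spec
    have hub := fgrid_ub (a := c.a) hB.2.2.2.1 hB.2.2.2.2
    refine ⟨3*N+1, fun m n hm hn => ?_, fun n => ?_, fun n => ?_⟩
    · show fgrid c.a c.t c.u m N = fgrid c.a c.t c.u N n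
      rw [fgrid_rowstab c.H hB m (by omega), fgrid_colstab c.H hB n (by omega) N]
    · show UB (fgrid c.a c.t c.u n N) _
      rcases le_or_gt n N with h | h
      · exact (hub n N).mono (by omega)
      · rw [fgrid_rowstab c.H hB n (by omega)]
        exact (hub N N).mono (by omega)
    · show UB (fgrid c.a c.t c.u N n) _
      rcases le_or_gt n N with h | h
      · exact (hub N n).mono (by omega)
      · rw [fgrid_colstab c.H hB n (by omega)]
        exact (hub N N).mono (by omega)

theorem F_spec (c : CIn α β) {N : ℕ} (hN : Bnd α β c.a c.t c.u N) :
    (∀ i, (F c).p i = fgrid c.a c.t c.u i N) ∧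
    (∀ n, (F c).q n = fgrid c.a c.t c.u N n) := by
  have hB := c.hbnd.choose_spec
  constructor
  · intro i
    show fgrid c.a c.t c.u i c.hbnd.choose = fgrid c.a c.t c.u i N
    rw [← fgrid_colstab c.H hB (max N c.hbnd.choose) (by omega) i,
      fgrid_colstab c.H hN (max N c.hbnd.choose) (by omega) i]
  · intro n
    show fgrid c.a c.t c.u c.hbnd.choose n = fgrid c.a c.t c.u N n
    rw [← fgrid_rowstab c.H hB (max N c.hbnd.choose) (by omega) n,
      fgrid_rowstab c.H hN (max N c.hbnd.choose) (by omega) n]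

theorem F_obnd (c : CIn α β) {N : ℕ} (hN : Bnd α β c.a c.t c.u N) :
    OBnd (F c).p (F c).q (3*N+1) := by
  have hub := fgrid_ub (a := c.a) hN.2.2.2.1 hN.2.2.2.2
  refine ⟨fun m n hm hn => ?_, fun n => ?_, fun n => ?_⟩
  · rw [(F_spec c hN).1 m, (F_spec c hN).2 n,
      fgrid_rowstab c.H hN m (by omega), fgrid_colstab c.H hN n (by omega) N]
  · rw [(F_spec c hN).1 n]
    rcases le_or_gt n N with h | h
    · exact (hub n N).mono (by omega)
    · rw [fgrid_rowstab c.H hN n (by omega)]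
      exact (hub N N).mono (by omega)
  · rw [(F_spec c hN).2 n]
    rcases le_or_gt n N with h | h
    · exact (hub N n).mono (by omega)
    · rw [fgrid_colstab c.H hN n (by omega)]
      exact (hub N N).mono (by omega)

/-! ### the backward map -/

/-- the backward grid associated to output chains `p`, `q` and a bound `N`. -/
abbrev EG (p q : ℕ → Seq) (N : ℕ) : ℕ → ℕ → Seq :=
  bgrid (fun e => q (N - e)) (fun d => p (N - d))

section EGfacts

variable {p q : ℕ → Seq} {N : ℕ}

theorem EG_succ {p q : ℕ → Seq} {N : ℕ} (d e : ℕ) : EG p q N (d+1) (e+1) =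
    bm (EG p q N d (e+1)) (EG p q N (d+1) e) (EG p q N d e) := rfl

theorem EG_zero {p q : ℕ → Seq} {N : ℕ} (d : ℕ) (h : 1 ≤ d) :
    EG p q N d 0 = p (N - d) := bgrid_zero d h

theorem EG_qr_hs (hq : ∀ n, HS (q n) (q (n+1))) :
    ∀ e, HS ((fun e => q (N - e)) (e+1)) ((fun e => q (N - e)) e) := by
  intro e
  show HS (q (N - (e+1))) (q (N - e))
  have h : N - (e+1) = (N - e) - 1 := by omega
  rw [h]
  exact hs_pred hq (N - e)

theorem EG_pr_hs (hp : ∀ n, HS (p n) (p (n+1))) :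
    ∀ d, HS ((fun d => p (N - d)) (d+1)) ((fun d => p (N - d)) d) := by
  intro d
  show HS (p (N - (d+1))) (p (N - d))
  have h : N - (d+1) = (N - d) - 1 := by omega
  rw [h]
  exact hs_pred hp (N - d)

theorem EG_pr0 (hO : OBnd p q N) : (fun d => p (N - d)) 0 = (fun e => q (N - e)) 0 :=
  hO.1 N N le_rfl le_rfl

theorem EG_inv (hp : ∀ n, HS (p n) (p (n+1))) (hq : ∀ n, HS (q n) (q (n+1)))
    (hO : OBnd p q N) : ∀ d,
    (∀ e, HS (EG p q N d (e+1)) (EG p q N d e)) ∧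
    (∀ e, HS (EG p q N (d+1) e) (EG p q N d e)) :=
  bgrid_inv (EG_qr_hs hq) (EG_pr_hs hp) (EG_pr0 hO)

theorem EG_ub (hO : OBnd p q N) : ∀ d e, UB (EG p q N d e) N :=
  bgrid_ub (fun e => hO.2.2 (N - e)) (fun d => hO.2.1 (N - d))

end EGfacts

section EGstab

variable {p q : ℕ → Seq} {N N' : ℕ}
variable (hp : ∀ n, HS (p n) (p (n+1))) (hq : ∀ n, HS (q n) (q (n+1)))
variable (hO : OBnd p q N) (hNN' : N ≤ N')

include hp hq hO hNN'

theorem EG_A : ∀ d, d ≤ N' - N → ∀ e, e ≤ N' → EG p q N' d e = q (N' - e) := by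
  intro d
  induction d with
  | zero => intro _ e _; rfl
  | succ d ihd =>
    intro hd e
    induction e with
    | zero =>
      intro _
      show p (N' - (d+1)) = q (N' - 0)
      exact hO.1 _ _ (by omega) (by omega)
    | succ e ihe =>
      intro he
      rw [EG_succ, ihd (by omega) (e+1) he, ihe (by omega), ihd (by omega) e (by omega)]
      have h : N' - (e+1) = (N' - e) - 1 := by omega
      rw [h, bm_deg_b (hs_pred hq (N' - e))]

theorem EG_B : ∀ d, d ≤ N' → ∀ e, e ≤ N' - N → EG p q N' d e = p (N' - d) := by
  intro d
  induction d with
  | zero =>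
    intro _ e he
    show q (N' - e) = p (N' - 0)
    exact (hO.1 _ _ (by omega) (by omega)).symm
  | succ d ihd =>
    intro hd e
    induction e with
    | zero => intro _; rfl
    | succ e ihe =>
      intro he
      rw [EG_succ, ihd (by omega) (e+1) he, ihe (by omega), ihd (by omega) e (by omega)]
      have h : N' - (d+1) = (N' - d) - 1 := by omega
      rw [h, bm_deg_a (hs_pred hp (N' - d))]

theorem EG_C : ∀ d, d ≤ N → ∀ e, e ≤ N →
    EG p q N' (N'-N+d) (N'-N+e) = EG p q N d e := by
  intro d
  induction d with
  | zero =>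
    intro _ e he
    have h1 : EG p q N' (N'-N+0) (N'-N+e) = q (N' - (N'-N+e)) := by
      have := EG_A hp hq hO hNN' (N'-N+0) (by omega) (N'-N+e) (by omega)
      simpa using this
    rw [h1, show N' - (N'-N+e) = N - e by omega]
    rfl
  | succ d ihd =>
    intro hd e
    induction e with
    | zero =>
      intro _
      have h1 : EG p q N' (N'-N+(d+1)) (N'-N+0) = p (N' - (N'-N+(d+1))) :=
        EG_B hp hq hO hNN' _ (by omega) _ (by omega)
      rw [h1, EG_zero (d+1) (by omega), show N' - (N'-N+(d+1)) = N - (d+1) by omega]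
    | succ e ihe =>
      intro he
      have e1 : N'-N+(e+1) = (N'-N+e) + 1 := by omega
      have d1 : N'-N+(d+1) = (N'-N+d) + 1 := by omega
      rw [e1, d1, EG_succ, EG_succ, ← e1, ← d1,
        ihd (by omega) (e+1) he, ihe (by omega), ihd (by omega) e (by omega)]

end EGstab

theorem EG_NN0 {p q : ℕ → Seq} {N : ℕ} {β : Seq} (hO : OBnd p q N) (hp0 : p 0 = β) :
    EG p q N N 0 = β := by
  rcases Nat.eq_zero_or_pos N with h0 | h0
  · subst h0
    show q 0 = β
    rw [← hO.1 0 0 le_rfl le_rfl, hp0]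
  · rw [EG_zero N h0, Nat.sub_self, hp0]

noncomputable def G (y : COut α β) : CIn α β := by
  have hN := y.hbnd.choose_spec
  have hinv := EG_inv y.hp y.hq hN
  refine
    { a := fun i j =>
        if 1 ≤ i ∧ i ≤ y.hbnd.choose ∧ 1 ≤ j ∧ j ≤ y.hbnd.choose then
          bk (EG y.p y.q y.hbnd.choose (y.hbnd.choose - i) (y.hbnd.choose - j + 1))
             (EG y.p y.q y.hbnd.choose (y.hbnd.choose - i + 1) (y.hbnd.choose - j))
             (EG y.p y.q y.hbnd.choose (y.hbnd.choose - i) (y.hbnd.choose - j))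
        else 0
      t := fun i => EG y.p y.q y.hbnd.choose (y.hbnd.choose - i) y.hbnd.choose
      u := fun j => EG y.p y.q y.hbnd.choose y.hbnd.choose (y.hbnd.choose - j)
      ha0 := fun i j h => by
        have hcond : ¬(1 ≤ i ∧ i ≤ y.hbnd.choose ∧ 1 ≤ j ∧ j ≤ y.hbnd.choose) := by omega
        exact if_neg hcond
      ht := ?_
      hu := ?_
      htu := rfl
      hbnd := ?_ }
  · intro n
    set N := y.hbnd.choose with hNd
    show HS (EG y.p y.q N (N - n) N) (EG y.p y.q N (N - (n+1)) N)
    rcases Nat.lt_or_ge n N with h | h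
    · obtain ⟨m, hm1, hm2⟩ : ∃ m, N - n = m + 1 ∧ N - (n+1) = m := ⟨N - n - 1, by omega⟩
      rw [hm1, hm2]
      exact (hinv m).2 N
    · have h1 : N - n = 0 := by omega
      have h2 : N - (n+1) = 0 := by omega
      rw [h1, h2]
      exact HS.refl ((hinv 0).1 N).anti_hi
  · intro n
    set N := y.hbnd.choose with hNd
    show HS (EG y.p y.q N N (N - n)) (EG y.p y.q N N (N - (n+1)))
    rcases Nat.lt_or_ge n N with h | h
    · obtain ⟨m, hm1, hm2⟩ : ∃ m, N - n = m + 1 ∧ N - (n+1) = m := ⟨N - n - 1, by omega⟩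
      rw [hm1, hm2]
      exact (hinv N).1 m
    · have h1 : N - n = 0 := by omega
      have h2 : N - (n+1) = 0 := by omega
      rw [h1, h2]
      exact HS.refl ((hinv N).1 0).anti_hi
  · set N := y.hbnd.choose with hNd
    refine ⟨N, fun i j h => ?_, fun n hn => ?_, fun n hn => ?_,
      fun n => EG_ub hN _ _, fun n => EG_ub hN _ _⟩
    · have hcond : ¬(1 ≤ i ∧ i ≤ N ∧ 1 ≤ j ∧ j ≤ N) := by omega
      exact if_neg hcond
    · show EG y.p y.q N (N - n) N = α
      rw [show N - n = 0 by omega]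
      show y.q (N - N) = α
      rw [Nat.sub_self, y.hq0]
    · show EG y.p y.q N N (N - n) = β
      rw [show N - n = 0 by omega]
      exact EG_NN0 hN y.hp0

end SS
/-! ### independence of the backward map from the chosen bound -/

namespace SS

variable {α β : Seq}

section Gcmp

variable {p q : ℕ → Seq} {N N' : ℕ}
variable (hp : ∀ n, HS (p n) (p (n+1))) (hq : ∀ n, HS (q n) (q (n+1)))
variable (hO : OBnd p q N) (hNN' : N ≤ N')

include hp hq hO hNN'

theorem Gcmp_t : ∀ i, EG p q N' (N'-i) N' = EG p q N (N-i) N := by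
  intro i
  rcases le_or_gt i N with h | h
  · have hc := EG_C hp hq hO hNN' (N-i) (by omega) N le_rfl
    rw [show N'-N+(N-i) = N'-i by omega, show N'-N+N = N' by omega] at hc
    exact hc
  · have hA := EG_A hp hq hO hNN' (N'-i) (by omega) N' le_rfl
    rw [hA, Nat.sub_self, show N - i = 0 by omega]
    show q 0 = q (N - N)
    rw [Nat.sub_self]

theorem Gcmp_u : ∀ j, EG p q N' N' (N'-j) = EG p q N N (N-j) := by
  intro j
  rcases le_or_gt j N with h | h
  · have hc := EG_C hp hq hO hNN' N le_rfl (N-j) (by omega)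
    rw [show N'-N+(N-j) = N'-j by omega, show N'-N+N = N' by omega] at hc
    exact hc
  · have hB2 := EG_B hp hq hO hNN' N' le_rfl (N'-j) (by omega)
    have hB3 := EG_B hp hq hO (le_refl N) N le_rfl 0 (by omega)
    rw [hB2, show N - j = 0 by omega, hB3, Nat.sub_self, Nat.sub_self]

theorem Gcmp_a : ∀ i j,
    (if 1 ≤ i ∧ i ≤ N' ∧ 1 ≤ j ∧ j ≤ N' then
      bk (EG p q N' (N'-i) (N'-j+1)) (EG p q N' (N'-i+1) (N'-j)) (EG p q N' (N'-i) (N'-j))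
     else 0) =
    (if 1 ≤ i ∧ i ≤ N ∧ 1 ≤ j ∧ j ≤ N then
      bk (EG p q N (N-i) (N-j+1)) (EG p q N (N-i+1) (N-j)) (EG p q N (N-i) (N-j))
     else 0) := by
  intro i j
  by_cases hc : 1 ≤ i ∧ i ≤ N ∧ 1 ≤ j ∧ j ≤ N
  · rw [if_pos hc, if_pos (by omega)]
    have e1 := EG_C hp hq hO hNN' (N-i) (by omega) (N-j+1) (by omega)
    rw [show N'-N+(N-i) = N'-i by omega, show N'-N+(N-j+1) = N'-j+1 by omega] at e1
    have e2 := EG_C hp hq hO hNN' (N-i+1) (by omega) (N-j) (by omega)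
    rw [show N'-N+(N-i+1) = N'-i+1 by omega, show N'-N+(N-j) = N'-j by omega] at e2
    have e3 := EG_C hp hq hO hNN' (N-i) (by omega) (N-j) (by omega)
    rw [show N'-N+(N-i) = N'-i by omega, show N'-N+(N-j) = N'-j by omega] at e3
    rw [e1, e2, e3]
  · rw [if_neg hc]
    by_cases hc' : 1 ≤ i ∧ i ≤ N' ∧ 1 ≤ j ∧ j ≤ N'
    · rw [if_pos hc']
      rcases le_or_gt i N with hi | hi
      · -- then N < j
        have hj : N < j := by omega
        have e1 : EG p q N' (N'-i) (N'-j+1) = p (N' - (N'-i)) :=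
          EG_B hp hq hO hNN' (N'-i) (by omega) (N'-j+1) (by omega)
        have e2 : EG p q N' (N'-i+1) (N'-j) = p (N' - (N'-i+1)) :=
          EG_B hp hq hO hNN' (N'-i+1) (by omega) (N'-j) (by omega)
        have e3 : EG p q N' (N'-i) (N'-j) = p (N' - (N'-i)) :=
          EG_B hp hq hO hNN' (N'-i) (by omega) (N'-j) (by omega)
        rw [e1, e2, e3, show N' - (N'-i) = i by omega, show N' - (N'-i+1) = i-1 by omega]
        have hle := chain_le hp (show i-1 ≤ i by omega) 0
        simp only [bk]
        omega
      · have e1 : EG p q N' (N'-i) (N'-j+1) = q (N' - (N'-j+1)) :=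
          EG_A hp hq hO hNN' (N'-i) (by omega) (N'-j+1) (by omega)
        have e2 : EG p q N' (N'-i+1) (N'-j) = q (N' - (N'-j)) :=
          EG_A hp hq hO hNN' (N'-i+1) (by omega) (N'-j) (by omega)
        have e3 : EG p q N' (N'-i) (N'-j) = q (N' - (N'-j)) :=
          EG_A hp hq hO hNN' (N'-i) (by omega) (N'-j) (by omega)
        rw [e1, e2, e3, show N' - (N'-j) = j by omega, show N' - (N'-j+1) = j-1 by omega]
        have hle := chain_le hq (show j-1 ≤ j by omega) 0
        simp only [bk]
        omega
    · rw [if_neg hc']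

end Gcmp

theorem G_spec (y : COut α β) {N : ℕ} (hN : OBnd y.p y.q N) :
    (G y).a = (fun i j =>
        if 1 ≤ i ∧ i ≤ N ∧ 1 ≤ j ∧ j ≤ N then
          bk (EG y.p y.q N (N-i) (N-j+1)) (EG y.p y.q N (N-i+1) (N-j))
             (EG y.p y.q N (N-i) (N-j))
        else 0) ∧
    (G y).t = (fun i => EG y.p y.q N (N-i) N) ∧
    (G y).u = (fun j => EG y.p y.q N N (N-j)) := by
  have h0 := y.hbnd.choose_spec
  set N0 := y.hbnd.choose with hN0
  have hK : OBnd y.p y.q (max N N0) := hN.mono (by omega)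
  refine ⟨?_, ?_, ?_⟩
  · funext i j
    have ha : (G y).a i j =
        (if 1 ≤ i ∧ i ≤ N0 ∧ 1 ≤ j ∧ j ≤ N0 then
          bk (EG y.p y.q N0 (N0-i) (N0-j+1)) (EG y.p y.q N0 (N0-i+1) (N0-j))
             (EG y.p y.q N0 (N0-i) (N0-j))
        else 0) := rfl
    rw [ha, ← Gcmp_a y.hp y.hq h0 (le_max_right N N0) i j,
      Gcmp_a y.hp y.hq hN (le_max_left N N0) i j]
  · funext i
    have ht : (G y).t i = EG y.p y.q N0 (N0-i) N0 := rfl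
    rw [ht, ← Gcmp_t y.hp y.hq h0 (le_max_right N N0) i,
      Gcmp_t y.hp y.hq hN (le_max_left N N0) i]
  · funext j
    have hu : (G y).u j = EG y.p y.q N0 N0 (N0-j) := rfl
    rw [hu, ← Gcmp_u y.hp y.hq h0 (le_max_right N N0) j,
      Gcmp_u y.hp y.hq hN (le_max_left N N0) j]

/-! ### the roundtrips -/

theorem G_F (c : CIn α β) : G (F c) = c := by
  have hB := c.hbnd.choose_spec
  set Nc := c.hbnd.choose with hNc
  set Ns := 3*Nc+1 with hNs
  have hO : OBnd (F c).p (F c).q Ns := F_obnd c hB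
  have hs := G_spec (F c) hO
  -- identify the backward grid with the forward grid
  have hqf : (fun e => (F c).q (Ns - e)) = (fun e => fgrid c.a c.t c.u Ns (Ns - e)) := by
    funext e
    rw [(F_spec c hB).2 (Ns - e), fgrid_rowstab c.H hB Ns (by omega) (Ns - e)]
  have hpf : (fun d => (F c).p (Ns - d)) = (fun d => fgrid c.a c.t c.u (Ns - d) Ns) := by
    funext d
    rw [(F_spec c hB).1 (Ns - d), fgrid_colstab c.H hB Ns (by omega) (Ns - d)]
  have hEG : ∀ d e, d ≤ Ns → e ≤ Ns →
      EG (F c).p (F c).q Ns d e = fgrid c.a c.t c.u (Ns-d) (Ns-e) := by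
    intro d e hd he
    show bgrid (fun e => (F c).q (Ns - e)) (fun d => (F c).p (Ns - d)) d e = _
    rw [hqf, hpf]
    exact bgrid_of_fgrid c.H Ns d hd e he
  refine CIn.ext2 ?_ ?_ ?_
  · rw [hs.1]
    funext i j
    by_cases hc : 1 ≤ i ∧ i ≤ Ns ∧ 1 ≤ j ∧ j ≤ Ns
    · rw [if_pos hc]
      obtain ⟨i', rfl⟩ : ∃ i', i = i' + 1 := ⟨i - 1, by omega⟩
      obtain ⟨j', rfl⟩ : ∃ j', j = j' + 1 := ⟨j - 1, by omega⟩
      rw [hEG _ _ (by omega) (by omega), hEG _ _ (by omega) (by omega),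
        hEG _ _ (by omega) (by omega),
        show Ns - (Ns - (i'+1)) = i'+1 by omega,
        show Ns - (Ns - (j'+1) + 1) = j' by omega,
        show Ns - (Ns - (i'+1) + 1) = i' by omega,
        show Ns - (Ns - (j'+1)) = j'+1 by omega]
      exact fgrid_bk i' j'
    · rw [if_neg hc]
      rcases Nat.eq_zero_or_pos i with h0 | h0
      · exact (c.ha0 i j (Or.inl h0)).symm
      rcases Nat.eq_zero_or_pos j with h1 | h1
      · exact (c.ha0 i j (Or.inr h1)).symm
      exact (hB.1 i j (by omega)).symm
  · rw [hs.2.1]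
    funext i
    rcases le_or_gt i Ns with h | h
    · rw [hEG _ _ (by omega) (by omega), show Ns - (Ns - i) = i by omega, Nat.sub_self,
        fgrid_zero c.htu]
    · rw [hEG _ _ (by omega) (by omega), show Ns - (Ns - i) = Ns by omega, Nat.sub_self,
        fgrid_zero c.htu, hB.2.1 Ns (by omega), hB.2.1 i (by omega)]
  · rw [hs.2.2]
    funext j
    rcases le_or_gt j Ns with h | h
    · rw [hEG _ _ (by omega) (by omega), show Ns - (Ns - j) = j by omega, Nat.sub_self]
      rfl
    · rw [hEG _ _ (by omega) (by omega), show Ns - (Ns - j) = Ns by omega, Nat.sub_self]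
      show c.u Ns = c.u j
      rw [hB.2.2.1 Ns (by omega), hB.2.2.1 j (by omega)]

theorem F_G (y : COut α β) : F (G y) = y := by
  have hO := y.hbnd.choose_spec
  set N := y.hbnd.choose with hNd
  have hGa : (G y).a = (fun i j =>
      if 1 ≤ i ∧ i ≤ N ∧ 1 ≤ j ∧ j ≤ N then
        bk (EG y.p y.q N (N-i) (N-j+1)) (EG y.p y.q N (N-i+1) (N-j))
           (EG y.p y.q N (N-i) (N-j))
      else 0) := rfl
  have hGt : (G y).t = (fun i => EG y.p y.q N (N-i) N) := rfl
  have hGu : (G y).u = (fun j => EG y.p y.q N N (N-j)) := rfl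
  -- the bound N is valid for G y
  have hBnd : Bnd α β (G y).a (G y).t (G y).u N := by
    refine ⟨fun i j h => ?_, fun n hn => ?_, fun n hn => ?_, fun n => ?_, fun n => ?_⟩
    · rw [hGa]; exact if_neg (by omega)
    · rw [hGt]
      show EG y.p y.q N (N - n) N = α
      rw [show N - n = 0 by omega]
      show y.q (N - N) = α
      rw [Nat.sub_self, y.hq0]
    · rw [hGu]
      show EG y.p y.q N N (N - n) = β
      rw [show N - n = 0 by omega]
      exact EG_NN0 hO y.hp0
    · rw [hGt]; exact EG_ub hO _ _
    · rw [hGu]; exact EG_ub hO _ _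
  have hfg : ∀ i j, i ≤ N → j ≤ N →
      fgrid (G y).a (G y).t (G y).u i j = EG y.p y.q N (N-i) (N-j) := by
    intro i j hi hj
    exact fgrid_of_bgrid (qr := fun e => y.q (N - e)) (pr := fun d => y.p (N - d))
      (EG_qr_hs y.hq) (EG_pr_hs y.hp) (EG_pr0 hO) N
      (fun i j h1 h2 h3 h4 => by rw [hGa]; exact if_pos ⟨h1, h2, h3, h4⟩)
      (fun i _ => rfl) (fun j _ => rfl) i hi j hj
  refine COut.ext2 ?_ ?_
  · funext i
    rw [(F_spec (G y) hBnd).1 i]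
    rcases le_or_gt i N with h | h
    · rcases Nat.lt_or_ge i N with h' | h'
      · rw [hfg i N h le_rfl, Nat.sub_self, EG_zero (N-i) (by omega),
          show N - (N - i) = i by omega]
      · obtain rfl : i = N := by omega
        rw [hfg N N le_rfl le_rfl, Nat.sub_self]
        show y.q (N - 0) = y.p N
        rw [Nat.sub_zero]
        exact (hO.1 N N le_rfl le_rfl).symm
    · rw [fgrid_rowstab (G y).H hBnd i (by omega) N, hfg N N le_rfl le_rfl, Nat.sub_self]
      show y.q (N - 0) = y.p i
      rw [Nat.sub_zero]
      exact (hO.1 i N (by omega) le_rfl).symm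
  · funext n
    rw [(F_spec (G y) hBnd).2 n]
    rcases le_or_gt n N with h | h
    · rw [hfg N n le_rfl h, Nat.sub_self]
      show y.q (N - (N - n)) = y.q n
      rw [show N - (N - n) = n by omega]
    · rw [fgrid_colstab (G y).H hBnd n (by omega) N, hfg N N le_rfl le_rfl, Nat.sub_self]
      show y.q (N - 0) = y.q n
      rw [Nat.sub_zero, ← hO.1 N N le_rfl le_rfl, hO.1 N n le_rfl (by omega)]

/-- The chain-level Sagan–Stanley correspondence. -/
noncomputable def chainEquiv (α β : Seq) : CIn α β ≃ COut α β :=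
  ⟨F, G, G_F, F_G⟩

/-! ### weights of the forward map -/

theorem F_W_p (c : CIn α β) {N : ℕ} (hN : Bnd α β c.a c.t c.u N) (n : ℕ) {M : ℕ}
    (hM : 2*N + n + 3 ≤ M) :
    W ((F c).p (n+1)) M + W (c.t n) M =
      (∑ j' ∈ Finset.range (N+1), c.a (n+1) j') + W (c.t (n+1)) M + W ((F c).p n) M := by
  rw [(F_spec c hN).1 (n+1), (F_spec c hN).1 n]
  exact fgrid_W_row c.H hN n N (by omega)

theorem F_W_q (c : CIn α β) {N : ℕ} (hN : Bnd α β c.a c.t c.u N) (n : ℕ) {M : ℕ}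
    (hM : 2*N + n + 3 ≤ M) :
    W ((F c).q (n+1)) M + W (c.u n) M =
      (∑ i' ∈ Finset.range (N+1), c.a i' (n+1)) + W (c.u (n+1)) M + W ((F c).q n) M := by
  rw [(F_spec c hN).2 (n+1), (F_spec c hN).2 n]
  exact fgrid_W_col c.H hN n N (by omega)

end SS
/-! ### Young diagrams and sequences -/

namespace SS

theorem anti_le {f : Seq} (hf : Anti f) : ∀ {m n : ℕ}, m ≤ n → f n ≤ f m := by
  intro m n h
  induction n with
  | zero =>
    obtain rfl : m = 0 := by omega
    exact le_rfl
  | succ n ih =>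
    rcases Nat.lt_or_ge m (n+1) with h' | h'
    · exact (hf n).trans (ih (by omega))
    · obtain rfl : m = n + 1 := by omega
      exact le_rfl

theorem eq_of_lt_iff {a b : ℕ} (h : ∀ j, j < a ↔ j < b) : a = b := by
  rcases lt_trichotomy a b with h' | h' | h'
  · exact absurd ((h a).2 h') (lt_irrefl a)
  · exact h'
  · exact absurd ((h b).1 h') (lt_irrefl b)

theorem le_of_lt_imp {a b : ℕ} (h : ∀ j, j < a → j < b) : a ≤ b := by
  by_contra hc
  exact lt_irrefl b (h b (by omega))

noncomputable def ofSeq (f : Seq) (hf : Anti f) (hub : ∃ N, UB f N) : YoungDiagram where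
  cells := (Finset.range hub.choose ×ˢ Finset.range (f 0)).filter (fun c => c.2 < f c.1)
  isLowerSet := by
    rintro ⟨i, j⟩ ⟨i', j'⟩ ⟨h1, h2⟩ hm
    simp only [Finset.coe_filter, Finset.mem_product, Finset.mem_range, Set.mem_setOf_eq] at *
    obtain ⟨⟨hi, hj⟩, hfij⟩ := hm
    have hle : f i ≤ f i' := anti_le hf h1
    have hN := hub.choose_spec
    constructor
    · constructor
      · by_contra hc
        have := hN i' (by omega)
        omega
      · have := anti_le hf (Nat.zero_le i')
        omega
    · omega

theorem mem_ofSeq {f : Seq} {hf : Anti f} {hub : ∃ N, UB f N} {i j : ℕ} :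
    (i, j) ∈ ofSeq f hf hub ↔ j < f i := by
  show (i, j) ∈ (ofSeq f hf hub).cells ↔ _
  simp only [ofSeq, Finset.mem_filter, Finset.mem_product, Finset.mem_range]
  constructor
  · rintro ⟨_, h⟩; exact h
  · intro h
    have hN := hub.choose_spec
    have h0 := anti_le hf (Nat.zero_le i)
    refine ⟨⟨?_, by omega⟩, h⟩
    by_contra hc
    have := hN i (by omega)
    omega

/-- row lengths of a Young diagram. -/
def toSeq (μ : YoungDiagram) : Seq := fun i => μ.rowLen i

theorem toSeq_anti (μ : YoungDiagram) : Anti (toSeq μ) :=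
  fun i => μ.rowLen_anti i (i+1) (by omega)

theorem toSeq_ub (μ : YoungDiagram) : ∃ N, UB (toSeq μ) N := by
  refine ⟨μ.cells.sup Prod.fst + 1, fun i hi => ?_⟩
  by_contra hc
  simp only [toSeq] at hc
  have hmem : (i, 0) ∈ μ := YoungDiagram.mem_iff_lt_rowLen.2 (by omega)
  have := Finset.le_sup (f := Prod.fst) ((YoungDiagram.mem_cells _).2 hmem)
  simp only at this
  omega

theorem mem_toSeq {μ : YoungDiagram} {i j : ℕ} : (i, j) ∈ μ ↔ j < toSeq μ i :=
  YoungDiagram.mem_iff_lt_rowLen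

theorem toSeq_ofSeq (f : Seq) (hf : Anti f) (hub : ∃ N, UB f N) :
    toSeq (ofSeq f hf hub) = f := by
  funext i
  exact eq_of_lt_iff fun j => by rw [← mem_toSeq, mem_ofSeq]

theorem ofSeq_toSeq (μ : YoungDiagram) (hf : Anti (toSeq μ)) (hub : ∃ N, UB (toSeq μ) N) :
    ofSeq (toSeq μ) hf hub = μ := by
  ext ⟨i, j⟩
  rw [YoungDiagram.mem_cells, YoungDiagram.mem_cells, mem_ofSeq, mem_toSeq]

theorem ofSeq_le_ofSeq {f g : Seq} {hf hg hubf hubg} (h : ∀ i, f i ≤ g i) :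
    ofSeq f hf hubf ≤ ofSeq g hg hubg := by
  intro c hc
  obtain ⟨i, j⟩ := c
  rw [mem_ofSeq] at *
  exact lt_of_lt_of_le hc (h i)

theorem toSeq_mono {μ ν : YoungDiagram} (h : μ ≤ ν) : ∀ i, toSeq μ i ≤ toSeq ν i := by
  intro i
  refine le_of_lt_imp fun j hj => ?_
  rw [← mem_toSeq] at *
  exact h hj

theorem card_ofSeq {f : Seq} {hf : Anti f} {hub : ∃ N, UB f N} {M : ℕ} (hM : UB f M) :
    (ofSeq f hf hub).cells.card = W f M := by
  have hcells : (ofSeq f hf hub).cells =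
      (Finset.range M).biUnion (fun i => {i} ×ˢ Finset.range (f i)) := by
    ext ⟨i, j⟩
    rw [YoungDiagram.mem_cells, mem_ofSeq]
    simp only [Finset.mem_biUnion, Finset.mem_range, Finset.mem_product,
      Finset.mem_singleton]
    constructor
    · intro h
      refine ⟨i, ?_, rfl, h⟩
      by_contra hc
      have := hM i (by omega)
      omega
    · rintro ⟨i', _, rfl, h⟩
      exact h
  rw [hcells, Finset.card_biUnion]
  · simp only [Finset.card_product, Finset.card_singleton, Finset.card_range, one_mul]
    rfl
  · intro x _ y _ hxy
    simp only [Finset.disjoint_left]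
    rintro ⟨i, j⟩ hx hy
    simp only [Finset.mem_product, Finset.mem_singleton] at hx hy
    exact hxy (hx.1.symm.trans hy.1)

theorem card_sdiff_ofSeq {f g : Seq} {hf hg hubf hubg} (h : ∀ i, f i ≤ g i) {M : ℕ}
    (hMf : UB f M) (hMg : UB g M) :
    ((ofSeq g hg hubg).cells \ (ofSeq f hf hubf).cells).card = W g M - W f M := by
  rw [Finset.card_sdiff_of_subset (ofSeq_le_ofSeq h), card_ofSeq hMf, card_ofSeq hMg]

end SS
/-! ### skew tableaux and chains -/

namespace SS

theorem SkewSSYT.ext2 {lam mu : YoungDiagram} {T U : SkewSSYT lam mu}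
    (h : ∀ i j, T.entry i j = U.entry i j) : T = U := by
  cases T; cases U
  have : _root_.SkewSSYT.entry ⟨_, ‹_›, ‹_›, ‹_›, ‹_›⟩ = _ := rfl
  congr 1
  funext i j
  exact h i j

section toChain

variable {lam mu : YoungDiagram} (hμ : mu ≤ lam) (T : SkewSSYT lam mu)

/-- The subdiagram of cells of `mu` together with cells of `lam` with entry at most `n`. -/
def shapeLe (n : ℕ) : YoungDiagram where
  cells := mu.cells ∪ lam.cells.filter (fun c => T.entry c.1 c.2 ≤ n)
  isLowerSet := by
    rintro ⟨i, j⟩ ⟨i', j'⟩ ⟨h1, h2⟩ hm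
    simp only [Finset.coe_union, Finset.coe_filter, Set.mem_union, Finset.mem_coe,
      Set.mem_setOf_eq, YoungDiagram.mem_cells] at *
    rcases hm with hm | ⟨hm, he⟩
    · exact Or.inl (mu.isLowerSet (Prod.mk_le_mk.2 ⟨h1, h2⟩) hm)
    · by_cases hmu' : (i', j') ∈ mu
      · exact Or.inl hmu'
      have hlam' : (i', j') ∈ lam := lam.isLowerSet (Prod.mk_le_mk.2 ⟨h1, h2⟩) hm
      by_cases hmu : (i, j) ∈ mu
      · exact Or.inl (mu.isLowerSet (Prod.mk_le_mk.2 ⟨h1, h2⟩) hmu)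
      refine Or.inr ⟨hlam', ?_⟩
      -- intermediate cell (i', j)
      have hmid : (i', j) ∈ lam := lam.isLowerSet (Prod.mk_le_mk.2 ⟨h1, le_rfl⟩) hm
      by_cases hmidmu : (i', j) ∈ mu
      · exact absurd (mu.isLowerSet (Prod.mk_le_mk.2 ⟨le_rfl, h2⟩) hmidmu) hmu'
      have e1 : T.entry i' j ≤ T.entry i j := by
        rcases Nat.lt_or_ge i' i with hlt | hge
        · exact le_of_lt (T.col_strict i' i j hlt hmid hmidmu hm hmu)
        · obtain rfl : i' = i := by omega
          exact le_rfl
      have e2 : T.entry i' j' ≤ T.entry i' j := by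
        rcases Nat.lt_or_ge j' j with hlt | hge
        · exact T.row_weak i' j' j hlt hlam' hmu' hmid hmidmu
        · obtain rfl : j' = j := by omega
          exact le_rfl
      omega

theorem mem_shapeLe {n i j : ℕ} :
    (i, j) ∈ shapeLe T n ↔ (i, j) ∈ mu ∨ ((i, j) ∈ lam ∧ T.entry i j ≤ n) := by
  show (i, j) ∈ (shapeLe T n).cells ↔ _
  simp only [shapeLe, Finset.mem_union, Finset.mem_filter, YoungDiagram.mem_cells]

theorem shapeLe_zero : shapeLe T 0 = mu := by
  ext ⟨i, j⟩
  rw [YoungDiagram.mem_cells, YoungDiagram.mem_cells, mem_shapeLe]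
  constructor
  · rintro (h | ⟨hl, he⟩)
    · exact h
    · by_contra hc
      have := T.pos i j hl hc
      omega
  · exact Or.inl

theorem shapeLe_mono {n m : ℕ} (h : n ≤ m) : shapeLe T n ≤ shapeLe T m := by
  rintro ⟨i, j⟩ hc
  rw [mem_shapeLe] at *
  rcases hc with hc | ⟨h1, h2⟩
  · exact Or.inl hc
  · exact Or.inr ⟨h1, by omega⟩

include hμ in
theorem shapeLe_le_lam (n : ℕ) : shapeLe T n ≤ lam := by
  rintro ⟨i, j⟩ hc
  rw [mem_shapeLe] at hc
  rcases hc with hc | ⟨h1, _⟩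
  · exact hμ hc
  · exact (YoungDiagram.mem_cells _).2 h1

theorem mu_le_shapeLe (n : ℕ) : mu ≤ shapeLe T n := by
  rintro ⟨i, j⟩ hc
  rw [mem_shapeLe]
  exact Or.inl ((YoungDiagram.mem_cells _).1 hc)

include hμ in
theorem shapeLe_stab {n : ℕ}
    (hn : lam.cells.sup (fun c => T.entry c.1 c.2) ≤ n) : shapeLe T n = lam := by
  ext ⟨i, j⟩
  rw [YoungDiagram.mem_cells, mem_shapeLe, YoungDiagram.mem_cells]
  constructor
  · rintro (h | ⟨h1, _⟩)
    · exact (YoungDiagram.mem_cells _).1 (hμ ((YoungDiagram.mem_cells _).2 h))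
    · exact (YoungDiagram.mem_cells _).1 h1
  · intro h
    have h' : (i, j) ∈ lam := (YoungDiagram.mem_cells _).2 h
    refine Or.inr ⟨h', ?_⟩
    have := Finset.le_sup (f := fun c => T.entry c.1 c.2) h
    simp only at this
    omega

/-- the chain of a skew tableau. -/
def tchain (n : ℕ) : Seq := toSeq (shapeLe T n)

theorem tchain_hs (n : ℕ) : HS (tchain T n) (tchain T (n+1)) := by
  constructor
  · exact toSeq_mono (shapeLe_mono T (by omega))
  · intro i
    refine le_of_lt_imp fun j hj => ?_
    simp only [tchain] at hj ⊢
    rw [← mem_toSeq] at hj ⊢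
    rw [mem_shapeLe] at hj ⊢
    rcases hj with hj | ⟨h1, h2⟩
    · exact Or.inl (mu.isLowerSet (Prod.mk_le_mk.2 ⟨by omega, le_rfl⟩) hj)
    · have hlam : (i, j) ∈ lam := lam.isLowerSet (Prod.mk_le_mk.2 ⟨by omega, le_rfl⟩) h1
      by_cases hmu : (i, j) ∈ mu
      · exact Or.inl hmu
      by_cases hmu' : (i+1, j) ∈ mu
      · exact Or.inl (mu.isLowerSet (Prod.mk_le_mk.2 ⟨by omega, le_rfl⟩) hmu')
      refine Or.inr ⟨hlam, ?_⟩
      have := T.col_strict i (i+1) j (by omega) hlam hmu h1 hmu'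
      omega

theorem tchain_zero : tchain T 0 = toSeq mu := by rw [tchain, shapeLe_zero]

include hμ in
theorem tchain_stab {n : ℕ} (hn : lam.cells.sup (fun c => T.entry c.1 c.2) ≤ n) :
    tchain T n = toSeq lam := by rw [tchain, shapeLe_stab hμ T hn]

include hμ in
theorem tchain_ub {n N : ℕ} (hN : UB (toSeq lam) N) : UB (tchain T n) N := by
  intro i hi
  show toSeq (shapeLe T n) i = 0
  have h := toSeq_mono (shapeLe_le_lam hμ T n) i
  have := hN i hi
  omega

/-- counting entries of the tableau. -/
theorem count_entries_succ (n : ℕ) :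
    Multiset.count (n+1) T.entries =
      ((shapeLe T (n+1)).cells \ (shapeLe T n).cells).card := by
  rw [SkewSSYT.entries, Multiset.count_map]
  have hset : Multiset.filter (fun c => n + 1 = T.entry c.1 c.2) (lam.cells \ mu.cells).val =
      ((lam.cells \ mu.cells).filter (fun c => n + 1 = T.entry c.1 c.2)).val := rfl
  rw [hset]
  show ((lam.cells \ mu.cells).filter _).card = _
  congr 1
  ext ⟨i, j⟩
  simp only [Finset.mem_filter, Finset.mem_sdiff, YoungDiagram.mem_cells]
  constructor
  · rintro ⟨⟨h1, h2⟩, h3⟩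
    constructor
    · rw [mem_shapeLe]
      exact Or.inr ⟨h1, by omega⟩
    · rw [mem_shapeLe]
      push_neg
      refine ⟨h2, fun _ => by omega⟩
  · rintro ⟨h1, h2⟩
    rw [mem_shapeLe] at h1 h2
    push_neg at h2
    rcases h1 with h1 | ⟨h1, h1'⟩
    · exact absurd h1 h2.1
    · refine ⟨⟨h1, h2.1⟩, ?_⟩
      have := h2.2 h1
      omega

theorem count_entries_zero : Multiset.count 0 T.entries = 0 := by
  rw [SkewSSYT.entries, Multiset.count_map]
  rw [Multiset.card_eq_zero, Multiset.filter_eq_nil]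
  rintro ⟨i, j⟩ hc h0
  have hc' : (i, j) ∈ lam.cells \ mu.cells := hc
  rw [Finset.mem_sdiff, YoungDiagram.mem_cells, YoungDiagram.mem_cells] at hc'
  have := T.pos i j hc'.1 hc'.2
  simp only at h0
  omega

end toChain

end SS
/-! ### from chains to skew tableaux -/

namespace SS

section ofChain

variable {lo hi : YoungDiagram} {r : ℕ → Seq}

/-- pointwise bound by the outer shape. -/
theorem chain_le_hi (hr : ∀ n, HS (r n) (r (n+1)))
    (hstab : ∃ n0, ∀ n, n0 ≤ n → r n = toSeq hi) (m i : ℕ) : r m i ≤ toSeq hi i := by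
  obtain ⟨n0, hn0⟩ := hstab
  rcases le_or_gt m n0 with h | h
  · rw [← hn0 n0 le_rfl]
    exact chain_le hr h i
  · rw [hn0 m (by omega)]

theorem cexists (hstab : ∃ n0, ∀ n, n0 ≤ n → r n = toSeq hi) {i j : ℕ}
    (h : (i, j) ∈ hi) : ∃ n, j < r n i :=
  ⟨hstab.choose, by rw [hstab.choose_spec _ le_rfl]; exact mem_toSeq.1 h⟩

/-- the entry of the tableau associated to a chain. -/
noncomputable def cEntry (lo : YoungDiagram) (hstab : ∃ n0, ∀ n, n0 ≤ n → r n = toSeq hi)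
    (i j : ℕ) : ℕ :=
  if h : (i, j) ∈ hi ∧ (i, j) ∉ lo then Nat.find (cexists hstab h.1) else 0

theorem cEntry_spec (hstab : ∃ n0, ∀ n, n0 ≤ n → r n = toSeq hi) {i j : ℕ}
    (h : (i, j) ∈ hi ∧ (i, j) ∉ lo) :
    j < r (cEntry lo hstab i j) i := by
  rw [cEntry, dif_pos h]
  exact Nat.find_spec (cexists hstab h.1)

theorem cEntry_min (hstab : ∃ n0, ∀ n, n0 ≤ n → r n = toSeq hi) {i j m : ℕ}
    (h : (i, j) ∈ hi ∧ (i, j) ∉ lo) (hm : j < r m i) : cEntry lo hstab i j ≤ m := by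
  rw [cEntry, dif_pos h]
  exact Nat.find_min' _ hm

theorem cEntry_pos (hr : ∀ n, HS (r n) (r (n+1))) (hlo : r 0 = toSeq lo)
    (hstab : ∃ n0, ∀ n, n0 ≤ n → r n = toSeq hi) {i j : ℕ}
    (h : (i, j) ∈ hi ∧ (i, j) ∉ lo) : 0 < cEntry lo hstab i j := by
  rcases Nat.eq_zero_or_pos (cEntry lo hstab i j) with h0 | h0
  · exfalso
    have := cEntry_spec hstab h
    rw [h0, hlo] at this
    exact h.2 (mem_toSeq.2 this)
  · exact h0

/-- the tableau associated to a chain. -/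
noncomputable def cSSYT (hr : ∀ n, HS (r n) (r (n+1))) (hlo : r 0 = toSeq lo)
    (hstab : ∃ n0, ∀ n, n0 ≤ n → r n = toSeq hi) : SkewSSYT hi lo where
  entry := cEntry lo hstab
  pos := fun i j h1 h2 => cEntry_pos hr hlo hstab ⟨h1, h2⟩
  zeros := fun i j h => by rw [cEntry, dif_neg (by tauto)]
  row_weak := by
    intro i j1 j2 hj h1l h1m h2l h2m
    have hs := cEntry_spec hstab ⟨h2l, h2m⟩
    exact cEntry_min hstab ⟨h1l, h1m⟩ (by omega)
  col_strict := by
    intro i1 i2 j hi12 h1l h1m h2l h2m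
    have hs := cEntry_spec hstab ⟨h2l, h2m⟩
    set n := cEntry lo hstab i2 j with hn
    have hpos : 0 < n := cEntry_pos hr hlo hstab ⟨h2l, h2m⟩
    have h1 : r n i2 ≤ r n (i1+1) := anti_le (hr n).anti_lo (by omega)
    have h2 : r n (i1+1) ≤ r (n-1) i1 := by
      have := (hs_pred hr n).2 i1
      omega
    have : j < r (n-1) i1 := by omega
    have := cEntry_min hstab ⟨h1l, h1m⟩ this
    omega

/-- `∃ N, UB (r n) N`, uniformly. -/
theorem rub (hr : ∀ n, HS (r n) (r (n+1)))
    (hstab : ∃ n0, ∀ n, n0 ≤ n → r n = toSeq hi) (n : ℕ) : ∃ N, UB (r n) N := by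
  obtain ⟨N, hN⟩ := toSeq_ub hi
  refine ⟨N, fun i hi' => ?_⟩
  have := chain_le_hi hr hstab n i
  have := hN i hi'
  omega

/-- membership in the stage-`n` shape of the reconstructed tableau. -/
theorem mem_shapeLe_cSSYT (hr : ∀ n, HS (r n) (r (n+1))) (hlo : r 0 = toSeq lo)
    (hstab : ∃ n0, ∀ n, n0 ≤ n → r n = toSeq hi) (n i j : ℕ) :
    (i, j) ∈ shapeLe (cSSYT hr hlo hstab) n ↔ j < r n i := by
  rw [mem_shapeLe]
  show (i, j) ∈ lo ∨ ((i, j) ∈ hi ∧ cEntry lo hstab i j ≤ n) ↔ _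
  constructor
  · rintro (h | ⟨h1, h2⟩)
    · have : j < r 0 i := by rw [hlo]; exact mem_toSeq.1 h
      have := chain_le hr (Nat.zero_le n) i
      omega
    · by_cases hm : (i, j) ∈ lo
      · have : j < r 0 i := by rw [hlo]; exact mem_toSeq.1 hm
        have := chain_le hr (Nat.zero_le n) i
        omega
      · have hsp := cEntry_spec hstab ⟨h1, hm⟩
        have := chain_le hr h2 i
        omega
  · intro h
    by_cases hm : (i, j) ∈ lo
    · exact Or.inl hm
    · refine Or.inr ⟨?_, ?_⟩
      · exact mem_toSeq.2 (lt_of_lt_of_le h (chain_le_hi hr hstab n i))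
      · exact cEntry_min hstab ⟨mem_toSeq.2 (lt_of_lt_of_le h (chain_le_hi hr hstab n i)), hm⟩ h

/-- the chain of the reconstructed tableau is the original chain. -/
theorem tchain_cSSYT (hr : ∀ n, HS (r n) (r (n+1))) (hlo : r 0 = toSeq lo)
    (hstab : ∃ n0, ∀ n, n0 ≤ n → r n = toSeq hi) (n : ℕ) :
    tchain (cSSYT hr hlo hstab) n = r n := by
  funext i
  refine eq_of_lt_iff fun j => ?_
  rw [tchain, ← mem_toSeq, mem_shapeLe_cSSYT hr hlo hstab]

/-- characterization of `cEntry` by a single chain condition. -/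
theorem cEntry_eq (hr : ∀ n, HS (r n) (r (n+1)))
    (hstab : ∃ n0, ∀ n, n0 ≤ n → r n = toSeq hi) {i j v : ℕ}
    (h : (i, j) ∈ hi ∧ (i, j) ∉ lo) (hv1 : j < r v i)
    (hv2 : ¬ j < r (v-1) i) (hv0 : 0 < v) : cEntry lo hstab i j = v := by
  have hle := cEntry_min hstab h hv1
  rcases Nat.lt_or_ge (cEntry lo hstab i j) v with hlt | hge
  · exfalso
    have hsp := cEntry_spec hstab h
    have hmono := chain_le hr (show cEntry lo hstab i j ≤ v - 1 by omega) i
    omega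
  · omega

/-- counting entries of the reconstructed tableau. -/
theorem count_cSSYT_succ (hr : ∀ n, HS (r n) (r (n+1))) (hlo : r 0 = toSeq lo)
    (hstab : ∃ n0, ∀ n, n0 ≤ n → r n = toSeq hi) (n : ℕ) {M : ℕ}
    (hM1 : UB (r n) M) (hM2 : UB (r (n+1)) M) :
    Multiset.count (n+1) (cSSYT hr hlo hstab).entries = W (r (n+1)) M - W (r n) M := by
  rw [count_entries_succ]
  have h1 : shapeLe (cSSYT hr hlo hstab) (n+1) =
      ofSeq (r (n+1)) (hr (n+1)).anti_lo (rub hr hstab (n+1)) := by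
    ext ⟨i, j⟩
    rw [YoungDiagram.mem_cells, YoungDiagram.mem_cells, mem_shapeLe_cSSYT hr hlo hstab,
      mem_ofSeq]
  have h2 : shapeLe (cSSYT hr hlo hstab) n =
      ofSeq (r n) (hr n).anti_lo (rub hr hstab n) := by
    ext ⟨i, j⟩
    rw [YoungDiagram.mem_cells, YoungDiagram.mem_cells, mem_shapeLe_cSSYT hr hlo hstab,
      mem_ofSeq]
  rw [h1, h2, card_sdiff_ofSeq (fun i => (hr n).1 i) hM1 hM2]

end ofChain

end SS
/-! ### biwords and matrices -/

namespace SS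

theorem count_map_fst (s : Multiset (ℕ × ℕ)) {M : ℕ} (h : ∀ p ∈ s, p.2 < M) (n : ℕ) :
    (s.map Prod.fst).count n = ∑ j ∈ Finset.range M, s.count (n, j) := by
  induction s using Multiset.induction_on with
  | empty => simp
  | cons p s ih =>
    obtain ⟨p1, p2⟩ := p
    have hp2 : p2 < M := h (p1, p2) (Multiset.mem_cons_self _ _)
    have hs : ∀ p ∈ s, p.2 < M := fun p hp => h p (Multiset.mem_cons_of_mem hp)
    rw [Multiset.map_cons]
    simp only [Multiset.count_cons, ih hs, Finset.sum_add_distrib]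
    congr 1
    by_cases hn : n = p1
    · subst hn
      rw [if_pos rfl,
        show (∑ x ∈ Finset.range M, if (n, x) = (n, p2) then 1 else 0) =
          ∑ x ∈ Finset.range M, if x = p2 then 1 else 0 from
            Finset.sum_congr rfl (fun x _ => by simp),
        Finset.sum_ite_eq' (Finset.range M) p2 (fun _ => 1),
        if_pos (Finset.mem_range.2 hp2)]
    · rw [if_neg hn]
      rw [Finset.sum_eq_zero]
      intro j _
      rw [if_neg (by simp [Prod.ext_iff, hn])]

theorem count_map_snd (s : Multiset (ℕ × ℕ)) {M : ℕ} (h : ∀ p ∈ s, p.1 < M) (n : ℕ) :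
    (s.map Prod.snd).count n = ∑ i ∈ Finset.range M, s.count (i, n) := by
  induction s using Multiset.induction_on with
  | empty => simp
  | cons p s ih =>
    obtain ⟨p1, p2⟩ := p
    have hp1 : p1 < M := h (p1, p2) (Multiset.mem_cons_self _ _)
    have hs : ∀ p ∈ s, p.1 < M := fun p hp => h p (Multiset.mem_cons_of_mem hp)
    rw [Multiset.map_cons]
    simp only [Multiset.count_cons, ih hs, Finset.sum_add_distrib]
    congr 1
    by_cases hn : n = p2
    · subst hn
      rw [if_pos rfl,
        show (∑ x ∈ Finset.range M, if (x, n) = (p1, n) then 1 else 0) =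
          ∑ x ∈ Finset.range M, if x = p1 then 1 else 0 from
            Finset.sum_congr rfl (fun x _ => by simp),
        Finset.sum_ite_eq' (Finset.range M) p1 (fun _ => 1),
        if_pos (Finset.mem_range.2 hp1)]
    · rw [if_neg hn]
      rw [Finset.sum_eq_zero]
      intro j _
      rw [if_neg (by simp [Prod.ext_iff, hn])]

theorem bw_bound (s : Multiset (ℕ × ℕ)) :
    ∃ N, ∀ p ∈ s, p.1 ≤ N ∧ p.2 ≤ N := by
  refine ⟨(s.map Prod.fst).sum + (s.map Prod.snd).sum, fun p hp => ⟨?_, ?_⟩⟩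
  · have h1 := Multiset.single_le_sum (fun x _ => Nat.zero_le x) p.1
      (Multiset.mem_map_of_mem Prod.fst hp)
    omega
  · have h1 := Multiset.single_le_sum (fun x _ => Nat.zero_le x) p.2
      (Multiset.mem_map_of_mem Prod.snd hp)
    omega

/-- a multiset of pairs from a finitely supported matrix. -/
noncomputable def mkBW (a : ℕ → ℕ → ℕ) {N : ℕ}
    (hfin : ∀ i j, N < i ∨ N < j → a i j = 0) : Multiset (ℕ × ℕ) :=
  Finsupp.toMultiset (Finsupp.ofSupportFinite (fun p : ℕ × ℕ => a p.1 p.2)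
    (Set.Finite.subset (Finset.range (N+1) ×ˢ Finset.range (N+1)).finite_toSet
      (by
        intro p hp
        simp only [Function.mem_support] at hp
        simp only [Finset.coe_product, Set.mem_prod, Finset.mem_coe, Finset.mem_range]
        constructor
        · by_contra hc
          exact hp (hfin p.1 p.2 (Or.inl (by omega)))
        · by_contra hc
          exact hp (hfin p.1 p.2 (Or.inr (by omega))))))

theorem count_mkBW (a : ℕ → ℕ → ℕ) {N : ℕ} (hfin : ∀ i j, N < i ∨ N < j → a i j = 0)
    (p : ℕ × ℕ) : (mkBW a hfin).count p = a p.1 p.2 := by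
  rw [mkBW, Finsupp.count_toMultiset]
  rfl

end SS
/-! ### packaging: the top-level equivalences -/

namespace SS

theorem ofSeq_congr {f g : Seq} {hf hg hubf hubg} (h : f = g) :
    ofSeq f hf hubf = ofSeq g hg hubg := by
  subst h
  ext ⟨i, j⟩
  simp only [YoungDiagram.mem_cells, mem_ofSeq]

theorem SkewRSKOutput.ext2 {α β : YoungDiagram} {x y : SkewRSKOutput α β}
    (hlam : x.lam = y.lam) (hP : ∀ i j, x.P.entry i j = y.P.entry i j)
    (hQ : ∀ i j, x.Q.entry i j = y.Q.entry i j) : x = y := by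
  cases x; cases y
  simp only at hlam hP hQ
  subst hlam
  congr 1
  · exact SkewSSYT.ext2 hP
  · exact SkewSSYT.ext2 hQ

theorem SkewRSKInput.ext2 {α β : YoungDiagram} {x y : SkewRSKInput α β}
    (hbw : x.bw = y.bw) (hμ : x.μ = y.μ)
    (hT : ∀ i j, x.T.entry i j = y.T.entry i j)
    (hU : ∀ i j, x.U.entry i j = y.U.entry i j) : x = y := by
  cases x; cases y
  simp only at hbw hμ hT hU
  subst hbw; subst hμ
  congr 1
  · exact SkewSSYT.ext2 hT
  · exact SkewSSYT.ext2 hU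

variable (αD βD : YoungDiagram)

/-! #### output side -/

noncomputable def outToChain (y : SkewRSKOutput αD βD) : COut (toSeq αD) (toSeq βD) where
  p := tchain y.P
  q := tchain y.Q
  hp := tchain_hs y.P
  hq := tchain_hs y.Q
  hp0 := tchain_zero y.P
  hq0 := tchain_zero y.Q
  hbnd := by
    obtain ⟨NL, hNL⟩ := toSeq_ub y.lam
    set EP := y.lam.cells.sup (fun c => y.P.entry c.1 c.2) with hEP
    set EQ := y.lam.cells.sup (fun c => y.Q.entry c.1 c.2) with hEQ
    refine ⟨max (max EP EQ) NL, fun m n hm hn => ?_, fun n => ?_, fun n => ?_⟩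
    · rw [tchain_stab y.hβlam y.P (by omega), tchain_stab y.hαlam y.Q (by omega)]
    · exact (tchain_ub y.hβlam y.P hNL).mono (by omega)
    · exact (tchain_ub y.hαlam y.Q hNL).mono (by omega)

theorem chainOut_p_stab (y : COut (toSeq αD) (toSeq βD)) :
    ∀ n, y.hbnd.choose ≤ n → y.p n = y.p y.hbnd.choose := by
  intro n hn
  have hO := y.hbnd.choose_spec
  exact (hO.1 n y.hbnd.choose hn le_rfl).trans (hO.1 _ _ le_rfl le_rfl).symm

noncomputable def chainToOut (y : COut (toSeq αD) (toSeq βD)) : SkewRSKOutput αD βD := by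
  have hO := y.hbnd.choose_spec
  refine
    { lam := ofSeq (y.p y.hbnd.choose) (y.hp y.hbnd.choose).anti_lo
        ⟨y.hbnd.choose, hO.2.1 y.hbnd.choose⟩
      hαlam := ?_
      hβlam := ?_
      P := cSSYT y.hp y.hp0 ⟨y.hbnd.choose, fun n hn => by
        rw [toSeq_ofSeq]; exact chainOut_p_stab αD βD y n hn⟩
      Q := cSSYT y.hq y.hq0 ⟨y.hbnd.choose, fun n hn => by
        rw [toSeq_ofSeq]; exact (hO.1 y.hbnd.choose n le_rfl hn).symm⟩ }
  · rintro ⟨i, j⟩ hm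
    rw [mem_toSeq] at hm
    rw [mem_ofSeq]
    have h1 : toSeq αD i = y.q 0 i := by rw [y.hq0]
    have h2 := chain_le y.hq (Nat.zero_le y.hbnd.choose) i
    have h3 : y.q y.hbnd.choose i = y.p y.hbnd.choose i := (hO.1 _ _ le_rfl le_rfl).symm ▸ rfl
    have h4 : y.p y.hbnd.choose i = y.q y.hbnd.choose i := by
      rw [hO.1 y.hbnd.choose y.hbnd.choose le_rfl le_rfl]
    omega
  · rintro ⟨i, j⟩ hm
    rw [mem_toSeq] at hm
    rw [mem_ofSeq]
    have h1 : toSeq βD i = y.p 0 i := by rw [y.hp0]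
    have h2 := chain_le y.hp (Nat.zero_le y.hbnd.choose) i
    omega

theorem out_left_inv (y : SkewRSKOutput αD βD) :
    chainToOut αD βD (outToChain αD βD y) = y := by
  set z := outToChain αD βD y with hz
  have hO := z.hbnd.choose_spec
  set Nb := z.hbnd.choose with hNb
  -- the stabilized chain value is the outer shape
  have hstabP : z.p Nb = toSeq y.lam := by
    set EQ := y.lam.cells.sup (fun c => y.Q.entry c.1 c.2) with hEQ
    have h1 : z.p Nb = z.q (max Nb EQ) := hO.1 Nb (max Nb EQ) le_rfl (by omega)
    rw [h1]
    show tchain y.Q (max Nb EQ) = _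
    exact tchain_stab y.hαlam y.Q (by omega)
  have hlam : (chainToOut αD βD z).lam = y.lam :=
    (ofSeq_congr (hf := (z.hp Nb).anti_lo) (hubf := ⟨Nb, hO.2.1 Nb⟩)
      (hg := toSeq_anti y.lam) (hubg := toSeq_ub y.lam) hstabP).trans
      (ofSeq_toSeq y.lam (toSeq_anti _) (toSeq_ub _))
  have hstabz : ∃ n0, ∀ n, n0 ≤ n → z.p n = toSeq (chainToOut αD βD z).lam :=
    ⟨Nb, fun n hn => by rw [hlam]; exact (chainOut_p_stab αD βD z n hn).trans hstabP⟩
  have hstabzq : ∃ n0, ∀ n, n0 ≤ n → z.q n = toSeq (chainToOut αD βD z).lam :=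
    ⟨Nb, fun n hn => by
      rw [hlam]
      exact (hO.1 Nb n le_rfl hn).symm.trans hstabP⟩
  refine SkewRSKOutput.ext2 hlam ?_ ?_
  · intro i j
    have hent : (chainToOut αD βD z).P.entry = cEntry βD hstabz := rfl
    rw [hent]
    by_cases hc : (i, j) ∈ y.lam ∧ (i, j) ∉ βD
    · have hv0 := y.P.pos i j hc.1 hc.2
      refine cEntry_eq z.hp hstabz ⟨?_, hc.2⟩ ?_ ?_ hv0
      · rw [hlam]
        exact hc.1
      · show j < tchain y.P (y.P.entry i j) i
        rw [tchain, ← mem_toSeq, mem_shapeLe]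
        exact Or.inr ⟨hc.1, le_rfl⟩
      · show ¬ j < tchain y.P (y.P.entry i j - 1) i
        rw [tchain, ← mem_toSeq, mem_shapeLe]
        push_neg
        refine ⟨hc.2, fun _ => by omega⟩
    · rw [cEntry, dif_neg (by rw [hlam]; tauto), y.P.zeros i j (by tauto)]
  · intro i j
    have hent : (chainToOut αD βD z).Q.entry = cEntry αD hstabzq := rfl
    rw [hent]
    by_cases hc : (i, j) ∈ y.lam ∧ (i, j) ∉ αD
    · have hv0 := y.Q.pos i j hc.1 hc.2
      refine cEntry_eq z.hq hstabzq ⟨?_, hc.2⟩ ?_ ?_ hv0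
      · rw [hlam]
        exact hc.1
      · show j < tchain y.Q (y.Q.entry i j) i
        rw [tchain, ← mem_toSeq, mem_shapeLe]
        exact Or.inr ⟨hc.1, le_rfl⟩
      · show ¬ j < tchain y.Q (y.Q.entry i j - 1) i
        rw [tchain, ← mem_toSeq, mem_shapeLe]
        push_neg
        refine ⟨hc.2, fun _ => by omega⟩
    · rw [cEntry, dif_neg (by rw [hlam]; tauto), y.Q.zeros i j (by tauto)]

theorem toSeq_chainToOut_lam (y : COut (toSeq αD) (toSeq βD)) :
    toSeq (chainToOut αD βD y).lam = y.p y.hbnd.choose :=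
  toSeq_ofSeq (y.p y.hbnd.choose) (y.hp y.hbnd.choose).anti_lo
    ⟨y.hbnd.choose, y.hbnd.choose_spec.2.1 y.hbnd.choose⟩

theorem out_right_inv (y : COut (toSeq αD) (toSeq βD)) :
    outToChain αD βD (chainToOut αD βD y) = y := by
  refine COut.ext2 ?_ ?_
  · funext n
    exact tchain_cSSYT y.hp y.hp0 ⟨y.hbnd.choose, fun m hm => by
      rw [toSeq_chainToOut_lam]; exact chainOut_p_stab αD βD y m hm⟩ n
  · funext n
    exact tchain_cSSYT y.hq y.hq0 ⟨y.hbnd.choose, fun m hm => by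
      rw [toSeq_chainToOut_lam]
      exact (y.hbnd.choose_spec.1 y.hbnd.choose m le_rfl hm).symm⟩ n

noncomputable def EOut : SkewRSKOutput αD βD ≃ COut (toSeq αD) (toSeq βD) :=
  ⟨outToChain αD βD, chainToOut αD βD, out_left_inv αD βD, out_right_inv αD βD⟩

/-! #### input side -/

noncomputable def inToChain (x : SkewRSKInput αD βD) : CIn (toSeq αD) (toSeq βD) where
  a := fun i j => x.bw.count (i, j)
  t := tchain x.T
  u := tchain x.U
  ha0 := by
    intro i j h
    rw [Multiset.count_eq_zero]
    intro hm
    have := x.bw_pos (i, j) hm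
    simp only at this
    omega
  ht := tchain_hs x.T
  hu := tchain_hs x.U
  htu := by rw [tchain_zero, tchain_zero]
  hbnd := by
    obtain ⟨Nbw, hNbw⟩ := bw_bound x.bw
    obtain ⟨Na, hNa⟩ := toSeq_ub αD
    obtain ⟨Nb, hNb⟩ := toSeq_ub βD
    set ET := αD.cells.sup (fun c => x.T.entry c.1 c.2) with hET
    set EU := βD.cells.sup (fun c => x.U.entry c.1 c.2) with hEU
    refine ⟨max (max Nbw (max ET EU)) (max Na Nb), fun i j hij => ?_, fun n hn => ?_,
      fun n hn => ?_, fun n => ?_, fun n => ?_⟩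
    · rw [Multiset.count_eq_zero]
      intro hm
      have := hNbw (i, j) hm
      omega
    · exact tchain_stab x.hμα x.T (by omega)
    · exact tchain_stab x.hμβ x.U (by omega)
    · exact (tchain_ub x.hμα x.T hNa).mono (by omega)
    · exact (tchain_ub x.hμβ x.U hNb).mono (by omega)

noncomputable def chainToIn (c : CIn (toSeq αD) (toSeq βD)) : SkewRSKInput αD βD := by
  have hB := c.hbnd.choose_spec
  refine
    { bw := mkBW c.a hB.1
      bw_pos := ?_
      μ := ofSeq (c.t 0) (c.ht 0).anti_lo ⟨c.hbnd.choose, hB.2.2.2.1 0⟩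
      hμα := ?_
      hμβ := ?_
      T := cSSYT c.ht (toSeq_ofSeq _ _ _).symm ⟨c.hbnd.choose, fun n hn => hB.2.1 n hn⟩
      U := cSSYT c.hu (c.htu ▸ (toSeq_ofSeq _ _ _).symm) ⟨c.hbnd.choose, fun n hn => hB.2.2.1 n hn⟩ }
  · intro p hp
    have hc : 0 < (mkBW c.a hB.1).count p := Multiset.count_pos.2 hp
    rw [count_mkBW] at hc
    constructor
    · rcases Nat.eq_zero_or_pos p.1 with h0 | h0
      · rw [c.ha0 p.1 p.2 (Or.inl h0)] at hc; omega
      · exact h0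
    · rcases Nat.eq_zero_or_pos p.2 with h0 | h0
      · rw [c.ha0 p.1 p.2 (Or.inr h0)] at hc; omega
      · exact h0
  · rintro ⟨i, j⟩ hm
    rw [mem_ofSeq] at hm
    rw [mem_toSeq]
    have h2 := chain_le c.ht (Nat.zero_le c.hbnd.choose) i
    have h3 : c.t c.hbnd.choose i = toSeq αD i := by rw [hB.2.1 _ le_rfl]
    omega
  · rintro ⟨i, j⟩ hm
    rw [mem_ofSeq] at hm
    rw [mem_toSeq]
    have h1 : c.t 0 i = c.u 0 i := by rw [c.htu]
    have h2 := chain_le c.hu (Nat.zero_le c.hbnd.choose) i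
    have h3 : c.u c.hbnd.choose i = toSeq βD i := by rw [hB.2.2.1 _ le_rfl]
    omega

theorem in_left_inv (x : SkewRSKInput αD βD) :
    chainToIn αD βD (inToChain αD βD x) = x := by
  set z := inToChain αD βD x with hz
  have hB := z.hbnd.choose_spec
  have hμ : (chainToIn αD βD z).μ = x.μ :=
    (ofSeq_congr (hf := (z.ht 0).anti_lo) (hubf := ⟨z.hbnd.choose, hB.2.2.2.1 0⟩)
      (hg := toSeq_anti x.μ) (hubg := toSeq_ub x.μ) (tchain_zero x.T)).trans
      (ofSeq_toSeq x.μ (toSeq_anti _) (toSeq_ub _))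
  refine SkewRSKInput.ext2 ?_ hμ ?_ ?_
  · show mkBW z.a z.hbnd.choose_spec.1 = x.bw
    refine Multiset.ext.2 fun p => ?_
    rw [count_mkBW]
    show x.bw.count (p.1, p.2) = _
    rw [Prod.mk.eta]
  · intro i j
    have hstabzt : ∃ n0, ∀ n, n0 ≤ n → z.t n = toSeq αD := ⟨z.hbnd.choose, hB.2.1⟩
    have hent : (chainToIn αD βD z).T.entry = cEntry (chainToIn αD βD z).μ hstabzt := rfl
    rw [hent]
    by_cases hc : (i, j) ∈ αD ∧ (i, j) ∉ x.μ
    · have hv0 := x.T.pos i j hc.1 hc.2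
      refine cEntry_eq z.ht hstabzt ⟨hc.1, ?_⟩ ?_ ?_ hv0
      · rw [hμ]
        exact hc.2
      · show j < tchain x.T (x.T.entry i j) i
        rw [tchain, ← mem_toSeq, mem_shapeLe]
        exact Or.inr ⟨hc.1, le_rfl⟩
      · show ¬ j < tchain x.T (x.T.entry i j - 1) i
        rw [tchain, ← mem_toSeq, mem_shapeLe]
        push_neg
        refine ⟨hc.2, fun _ => by omega⟩
    · rw [cEntry, dif_neg (by rw [hμ]; tauto), x.T.zeros i j (by tauto)]
  · intro i j
    have hstabzu : ∃ n0, ∀ n, n0 ≤ n → z.u n = toSeq βD := ⟨z.hbnd.choose, hB.2.2.1⟩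
    have hent : (chainToIn αD βD z).U.entry = cEntry (chainToIn αD βD z).μ hstabzu := rfl
    rw [hent]
    by_cases hc : (i, j) ∈ βD ∧ (i, j) ∉ x.μ
    · have hv0 := x.U.pos i j hc.1 hc.2
      refine cEntry_eq z.hu hstabzu ⟨hc.1, ?_⟩ ?_ ?_ hv0
      · rw [hμ]
        exact hc.2
      · show j < tchain x.U (x.U.entry i j) i
        rw [tchain, ← mem_toSeq, mem_shapeLe]
        exact Or.inr ⟨hc.1, le_rfl⟩
      · show ¬ j < tchain x.U (x.U.entry i j - 1) i
        rw [tchain, ← mem_toSeq, mem_shapeLe]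
        push_neg
        refine ⟨hc.2, fun _ => by omega⟩
    · rw [cEntry, dif_neg (by rw [hμ]; tauto), x.U.zeros i j (by tauto)]

theorem in_right_inv (c : CIn (toSeq αD) (toSeq βD)) :
    inToChain αD βD (chainToIn αD βD c) = c := by
  refine CIn.ext2 ?_ ?_ ?_
  · funext i j
    show (mkBW c.a c.hbnd.choose_spec.1).count (i, j) = c.a i j
    rw [count_mkBW]
  · funext n
    exact tchain_cSSYT c.ht
      ((toSeq_ofSeq (c.t 0) (c.ht 0).anti_lo
        ⟨c.hbnd.choose, c.hbnd.choose_spec.2.2.2.1 0⟩).symm)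
      ⟨c.hbnd.choose, fun m hm => c.hbnd.choose_spec.2.1 m hm⟩ n
  · funext n
    exact tchain_cSSYT c.hu
      (by
        rw [← c.htu]
        exact (toSeq_ofSeq (c.t 0) (c.ht 0).anti_lo
          ⟨c.hbnd.choose, c.hbnd.choose_spec.2.2.2.1 0⟩).symm)
      ⟨c.hbnd.choose, fun m hm => c.hbnd.choose_spec.2.2.1 m hm⟩ n

noncomputable def EIn : SkewRSKInput αD βD ≃ CIn (toSeq αD) (toSeq βD) :=
  ⟨inToChain αD βD, chainToIn αD βD, in_left_inv αD βD, in_right_inv αD βD⟩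

end SS
/-! ### the main theorem -/

namespace SS

theorem card_cells {μ : YoungDiagram} {M : ℕ} (hM : UB (toSeq μ) M) :
    μ.cells.card = W (toSeq μ) M := by
  conv_lhs => rw [← ofSeq_toSeq μ (toSeq_anti μ) (toSeq_ub μ)]
  exact card_ofSeq hM

theorem count_entries_succ' {lam mu : YoungDiagram} (hμ : mu ≤ lam) (T : SkewSSYT lam mu)
    (n : ℕ) {M : ℕ} (hM : UB (toSeq lam) M) :
    Multiset.count (n+1) T.entries = W (tchain T (n+1)) M - W (tchain T n) M := by
  rw [count_entries_succ, Finset.card_sdiff_of_subset (shapeLe_mono T (by omega)),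
    card_cells (tchain_ub hμ T hM), card_cells (tchain_ub hμ T hM)]
  rfl

theorem count_map_fst_zero (s : Multiset (ℕ × ℕ)) (hpos : ∀ p ∈ s, 0 < p.1 ∧ 0 < p.2) :
    (s.map Prod.fst).count 0 = 0 := by
  rw [Multiset.count_eq_zero]
  intro hm
  obtain ⟨p, hp, h0⟩ := Multiset.mem_map.1 hm
  have := hpos p hp
  omega

theorem count_map_snd_zero (s : Multiset (ℕ × ℕ)) (hpos : ∀ p ∈ s, 0 < p.1 ∧ 0 < p.2) :
    (s.map Prod.snd).count 0 = 0 := by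
  rw [Multiset.count_eq_zero]
  intro hm
  obtain ⟨p, hp, h0⟩ := Multiset.mem_map.1 hm
  have := hpos p hp
  omega

end SS

/-- Sagan–Stanley: there is a bijection `((𝐢,𝐣), T, U) ↔ (P, Q)` such that the entries of
`P` are the first components of the biword together with the entries of `T`, and the
entries of `Q` are the second components of the biword together with the entries of `U`. -/
theorem skew_RSK_correspondence (α β : YoungDiagram) :
    ∃ e : SkewRSKInput α β ≃ SkewRSKOutput α β,
      ∀ x : SkewRSKInput α β,
        (e x).P.entries = Multiset.map Prod.fst x.bw + x.T.entries ∧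
        (e x).Q.entries = Multiset.map Prod.snd x.bw + x.U.entries := by
  classical
  refine ⟨(SS.EIn α β).trans ((SS.chainEquiv (SS.toSeq α) (SS.toSeq β)).trans
    (SS.EOut α β).symm), fun x => ?_⟩
  set c := SS.inToChain α β x with hc
  set z := SS.F c with hzdef
  have happ : (((SS.EIn α β).trans ((SS.chainEquiv (SS.toSeq α) (SS.toSeq β)).trans
      (SS.EOut α β).symm)) x) = SS.chainToOut α β z := rfl
  rw [happ]
  have hBc := c.hbnd.choose_spec
  set Nc := c.hbnd.choose with hNc
  have hOz : SS.OBnd z.p z.q (3*Nc+1) := SS.F_obnd c hBc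
  -- the reconstructed tableaux
  have hstabp : ∃ n0, ∀ n, n0 ≤ n → z.p n = SS.toSeq (SS.chainToOut α β z).lam :=
    ⟨z.hbnd.choose, fun m hm => by
      rw [SS.toSeq_chainToOut_lam]; exact SS.chainOut_p_stab α β z m hm⟩
  have hstabq : ∃ n0, ∀ n, n0 ≤ n → z.q n = SS.toSeq (SS.chainToOut α β z).lam :=
    ⟨z.hbnd.choose, fun m hm => by
      rw [SS.toSeq_chainToOut_lam]
      exact (z.hbnd.choose_spec.1 z.hbnd.choose m le_rfl hm).symm⟩
  have hPent : (SS.chainToOut α β z).P.entries = (SS.cSSYT z.hp z.hp0 hstabp).entries := rfl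
  have hQent : (SS.chainToOut α β z).Q.entries = (SS.cSSYT z.hq z.hq0 hstabq).entries := rfl
  have hsndlt : ∀ p ∈ x.bw, p.2 < Nc + 1 := by
    intro p hp
    by_contra hcon
    have h0 : c.a p.1 p.2 = 0 := hBc.1 p.1 p.2 (Or.inr (by omega))
    have : x.bw.count (p.1, p.2) = 0 := h0
    rw [Prod.mk.eta] at this
    exact (Multiset.count_eq_zero.1 this) hp
  have hfstlt : ∀ p ∈ x.bw, p.1 < Nc + 1 := by
    intro p hp
    by_contra hcon
    have h0 : c.a p.1 p.2 = 0 := hBc.1 p.1 p.2 (Or.inl (by omega))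
    have : x.bw.count (p.1, p.2) = 0 := h0
    rw [Prod.mk.eta] at this
    exact (Multiset.count_eq_zero.1 this) hp
  constructor
  · rw [hPent]
    refine Multiset.ext.2 fun n => ?_
    rw [Multiset.count_add]
    match n with
    | 0 =>
      rw [SS.count_entries_zero, SS.count_entries_zero, SS.count_map_fst_zero x.bw x.bw_pos]
    | n + 1 =>
      set M := 3*Nc + n + 3 with hM
      have hub1 : SS.UB (z.p n) M := (hOz.2.1 n).mono (by omega)
      have hub2 : SS.UB (z.p (n+1)) M := (hOz.2.1 (n+1)).mono (by omega)
      rw [SS.count_cSSYT_succ z.hp z.hp0 hstabp n hub1 hub2]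
      have hW := SS.F_W_p c hBc n (M := M) (by omega)
      rw [← hzdef] at hW
      have hcount : (Multiset.map Prod.fst x.bw).count (n+1) =
          ∑ j ∈ Finset.range (Nc+1), c.a (n+1) j :=
        SS.count_map_fst x.bw hsndlt (n+1)
      have hT : Multiset.count (n+1) x.T.entries =
          SS.W (c.t (n+1)) M - SS.W (c.t n) M :=
        SS.count_entries_succ' x.hμα x.T n (by
          rw [← hBc.2.1 Nc le_rfl]
          exact (hBc.2.2.2.1 Nc).mono (by omega))
      rw [hcount, hT]
      have hm1 := SS.W_mono (fun i => (z.hp n).1 i) M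
      have hm2 := SS.W_mono (fun i => (c.ht n).1 i) M
      omega
  · rw [hQent]
    refine Multiset.ext.2 fun n => ?_
    rw [Multiset.count_add]
    match n with
    | 0 =>
      rw [SS.count_entries_zero, SS.count_entries_zero, SS.count_map_snd_zero x.bw x.bw_pos]
    | n + 1 =>
      set M := 3*Nc + n + 3 with hM
      have hub1 : SS.UB (z.q n) M := (hOz.2.2 n).mono (by omega)
      have hub2 : SS.UB (z.q (n+1)) M := (hOz.2.2 (n+1)).mono (by omega)
      rw [SS.count_cSSYT_succ z.hq z.hq0 hstabq n hub1 hub2]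
      have hW := SS.F_W_q c hBc n (M := M) (by omega)
      rw [← hzdef] at hW
      have hcount : (Multiset.map Prod.snd x.bw).count (n+1) =
          ∑ i ∈ Finset.range (Nc+1), c.a i (n+1) :=
        SS.count_map_snd x.bw hfstlt (n+1)
      have hU : Multiset.count (n+1) x.U.entries =
          SS.W (c.u (n+1)) M - SS.W (c.u n) M :=
        SS.count_entries_succ' x.hμβ x.U n (by
          rw [← hBc.2.2.1 Nc le_rfl]
          exact (hBc.2.2.2.2 Nc).mono (by omega))
      rw [hcount, hU]
      have hm1 := SS.W_mono (fun i => (z.hq n).1 i) M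
      have hm2 := SS.W_mono (fun i => (c.hu n).1 i) M
      omega
end

section
/- Let V be a nonzero finite-dimensional complex vector space carrying a Lie module structure over the Lie algebra sl(2,ℂ) of trace-zero 2×2 complex matrices, and let h_V denote the linear endomorphism of V given by the action of the element H = diag(1,−1) of sl(2,ℂ). Then: (a) every eigenvalue of h_V is an integer; (b) setting b_i := dim_ℂ of the eigenspace of h_V for the eigenvalue i (for i ∈ ℤ), one has b_i = b_{−i} for all i ∈ ℤ; and (c) b_{i+2} ≤ b_i for all integers i ≥ 0. Consequently, both the sequence (…, b_{−4}, b_{−2}, b_0, b_2, b_4, …) and the sequence (…, b_{−3}, b_{−1}, b_1, b_3, …) are symmetric and unimodal. -/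
open LieAlgebra.SpecialLinear FiniteDimensional



/-- The element `H = diag(1, -1)` of `sl(2, ℂ)`. -/
def sl2H : sl (Fin 2) ℂ :=
  ⟨!![1, 0; 0, -1], show !![(1 : ℂ), 0; 0, -1] ∈ LinearMap.ker (Matrix.traceLinearMap (Fin 2) ℂ ℂ) by
    simp [LinearMap.mem_ker, Matrix.trace_fin_two]⟩

def sl2E : sl (Fin 2) ℂ :=
  ⟨!![0, 1; 0, 0], show !![(0 : ℂ), 1; 0, 0] ∈ LinearMap.ker (Matrix.traceLinearMap (Fin 2) ℂ ℂ) by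
    simp [LinearMap.mem_ker, Matrix.trace_fin_two]⟩

def sl2F : sl (Fin 2) ℂ :=
  ⟨!![0, 0; 1, 0], show !![(0 : ℂ), 0; 1, 0] ∈ LinearMap.ker (Matrix.traceLinearMap (Fin 2) ℂ ℂ) by
    simp [LinearMap.mem_ker, Matrix.trace_fin_two]⟩

lemma sl2_triple : IsSl2Triple sl2H sl2E sl2F where
  h_ne_zero := by
    intro hcon
    have := congrArg (fun x => x.val 0 0) hcon
    simp [sl2H] at this
  lie_e_f := by
    apply Subtype.ext
    show sl2E.val * sl2F.val - sl2F.val * sl2E.val = sl2H.val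
    simp [sl2E, sl2F, sl2H, Matrix.mul_fin_two]

  lie_h_e_nsmul := by
    apply Subtype.ext
    show sl2H.val * sl2E.val - sl2E.val * sl2H.val = 2 • sl2E.val
    simp [sl2E, sl2H, Matrix.mul_fin_two]
    norm_num
  lie_h_f_nsmul := by
    apply Subtype.ext
    show sl2H.val * sl2F.val - sl2F.val * sl2H.val = -(2 • sl2F.val)
    simp [sl2F, sl2H, Matrix.mul_fin_two]
    norm_num
    ext i
    fin_cases i
    rfl


section ExpAux

variable {A : Type*} [Ring A] [Algebra ℂ A]

noncomputable def myExp (M : ℕ) (x : A) : A :=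
  ∑ k ∈ Finset.range M, (k.factorial : ℂ)⁻¹ • x ^ k

lemma myExp_comm (M : ℕ) (x : A) : x * myExp M x = myExp M x * x := by
  simp only [myExp, Finset.mul_sum, Finset.sum_mul, mul_smul_comm, smul_mul_assoc,
    ← pow_succ, ← pow_succ']

lemma fact_cast_aux (k : ℕ) : ((k : ℂ) + 1) * ((k + 1).factorial : ℂ)⁻¹ = (k.factorial : ℂ)⁻¹ := by
  rw [Nat.factorial_succ]
  push_cast
  rw [mul_inv, ← mul_assoc, mul_inv_cancel₀ (Nat.cast_add_one_ne_zero k), one_mul]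

lemma pow_mul_rel {x h : A} {c : ℂ} (hx : x * h = h * x + c • x) (n : ℕ) :
    x ^ n * h = h * x ^ n + ((n : ℂ) * c) • x ^ n := by
  induction n with
  | zero => simp
  | succ n ih =>
    rw [pow_succ, mul_assoc, hx, mul_add, ← mul_assoc, ih]
    simp only [add_mul, smul_mul_assoc, mul_smul_comm, mul_assoc, ← pow_succ]
    push_cast
    module

lemma sum_weighted (x : A) (M : ℕ) (hx : ∀ k, M ≤ k + 1 → x ^ k = 0) :
    ∑ k ∈ Finset.range M, ((k : ℂ) * (k.factorial : ℂ)⁻¹) • x ^ k = x * myExp M x := by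
  match M with
  | 0 => simp [myExp]
  | (N + 1) =>
    rw [Finset.sum_range_succ']
    have htop : x ^ N = 0 := hx N le_rfl
    have hme : myExp (N + 1) x = ∑ k ∈ Finset.range N, (k.factorial : ℂ)⁻¹ • x ^ k := by
      rw [myExp, Finset.sum_range_succ, htop, smul_zero, add_zero]
    rw [hme, Finset.mul_sum]
    simp only [Nat.cast_zero, zero_mul, zero_smul, add_zero]
    refine Finset.sum_congr rfl fun k _ => ?_
    push_cast
    rw [fact_cast_aux, pow_succ', mul_smul_comm]

lemma myExp_mul_rel1 {x h : A} {c : ℂ} (hx : x * h = h * x + c • x)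
    (M : ℕ) (hM : ∀ k, M ≤ k + 1 → x ^ k = 0) :
    myExp M x * h = (h + c • x) * myExp M x := by
  rw [myExp, Finset.sum_mul]
  have key : ∀ k ∈ Finset.range M, ((k.factorial : ℂ)⁻¹ • x ^ k) * h
      = (k.factorial : ℂ)⁻¹ • (h * x ^ k) + c • (((k : ℂ) * (k.factorial : ℂ)⁻¹) • x ^ k) := by
    intro k _
    rw [smul_mul_assoc, pow_mul_rel hx]
    module
  rw [Finset.sum_congr rfl key, Finset.sum_add_distrib, ← Finset.smul_sum,
    sum_weighted x M hM]
  simp only [myExp, add_mul, smul_mul_assoc, Finset.mul_sum, mul_smul_comm, smul_add,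
    Finset.sum_add_distrib, Finset.smul_sum]
  congr 1
  exact Finset.sum_congr rfl fun k _ => smul_comm _ _ _

lemma pow_mul_rel2 {g e h : A} (hge : g * e = e * g + h) (hgh : g * h = h * g + (2 : ℂ) • g)
    (n : ℕ) :
    g ^ (n + 1) * e = e * g ^ (n + 1) + (((n : ℂ) + 1)) • (h * g ^ n)
      + (((n : ℂ) + 1) * n) • g ^ n := by
  induction n with
  | zero => simpa using hge
  | succ n ih =>
    have step : g ^ (n + 1 + 1) * e = g * (g ^ (n + 1) * e) := by
      rw [← mul_assoc, ← pow_succ']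
    rw [step, ih, mul_add, mul_add, ← mul_assoc, hge, mul_smul_comm, mul_smul_comm,
      ← mul_assoc, hgh]
    simp only [add_mul, smul_mul_assoc, mul_smul_comm, mul_assoc, ← pow_succ']
    push_cast
    module

lemma myExp_mul_rel2 {g e h : A} (hge : g * e = e * g + h) (hgh : g * h = h * g + (2 : ℂ) • g)
    (N : ℕ) (hN : ∀ k, N ≤ k → g ^ k = 0) :
    myExp (N + 2) g * e = (e + h + g) * myExp (N + 2) g := by
  have hsum : myExp (N + 2) g * e
      = ∑ k ∈ Finset.range (N + 1), (((k+1).factorial : ℂ)⁻¹ • (g ^ (k+1) * e)) + e := by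
    rw [myExp, Finset.sum_mul, Finset.sum_range_succ']
    simp [smul_mul_assoc]
  have key : ∀ k ∈ Finset.range (N + 1), ((k+1).factorial : ℂ)⁻¹ • (g ^ (k+1) * e)
      = ((k+1).factorial : ℂ)⁻¹ • (e * g ^ (k+1)) + (k.factorial : ℂ)⁻¹ • (h * g ^ k)
        + ((k : ℂ) * (k.factorial : ℂ)⁻¹) • g ^ k := by
    intro k _
    rw [pow_mul_rel2 hge hgh k]
    have e1 : ((k+1).factorial : ℂ)⁻¹ * ((k : ℂ) + 1) = (k.factorial : ℂ)⁻¹ := by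
      rw [mul_comm]; exact fact_cast_aux k
    have e2 : ((k+1).factorial : ℂ)⁻¹ * (((k : ℂ) + 1) * k) = (k : ℂ) * (k.factorial : ℂ)⁻¹ := by
      rw [mul_comm ((k:ℂ)+1) (k:ℂ), ← mul_assoc, mul_comm (((k+1).factorial : ℂ)⁻¹) (k:ℂ),
        mul_assoc, e1]
    rw [smul_add, smul_add, smul_smul, smul_smul, e1, e2]
  have t1 : (∑ k ∈ Finset.range (N+1), (((k+1).factorial : ℂ)⁻¹) • g ^ (k+1)) + 1
      = myExp (N + 2) g := by
    rw [myExp]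
    conv_rhs => rw [Finset.sum_range_succ']
    norm_num
  have t2 : ∑ k ∈ Finset.range (N+1), (k.factorial : ℂ)⁻¹ • g ^ k = myExp (N + 2) g := by
    rw [myExp]
    conv_rhs => rw [Finset.sum_range_succ]
    rw [hN (N+1) (by omega)]
    simp
  have t3 : ∑ k ∈ Finset.range (N+1), ((k : ℂ) * (k.factorial : ℂ)⁻¹) • g ^ k
      = g * myExp (N + 2) g := by
    rw [sum_weighted g (N + 1) (fun k hk => hN k (by omega))]
    have h4 : myExp (N+1) g = myExp (N+2) g := by
      rw [myExp, myExp]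
      conv_rhs => rw [Finset.sum_range_succ]
      rw [hN (N+1) (by omega)]
      simp
    rw [h4]
  have tH : ∑ k ∈ Finset.range (N+1), (k.factorial : ℂ)⁻¹ • (h * g ^ k)
      = h * myExp (N + 2) g := by
    rw [← t2, Finset.mul_sum]
    simp only [mul_smul_comm]
  have tE : e * myExp (N + 2) g
      = (∑ k ∈ Finset.range (N+1), ((k+1).factorial : ℂ)⁻¹ • (e * g ^ (k+1))) + e := by
    rw [← t1, mul_add, mul_one, Finset.mul_sum]
    simp only [mul_smul_comm]
  rw [hsum, Finset.sum_congr rfl key, Finset.sum_add_distrib, Finset.sum_add_distrib, tH, t3,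
    add_mul, add_mul, tE]
  abel

lemma isUnit_myExp (x : A) (N : ℕ) (hN : x ^ N = 0) : IsUnit (myExp (N + 2) x) := by
  have : myExp (N + 2) x
      = 1 + x * (∑ k ∈ Finset.range (N + 1), ((k+1).factorial : ℂ)⁻¹ • x ^ k) := by
    rw [myExp, Finset.sum_range_succ']
    rw [Finset.mul_sum]
    simp only [mul_smul_comm, ← pow_succ']
    simp [add_comm]
  rw [this]
  apply IsNilpotent.isUnit_one_add
  have hc : Commute x (∑ k ∈ Finset.range (N + 1), ((k+1).factorial : ℂ)⁻¹ • x ^ k) := by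
    apply Commute.sum_right
    intro k _
    exact (Commute.pow_right (Commute.refl x) k).smul_right _
  exact (hc.isNilpotent_mul_right ⟨N, hN⟩)

end ExpAux


section NilpAux

variable {V : Type*} [AddCommGroup V] [Module ℂ V] [FiniteDimensional ℂ V]

lemma pow_comm_of_rel {A : Type*} [Ring A] {a x b : A} (hrel : a * x = x * b) (k : ℕ) :
    a ^ k * x = x * b ^ k := by
  induction k with
  | zero => simp
  | succ k ih => rw [pow_succ', mul_assoc, ih, ← mul_assoc, hrel, mul_assoc, ← pow_succ']

lemma maxGen_shift (H X : Module.End ℂ V) (δ : ℂ) (hrel : H * X = X * H + δ • X)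
    (μ : ℂ) {v : V} (hv : v ∈ H.maxGenEigenspace μ) :
    X v ∈ H.maxGenEigenspace (μ + δ) := by
  rw [Module.End.mem_maxGenEigenspace] at hv ⊢
  obtain ⟨k, hk⟩ := hv
  refine ⟨k, ?_⟩
  have hcomm : (H - (μ + δ) • 1) * X = X * (H - μ • 1) := by
    simp only [sub_mul, mul_sub, smul_mul_assoc, mul_smul_comm, one_mul, mul_one, hrel]
    module
  have := pow_comm_of_rel hcomm k
  calc ((H - (μ + δ) • 1) ^ k) (X v) = (((H - (μ + δ) • 1) ^ k) * X) v := rfl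
    _ = (X * (H - μ • 1) ^ k) v := by rw [this]
    _ = X (((H - μ • 1) ^ k) v) := rfl
    _ = 0 := by rw [hk, map_zero]

lemma exists_pow_eq_zero_of_shift (H X : Module.End ℂ V) (δ : ℂ) (hδ : δ ≠ 0)
    (hrel : H * X = X * H + δ • X) : ∃ N : ℕ, X ^ N = 0 := by
  classical
  have hfin := H.finite_hasEigenvalue
  set S := hfin.toFinset with hS
  refine ⟨S.card + 1, ?_⟩
  have eig_of_max : ∀ μ : ℂ, H.maxGenEigenspace μ ≠ ⊥ → H.HasEigenvalue μ := by
    intro μ hne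
    have h1 : H.HasUnifEigenvalue μ ⊤ := hne
    exact h1.lt (by norm_num)
  have key : ∀ μ : ℂ, ∀ v ∈ H.maxGenEigenspace μ, (X ^ (S.card + 1)) v = 0 := by
    intro μ v hv
    have iter : ∀ j : ℕ, (X ^ j) v ∈ H.maxGenEigenspace (μ + j * δ) := by
      intro j
      induction j with
      | zero => simpa using hv
      | succ j ih =>
        have h1 := maxGen_shift H X δ hrel _ ih
        have h2 : μ + (j : ℂ) * δ + δ = μ + ((j : ℕ) + 1 : ℕ) * δ := by push_cast; ring
        rw [h2] at h1
        rw [pow_succ']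
        simpa [Module.End.mul_apply] using h1
    by_cases hall : ∀ j : ℕ, j ≤ S.card → H.maxGenEigenspace (μ + j * δ) ≠ ⊥
    · exfalso
      have hmem : ∀ j ∈ Finset.range (S.card + 1), μ + (j : ℂ) * δ ∈ S := by
        intro j hj
        rw [hS, Set.Finite.mem_toFinset]
        exact eig_of_max _ (hall j (by simpa using Nat.lt_succ_iff.mp (Finset.mem_range.mp hj)))
      have hinj : Set.InjOn (fun j : ℕ => μ + (j : ℂ) * δ) (Finset.range (S.card + 1)) := by
        intro a _ b _ hab
        have h2 : (a : ℂ) * δ = (b : ℂ) * δ := add_left_cancel hab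
        exact Nat.cast_injective (mul_right_cancel₀ hδ h2)
      have hcard := Finset.card_le_card_of_injOn _ hmem hinj
      rw [Finset.card_range] at hcard
      omega
    · push_neg at hall
      obtain ⟨j, hj1, hj2⟩ := hall
      have : (X ^ j) v = 0 := by
        have := iter j
        rw [hj2] at this
        simpa using this
      rw [show S.card + 1 = (S.card + 1 - j) + j by omega, pow_add, Module.End.mul_apply, this,
        map_zero]
  ext v
  have hv : v ∈ ⨆ μ : ℂ, H.maxGenEigenspace μ := by
    rw [Module.End.iSup_maxGenEigenspace_eq_top]; trivial
  simp only [LinearMap.zero_apply]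
  exact Submodule.iSup_induction (motive := fun w => (X ^ (S.card + 1)) w = 0) _ hv
    (fun i x hx => key i x hx) (map_zero _)
    (fun x y hx hy => by rw [map_add]; rw [hx, hy, add_zero])

end NilpAux


set_option maxHeartbeats 1000000 in
/-- For a nonzero finite-dimensional representation of `sl(2, ℂ)`: every eigenvalue of the
action of `H = diag(1, -1)` is an integer; the eigenvalue multiplicities `b_i` satisfy
`b_i = b_{-i}` (symmetry) and `b_{i+2} ≤ b_i` for `i ≥ 0` (unimodality on each parity). -/
theorem sl2_character_symmetric_unimodal
    (V : Type*) [AddCommGroup V] [Module ℂ V] [Nontrivial V] [FiniteDimensional ℂ V]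
    [LieRingModule (sl (Fin 2) ℂ) V] [LieModule ℂ (sl (Fin 2) ℂ) V]
    (h : Module.End ℂ V) (hh : h = LieModule.toEnd ℂ (sl (Fin 2) ℂ) V sl2H)
    (b : ℤ → ℕ) (hb : ∀ i : ℤ, b i = Module.finrank ℂ (Module.End.eigenspace h (i : ℂ))) :
    (∀ μ : ℂ, h.HasEigenvalue μ → ∃ k : ℤ, μ = (k : ℂ)) ∧
    (∀ i : ℤ, b i = b (-i)) ∧
    (∀ i : ℤ, 0 ≤ i → b (i + 2) ≤ b i) := by
  classical
  set E' : Module.End ℂ V := LieModule.toEnd ℂ (sl (Fin 2) ℂ) V sl2E with hE'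
  set F' : Module.End ℂ V := LieModule.toEnd ℂ (sl (Fin 2) ℂ) V sl2F with hF'
  have map_lie : ∀ x y : sl (Fin 2) ℂ, LieModule.toEnd ℂ (sl (Fin 2) ℂ) V ⁅x, y⁆
      = (LieModule.toEnd ℂ (sl (Fin 2) ℂ) V x) * (LieModule.toEnd ℂ (sl (Fin 2) ℂ) V y)
        - (LieModule.toEnd ℂ (sl (Fin 2) ℂ) V y) * (LieModule.toEnd ℂ (sl (Fin 2) ℂ) V x) :=
    fun x y => by ext m; simp [Module.End.mul_apply, lie_lie]
  have hEF : E' * F' - F' * E' = h := by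
    rw [hh, ← sl2_triple.lie_e_f, map_lie]
  have h2E : (2 : ℕ) • sl2E = (2 : ℂ) • sl2E := by rw [two_smul ℕ]; module
  have h2F : -((2 : ℕ) • sl2F) = (-2 : ℂ) • sl2F := by rw [two_smul ℕ]; module
  have hHE : h * E' - E' * h = (2 : ℂ) • E' := by
    rw [hh, hE', ← map_lie, sl2_triple.lie_h_e_nsmul, h2E, map_smul]
  have hHF : h * F' - F' * h = (-2 : ℂ) • F' := by
    rw [hh, hF', ← map_lie, sl2_triple.lie_h_f_nsmul, h2F, map_smul]
  have hx1 : E' * h = h * E' + (-2 : ℂ) • E' := by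
    rw [sub_eq_iff_eq_add.mp hHE]; module
  have hfh : F' * h = h * F' + (2 : ℂ) • F' := by
    rw [sub_eq_iff_eq_add.mp hHF]; module
  set G : Module.End ℂ V := -F' with hG
  have hgh : G * h = h * G + (2 : ℂ) • G := by rw [hG, neg_mul, mul_neg, hfh]; module
  have hge : G * E' = E' * G + h := by rw [hG, neg_mul, mul_neg, ← hEF]; module
  have hrelE : h * E' = E' * h + (2 : ℂ) • E' := by rw [sub_eq_iff_eq_add.mp hHE]; module
  have hrelF : h * F' = F' * h + (-2 : ℂ) • F' := by rw [sub_eq_iff_eq_add.mp hHF]; module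
  obtain ⟨NE, hNE⟩ := exists_pow_eq_zero_of_shift h E' 2 two_ne_zero hrelE
  obtain ⟨NF, hNF⟩ := exists_pow_eq_zero_of_shift h F' (-2) (by norm_num) hrelF
  set N0 := max NE NF with hN0
  have hE0 : ∀ k, N0 ≤ k → E' ^ k = 0 := by
    intro k hk
    rw [show k = NE + (k - NE) by omega, pow_add, hNE, zero_mul]
  have hF0 : ∀ k, N0 ≤ k → F' ^ k = 0 := by
    intro k hk
    rw [show k = NF + (k - NF) by omega, pow_add, hNF, zero_mul]
  have hG0 : ∀ k, N0 ≤ k → G ^ k = 0 := by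
    intro k hk; rw [hG, neg_pow, hF0 k hk, mul_zero]
  set eE := myExp (N0 + 2) E' with heE
  set eG := myExp (N0 + 2) G with heG
  have hME : ∀ k, N0 + 2 ≤ k + 1 → E' ^ k = 0 := fun k hk => hE0 k (by omega)
  have hMG : ∀ k, N0 + 2 ≤ k + 1 → G ^ k = 0 := fun k hk => hG0 k (by omega)
  have step1 : eE * h = (h + (-2 : ℂ) • E') * eE := myExp_mul_rel1 hx1 (N0 + 2) hME
  have step2 : eG * h = (h + (2 : ℂ) • G) * eG := myExp_mul_rel1 hgh (N0 + 2) hMG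
  have step3 : eG * E' = (E' + h + G) * eG := myExp_mul_rel2 hge hgh N0 hG0
  have c2 : eG * (h + (-2 : ℂ) • E') = (-h + (-2 : ℂ) • E') * eG := by
    rw [mul_add, step2, mul_smul_comm, step3]
    simp only [add_mul, smul_mul_assoc, smul_add, neg_mul]
    module
  have c3 : eE * (-h + (-2 : ℂ) • E') = (-h) * eE := by
    have hcomm : eE * E' = E' * eE := (myExp_comm (N0 + 2) E').symm
    rw [mul_add, mul_neg, step1, mul_smul_comm, hcomm]
    simp only [add_mul, smul_mul_assoc, neg_mul]
    module
  set Θ := eE * eG * eE with hΘ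
  have hconj : Θ * h = (-h) * Θ := by
    calc Θ * h = eE * (eG * (eE * h)) := by rw [hΘ]; simp only [mul_assoc]
    _ = eE * (eG * ((h + (-2 : ℂ) • E') * eE)) := by rw [step1]
    _ = eE * ((eG * (h + (-2 : ℂ) • E')) * eE) := by rw [mul_assoc]
    _ = eE * (((-h + (-2 : ℂ) • E') * eG) * eE) := by rw [c2]
    _ = (eE * (-h + (-2 : ℂ) • E')) * (eG * eE) := by simp only [mul_assoc]
    _ = ((-h) * eE) * (eG * eE) := by rw [c3]
    _ = (-h) * Θ := by rw [hΘ]; simp only [mul_assoc]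
  have hunit : IsUnit Θ := by
    rw [hΘ]
    exact ((isUnit_myExp E' N0 (hE0 N0 le_rfl)).mul (isUnit_myExp G N0 (hG0 N0 le_rfl))).mul
      (isUnit_myExp E' N0 (hE0 N0 le_rfl))
  have Θinj : Function.Injective ⇑Θ := by
    obtain ⟨u, hu⟩ := hunit
    intro a b hab
    rw [← hu] at hab
    have h3 := congrArg (⇑(↑u⁻¹ : Module.End ℂ V)) hab
    rwa [← Module.End.mul_apply, ← Module.End.mul_apply, u.inv_mul, Module.End.one_apply,
      Module.End.one_apply] at h3
  have hΘmap : ∀ μ : ℂ, ∀ v ∈ h.eigenspace μ, Θ v ∈ h.eigenspace (-μ) := by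
    intro μ v hv
    rw [Module.End.mem_eigenspace_iff] at hv ⊢
    have h1 : h (Θ v) = (h * Θ) v := rfl
    have hsw : h * Θ = -(Θ * h) := by rw [hconj, neg_mul, neg_neg]
    rw [h1, hsw, LinearMap.neg_apply, Module.End.mul_apply, hv, map_smul, ← neg_smul]
  have symmle : ∀ μ : ℂ,
      Module.finrank ℂ (h.eigenspace μ) ≤ Module.finrank ℂ (h.eigenspace (-μ)) := by
    intro μ
    let T := Θ.restrict (fun v hv => hΘmap μ v hv)
    have hT : Function.Injective T := by
      intro a b hab
      have h2 : Θ (a : V) = Θ (b : V) := by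
        simpa [T, LinearMap.restrict_apply] using congrArg Subtype.val hab
      exact Subtype.ext (Θinj h2)
    exact LinearMap.finrank_le_finrank_of_injective hT
  refine ⟨?_, ?_, ?_⟩
  · -- integrality
    intro μ hμ
    obtain ⟨v, hv⟩ := hμ.exists_hasEigenvector
    have hv0 : v ≠ 0 := hv.2
    have hvh : h v = μ • v := Module.End.mem_eigenspace_iff.mp hv.1
    have hstr : ∀ j : ℕ, h ((E' ^ j) v) = (μ + 2 * j) • (E' ^ j) v := by
      intro j
      induction j with
      | zero => simpa using hvh
      | succ j ih =>
        have e1 : (E' ^ (j + 1)) v = E' ((E' ^ j) v) := by rw [pow_succ']; rfl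
        have e2 : h (E' ((E' ^ j) v)) = (h * E') ((E' ^ j) v) := rfl
        rw [e1, e2, hrelE]
        simp only [LinearMap.add_apply, Module.End.mul_apply, LinearMap.smul_apply]
        rw [ih, map_smul]
        push_cast
        module
    have hex : ∃ k, (E' ^ k) v = 0 := ⟨N0, by rw [hE0 N0 le_rfl]; simp⟩
    obtain ⟨k, hk1, hk2⟩ := Nat.exists_not_and_succ_of_not_zero_of_exists
      (p := fun k => (E' ^ k) v = 0) (by simpa using hv0) hex
    have prim : sl2_triple.HasPrimitiveVectorWith ((E' ^ k) v) (μ + 2 * k) := by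
      refine ⟨hk1, ?_, ?_⟩
      · show ⁅sl2H, (E' ^ k) v⁆ = (μ + 2 * k) • (E' ^ k) v
        rw [← LieModule.toEnd_apply_apply ℂ (sl (Fin 2) ℂ) V sl2H, ← hh]
        exact hstr k
      · show ⁅sl2E, (E' ^ k) v⁆ = 0
        rw [← LieModule.toEnd_apply_apply ℂ (sl (Fin 2) ℂ) V sl2E, ← hE']
        have e3 : E' ((E' ^ k) v) = (E' ^ (k + 1)) v := by rw [pow_succ']; rfl
        exact e3.trans hk2
    obtain ⟨n, hn⟩ := prim.exists_nat
    exact ⟨(n : ℤ) - 2 * k, by push_cast; linear_combination hn⟩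
  · -- symmetry
    intro i
    rw [hb i, hb (-i)]
    have e1 : ((-i : ℤ) : ℂ) = -((i : ℤ) : ℂ) := by push_cast; ring
    rw [e1]
    refine le_antisymm (symmle (i : ℂ)) ?_
    have := symmle (-(i : ℂ))
    rwa [neg_neg] at this
  · -- unimodality
    intro i hi
    rw [hb (i + 2), hb i]
    have hFmap : ∀ μ : ℂ, ∀ v ∈ h.eigenspace μ, F' v ∈ h.eigenspace (μ - 2) := by
      intro μ v hv
      rw [Module.End.mem_eigenspace_iff] at hv ⊢
      have e2 : h (F' v) = (h * F') v := rfl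
      rw [e2, hrelF]
      simp only [LinearMap.add_apply, Module.End.mul_apply, LinearMap.smul_apply]
      rw [hv, map_smul]
      module
    have hmt : ∀ v ∈ h.eigenspace ((i + 2 : ℤ) : ℂ), F' v ∈ h.eigenspace ((i : ℤ) : ℂ) := by
      intro v hv
      have h4 := hFmap _ v hv
      have hcast : ((i + 2 : ℤ) : ℂ) - 2 = ((i : ℤ) : ℂ) := by push_cast; ring
      rwa [hcast] at h4
    let T := F'.restrict hmt
    have hT : Function.Injective T := by
      intro a b hab
      by_contra hne
      have hw0 : (a : V) - (b : V) ≠ 0 := sub_ne_zero.mpr (fun hcon => hne (Subtype.ext hcon))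
      have hwmem : (a : V) - (b : V) ∈ h.eigenspace ((i + 2 : ℤ) : ℂ) := sub_mem a.2 b.2
      have hFw : F' ((a : V) - (b : V)) = 0 := by
        have h5 : F' (a : V) = F' (b : V) := by
          simpa [T, LinearMap.restrict_apply] using congrArg Subtype.val hab
        rw [map_sub, h5, sub_self]
      have prim : (sl2_triple.symm).HasPrimitiveVectorWith ((a : V) - (b : V))
          (-(((i : ℤ) : ℂ) + 2)) := by
        refine ⟨hw0, ?_, ?_⟩
        · show ⁅-sl2H, (a : V) - (b : V)⁆ = _
          rw [neg_lie, ← LieModule.toEnd_apply_apply ℂ (sl (Fin 2) ℂ) V sl2H, ← hh]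
          rw [Module.End.mem_eigenspace_iff.mp hwmem]
          push_cast
          module
        · show ⁅sl2F, (a : V) - (b : V)⁆ = 0
          rw [← LieModule.toEnd_apply_apply ℂ (sl (Fin 2) ℂ) V sl2F, ← hF']
          exact hFw
      obtain ⟨n, hn⟩ := prim.exists_nat
      have h6 : ((n : ℤ) : ℂ) = ((-i - 2 : ℤ) : ℂ) := by push_cast; linear_combination -hn
      have hZ : (n : ℤ) = -i - 2 := by exact_mod_cast h6
      omega
    exact LinearMap.finrank_le_finrank_of_injective hT
end

section
/- Fix n ≥ 2 and a partition λ = (λ_1 > λ_2 > … > λ_{n−1} > λ_n = 0) with distinct parts. The map (w,T) ↦ σ(w,T), restricted to the set of admissible pairs (w,T) ∈ 𝒜(λ) such that w is the identity permutation and ℓ(w t_1 … t_i) = ℓ(w t_1 … t_{i−1}) + 1 for every i (i.e., the chain in Bruhat order is saturated), is a bijection onto the set SSYT_{[n]}(λ) of semistandard Young tableaux of shape λ with entries in {1,…,n}. -/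
/-- The conjugate partition: `conj n lam j` is the length `λ'_j` of the `j`-th column
(`j` being `1`-indexed) of the partition `λ = (lam 0, lam 1, …)`. -/
def conj (n : ℕ) (lam : ℕ → ℕ) (j : ℕ) : ℕ :=
  ((Finset.range n).filter fun i => j ≤ lam i).card

/-- The sequence of transpositions `Γ_{k,i} = ((i, k+1), (i, k+2), …, (i, n))`
(all entries `1`-indexed). -/
def GammaKI (n k i : ℕ) : List (ℕ × ℕ) :=
  (List.range (n - k)).map fun d => (i, k + 1 + d)

/-- The sequence of transpositions `Γ_k = Γ_{k,k} Γ_{k,k-1} ⋯ Γ_{k,1}`. -/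
def GammaK (n k : ℕ) : List (ℕ × ℕ) :=
  ((List.range k).map fun d => GammaKI n k (k - d)).flatten

/-- Right multiplication of the permutation `w` by the transpositions listed in `ts`,
in order: `w t_1 t_2 ⋯ t_m`. -/
def applyT (w : Equiv.Perm ℕ) (ts : List (ℕ × ℕ)) : Equiv.Perm ℕ :=
  ts.foldl (fun u p => u * Equiv.swap p.1 p.2) w

/-- The length (number of inversions) of a permutation of `{1, …, n}`. -/
def len (n : ℕ) (w : Equiv.Perm ℕ) : ℕ :=
  (((Finset.Icc 1 n) ×ˢ (Finset.Icc 1 n)).filter fun p => p.1 < p.2 ∧ w p.2 < w p.1).card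


/-! ### Basic lemmas -/

@[simp] lemma applyT_nil (w : Equiv.Perm ℕ) : applyT w [] = w := rfl

@[simp] lemma applyT_cons (w : Equiv.Perm ℕ) (p : ℕ × ℕ) (ts : List (ℕ × ℕ)) :
    applyT w (p :: ts) = applyT (w * Equiv.swap p.1 p.2) ts := rfl

lemma applyT_append (w : Equiv.Perm ℕ) (l₁ l₂ : List (ℕ × ℕ)) :
    applyT w (l₁ ++ l₂) = applyT (applyT w l₁) l₂ := by
  induction l₁ generalizing w with
  | nil => rfl
  | cons p l ih => simp [applyT_cons, ih]

/-- positions untouched by `ts` keep their value -/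
lemma applyT_untouched (w : Equiv.Perm ℕ) (ts : List (ℕ × ℕ)) (d : ℕ)
    (h : ∀ p ∈ ts, p.1 ≠ d ∧ p.2 ≠ d) : applyT w ts d = w d := by
  induction ts generalizing w with
  | nil => rfl
  | cons p l ih =>
      have hp := h p (List.mem_cons_self)
      have : (w * Equiv.swap p.1 p.2) d = w d := by
        simp [Equiv.Perm.mul_apply, Equiv.swap_apply_of_ne_of_ne (Ne.symm hp.1) (Ne.symm hp.2)]
      rw [applyT_cons, ih _ (fun q hq => h q (List.mem_cons_of_mem _ hq)), this]

/-- permutations fixing everything outside `[1,n]` -/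
def FixOut (n : ℕ) (w : Equiv.Perm ℕ) : Prop := ∀ i, i = 0 ∨ n < i → w i = i

lemma FixOut.mem (hw : FixOut n w) {r : ℕ} (h1 : 1 ≤ r) (h2 : r ≤ n) :
    1 ≤ w r ∧ w r ≤ n := by
  by_contra hcon
  have h0 : w r = 0 ∨ n < w r := by omega
  have := hw _ h0
  have : w (w r) = w r := this
  have : w r = r := w.injective this
  omega

lemma FixOut.one : FixOut n 1 := fun i _ => rfl

lemma FixOut.mul_swap (hw : FixOut n w) {a b : ℕ} (ha : 1 ≤ a) (han : a ≤ n)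
    (hb : 1 ≤ b) (hbn : b ≤ n) : FixOut n (w * Equiv.swap a b) := by
  intro i hi
  have hia : i ≠ a := by omega
  have hib : i ≠ b := by omega
  simp [Equiv.Perm.mul_apply, Equiv.swap_apply_of_ne_of_ne hia hib, hw i hi]

lemma FixOut.applyT (hw : FixOut n w) (ts : List (ℕ × ℕ))
    (h : ∀ p ∈ ts, 1 ≤ p.1 ∧ p.1 ≤ n ∧ 1 ≤ p.2 ∧ p.2 ≤ n) : FixOut n (applyT w ts) := by
  induction ts generalizing w with
  | nil => exact hw
  | cons p l ih =>
      have hp := h p (List.mem_cons_self)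
      exact ih (hw.mul_swap hp.1 hp.2.1 hp.2.2.1 hp.2.2.2)
        (fun q hq => h q (List.mem_cons_of_mem _ hq))

/-- Bruhat cover condition for right multiplication by swap a b. -/
def Cov (w : Equiv.Perm ℕ) (a b : ℕ) : Prop :=
  w a < w b ∧ ∀ d, a < d → d < b → ¬(w a < w d ∧ w d < w b)

/-- each step along the list is a cover -/
def SatChain : Equiv.Perm ℕ → List (ℕ × ℕ) → Prop
  | _, [] => True
  | π, t :: ts => Cov π t.1 t.2 ∧ SatChain (π * Equiv.swap t.1 t.2) ts

@[simp] lemma satChain_nil (π : Equiv.Perm ℕ) : SatChain π [] := trivial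

@[simp] lemma satChain_cons (π : Equiv.Perm ℕ) (t : ℕ × ℕ) (ts : List (ℕ × ℕ)) :
    SatChain π (t :: ts) ↔ Cov π t.1 t.2 ∧ SatChain (π * Equiv.swap t.1 t.2) ts := Iff.rfl

lemma satChain_append (π : Equiv.Perm ℕ) (l₁ l₂ : List (ℕ × ℕ)) :
    SatChain π (l₁ ++ l₂) ↔ SatChain π l₁ ∧ SatChain (applyT π l₁) l₂ := by
  induction l₁ generalizing π with
  | nil => simp
  | cons p l ih => simp [ih, and_assoc]

/-- the value at the moved position only increases along a saturated chain all of whose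
transpositions have first component `i` -/
lemma satChain_mono (π : Equiv.Perm ℕ) (i : ℕ) (ts : List (ℕ × ℕ))
    (hts : ∀ p ∈ ts, p.1 = i) (h : SatChain π ts) : π i ≤ applyT π ts i := by
  induction ts generalizing π with
  | nil => simp
  | cons p l ih =>
      obtain ⟨hc, hrest⟩ := h
      have hp1 : p.1 = i := hts p (List.mem_cons_self)
      have step : (π * Equiv.swap p.1 p.2) i = π p.2 := by
        subst hp1
        by_cases hpp : p.1 = p.2
        · simp [← hpp, Equiv.Perm.mul_apply]
        · simp [Equiv.Perm.mul_apply, Equiv.swap_apply_left]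
      have h1 : π i < π p.2 := by rw [← hp1]; exact hc.1
      have := ih _ (fun q hq => hts q (List.mem_cons_of_mem _ hq)) hrest
      rw [applyT_cons]
      omega

/-- "no jump" lemma: if position `c` sits strictly between `i` and every transposition
position used, then the value at `i` stays below `π c`. -/
lemma satChain_noJump (π : Equiv.Perm ℕ) (i c : ℕ) (ts : List (ℕ × ℕ))
    (hts : ∀ p ∈ ts, p.1 = i ∧ c < p.2) (hic : i < c) (hv : π i < π c)
    (h : SatChain π ts) : applyT π ts i < π c ∧ applyT π ts c = π c := by
  induction ts generalizing π with
  | nil => simp [hv]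
  | cons p l ih =>
      obtain ⟨hc1, hrest⟩ := h
      obtain ⟨hp1, hp2⟩ := hts p (List.mem_cons_self)
      subst hp1
      have hne : p.1 ≠ p.2 := by omega
      have hcov := hc1
      -- value at c is untouched by this step
      have hcstep : (π * Equiv.swap p.1 p.2) c = π c := by
        have : c ≠ p.1 := by omega
        have : Equiv.swap p.1 p.2 c = c :=
          Equiv.swap_apply_of_ne_of_ne (by omega) (by omega)
        simp [Equiv.Perm.mul_apply, this]
      have histep : (π * Equiv.swap p.1 p.2) p.1 = π p.2 := by
        simp [Equiv.Perm.mul_apply, Equiv.swap_apply_left]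
      -- new value at i still < π c
      have hnew : π p.2 < π c := by
        have hd := hcov.2 c hic hp2
        have h1 : π p.1 < π p.2 := hcov.1
        have hne2 : π p.2 ≠ π c := fun h => hne (by
          have : p.2 = c := π.injective h
          omega)
        rcases lt_or_gt_of_ne hne2 with h' | h'
        · exact h'
        · exact absurd ⟨hv, h'⟩ hd
      have := ih _ (fun q hq => hts q (List.mem_cons_of_mem _ hq))
        (by rw [histep, hcstep]; exact hnew) hrest
      rw [applyT_cons]
      constructor
      · rw [hcstep] at this; exact this.1
      · rw [hcstep] at this; exact this.2

/-! ### Length lemma -/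
lemma len_int (n : ℕ) (u : Equiv.Perm ℕ) :
    (len n u : ℤ) = ∑ p ∈ (Finset.Icc 1 n) ×ˢ (Finset.Icc 1 n),
      (if p.1 < p.2 ∧ u p.2 < u p.1 then (1:ℤ) else 0) := by
  rw [len, Finset.card_filter]
  push_cast
  exact Finset.sum_congr rfl (fun p _ => by split_ifs <;> simp)

lemma Rd_Cd (w : Equiv.Perm ℕ) (a b d : ℕ) (hab : a < b) (hord : w a < w b)
    (hda : d ≠ a) (hdb : d ≠ b) :
    ((if b < d ∧ w d < w a then (1:ℤ) else 0) - (if a < d ∧ w d < w a then 1 else 0))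
    + ((if a < d ∧ w d < w b then 1 else 0) - (if b < d ∧ w d < w b then 1 else 0))
    + ((if d < b ∧ w a < w d then 1 else 0) - (if d < a ∧ w a < w d then 1 else 0))
    + ((if d < a ∧ w b < w d then 1 else 0) - (if d < b ∧ w b < w d then 1 else 0))
    = if a < d ∧ d < b ∧ w a < w d ∧ w d < w b then 2 else 0 := by
  have h1 : w d ≠ w a := fun h => hda (w.injective h)
  have h2 : w d ≠ w b := fun h => hdb (w.injective h)
  have h3 : d ≠ a := hda
  have h4 : d ≠ b := hdb
  split_ifs <;> omega

lemma len_mul_swap_int (n : ℕ) (w : Equiv.Perm ℕ) (a b : ℕ) (ha : 1 ≤ a) (hab : a < b)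
    (hbn : b ≤ n) (hord : w a < w b) :
    (len n (w * Equiv.swap a b) : ℤ) = (len n w : ℤ) + 1 +
      2 * ((Finset.Ioo a b).filter (fun d => w a < w d ∧ w d < w b)).card := by
  classical
  set σ := Equiv.swap a b with hσ
  have hσa : σ a = b := Equiv.swap_apply_left a b
  have hσb : σ b = a := Equiv.swap_apply_right a b
  have hσd : ∀ d, d ≠ a → d ≠ b → σ d = d := fun d h1 h2 => Equiv.swap_apply_of_ne_of_ne h1 h2
  have hσσ : ∀ x, σ (σ x) = x := fun x => Equiv.swap_apply_self a b x
  have haI : a ∈ Finset.Icc 1 n := by simp; omega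
  have hbI : b ∈ Finset.Icc 1 n := by simp; omega
  have hσIcc : ∀ x ∈ Finset.Icc 1 n, σ x ∈ Finset.Icc 1 n := by
    intro x hx
    by_cases h1 : x = a
    · subst h1; rw [hσa]; exact hbI
    by_cases h2 : x = b
    · subst h2; rw [hσb]; exact haI
    · rw [hσd x h1 h2]; exact hx
  set P := (Finset.Icc 1 n) ×ˢ (Finset.Icc 1 n) with hP
  -- reindex
  have reidx : (len n (w * σ) : ℤ) =
      ∑ p ∈ P, (if σ p.1 < σ p.2 ∧ w p.2 < w p.1 then (1:ℤ) else 0) := by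
    rw [len_int]
    refine Finset.sum_nbij' (fun p => (σ p.1, σ p.2)) (fun p => (σ p.1, σ p.2)) ?_ ?_ ?_ ?_ ?_
    · intro p hp
      rw [Finset.mem_product] at hp ⊢
      exact ⟨hσIcc _ hp.1, hσIcc _ hp.2⟩
    · intro p hp
      rw [Finset.mem_product] at hp ⊢
      exact ⟨hσIcc _ hp.1, hσIcc _ hp.2⟩
    · intro p _; simp [hσσ]
    · intro p _; simp [hσσ]
    · intro p _
      simp only [Equiv.Perm.mul_apply, hσσ]
      exact if_congr Iff.rfl rfl rfl
  rw [reidx, len_int]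
  set F : ℕ × ℕ → ℤ := fun p => if σ p.1 < σ p.2 ∧ w p.2 < w p.1 then (1:ℤ) else 0 with hF
  set G : ℕ × ℕ → ℤ := fun p => if p.1 < p.2 ∧ w p.2 < w p.1 then (1:ℤ) else 0 with hG
  set S := ((Finset.Icc 1 n).erase a).erase b with hS
  have hdS : ∀ d ∈ S, d ≠ a ∧ d ≠ b ∧ d ∈ Finset.Icc 1 n := by
    intro d hd
    rw [hS, Finset.mem_erase, Finset.mem_erase] at hd
    exact ⟨hd.2.1, hd.1, hd.2.2⟩
  have hsplit : ∀ H : ℕ → ℤ, ∑ x ∈ Finset.Icc 1 n, H x = H a + H b + ∑ x ∈ S, H x := by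
    intro H
    have h1 : b ∈ (Finset.Icc 1 n).erase a := Finset.mem_erase.2 ⟨by omega, hbI⟩
    rw [← Finset.insert_erase haI, Finset.sum_insert (Finset.notMem_erase _ _),
      ← Finset.insert_erase h1, Finset.sum_insert (Finset.notMem_erase _ _)]
    ring
  have hDsum : ∑ p ∈ P, (F p - G p) = 1 +
      2 * ((Finset.Ioo a b).filter (fun d => w a < w d ∧ w d < w b)).card := by
    rw [hP, Finset.sum_product, hsplit]
    have inner : ∀ x, ∑ y ∈ Finset.Icc 1 n, (F (x, y) - G (x, y)) =
        (F (x,a) - G (x,a)) + (F (x,b) - G (x,b)) + ∑ y ∈ S, (F (x,y) - G (x,y)) :=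
      fun x => hsplit _
    rw [inner, inner]
    have hSzero : ∀ x ∈ S, ∑ y ∈ S, (F (x,y) - G (x,y)) = 0 := by
      intro x hx
      apply Finset.sum_eq_zero
      intro y hy
      obtain ⟨hxa, hxb, _⟩ := hdS x hx
      obtain ⟨hya, hyb, _⟩ := hdS y hy
      simp only [hF, hG, hσd x hxa hxb, hσd y hya hyb, sub_self]
    have hsum3 : ∑ x ∈ S, (∑ y ∈ Finset.Icc 1 n, (F (x, y) - G (x, y)))
        = ∑ x ∈ S, ((F (x,a) - G (x,a)) + (F (x,b) - G (x,b))) := by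
      refine Finset.sum_congr rfl (fun x hx => ?_)
      rw [inner, hSzero x hx]
      ring
    rw [hsum3]
    have hcorner : (F (a,a) - G (a,a)) + (F (a,b) - G (a,b)) +
        ((F (b,a) - G (b,a)) + (F (b,b) - G (b,b))) = 1 := by
      simp only [hF, hG, hσa, hσb]
      have h1 : ¬ (a < a) := by omega
      have h2 : ¬ (b < a) := by omega
      have h3 : ¬ (w b < w a) := by omega
      have h4 : ¬ (b < b) := by omega
      simp [h1, h2, h3, h4, hab, hord]
    have hrowcol : ∑ y ∈ S, (F (a,y) - G (a,y)) + ∑ y ∈ S, (F (b,y) - G (b,y))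
        + ∑ x ∈ S, ((F (x,a) - G (x,a)) + (F (x,b) - G (x,b)))
        = 2 * ((Finset.Ioo a b).filter (fun d => w a < w d ∧ w d < w b)).card := by
      rw [← Finset.sum_add_distrib, ← Finset.sum_add_distrib]
      have step : ∀ d ∈ S, (F (a,d) - G (a,d)) + (F (b,d) - G (b,d)) +
          ((F (d,a) - G (d,a)) + (F (d,b) - G (d,b)))
          = if a < d ∧ d < b ∧ w a < w d ∧ w d < w b then (2:ℤ) else 0 := by
        intro d hd
        obtain ⟨hda, hdb, _⟩ := hdS d hd
        simp only [hF, hG, hσa, hσb, hσd d hda hdb]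
        have := Rd_Cd w a b d hab hord hda hdb
        linarith [this]
      have hfil : S.filter (fun d => a < d ∧ d < b ∧ w a < w d ∧ w d < w b)
          = (Finset.Ioo a b).filter (fun d => w a < w d ∧ w d < w b) := by
        ext d
        simp only [Finset.mem_filter, Finset.mem_Ioo, hS, Finset.mem_erase, Finset.mem_Icc]
        constructor
        · rintro ⟨⟨h1, h2, h3⟩, h4, h5, h6, h7⟩
          exact ⟨⟨h4, h5⟩, h6, h7⟩
        · rintro ⟨⟨h1, h2⟩, h3, h4⟩
          exact ⟨⟨by omega, by omega, by omega, by omega⟩, h1, h2, h3, h4⟩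
      rw [Finset.sum_congr rfl step, ← Finset.sum_filter, hfil, Finset.sum_const]
      simp [mul_comm]
    calc F (a, a) - G (a, a) + (F (a, b) - G (a, b)) + (∑ y ∈ S, (F (a, y) - G (a, y)))
          + (F (b, a) - G (b, a) + (F (b, b) - G (b, b)) + ∑ y ∈ S, (F (b, y) - G (b, y)))
          + ∑ x ∈ S, (F (x, a) - G (x, a) + (F (x, b) - G (x, b)))
        = ((F (a,a) - G (a,a)) + (F (a,b) - G (a,b)) +
            ((F (b,a) - G (b,a)) + (F (b,b) - G (b,b)))) +
          (∑ y ∈ S, (F (a,y) - G (a,y)) + ∑ y ∈ S, (F (b,y) - G (b,y))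
            + ∑ x ∈ S, ((F (x,a) - G (x,a)) + (F (x,b) - G (x,b)))) := by ring
      _ = 1 + 2 * ((Finset.Ioo a b).filter (fun d => w a < w d ∧ w d < w b)).card := by
          rw [hcorner, hrowcol]
  have := Finset.sum_sub_distrib (s := P) (f := F) (g := G)
  rw [hDsum] at this
  linarith [this]

lemma len_succ_iff_cov (n : ℕ) (w : Equiv.Perm ℕ) (a b : ℕ) (ha : 1 ≤ a) (hab : a < b)
    (hbn : b ≤ n) : len n (w * Equiv.swap a b) = len n w + 1 ↔ Cov w a b := by
  constructor
  · intro h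
    by_cases hord : w a < w b
    · have hf := len_mul_swap_int n w a b ha hab hbn hord
      rw [h] at hf
      push_cast at hf
      have hcard : ((Finset.Ioo a b).filter (fun d => w a < w d ∧ w d < w b)).card = 0 := by
        omega
      rw [Finset.card_eq_zero] at hcard
      refine ⟨hord, fun d h1 h2 hdb => ?_⟩
      have : d ∈ (Finset.Ioo a b).filter (fun d => w a < w d ∧ w d < w b) := by
        simp [Finset.mem_filter, Finset.mem_Ioo, h1, h2, hdb.1, hdb.2]
      rw [hcard] at this
      simp at this
    · exfalso
      have hne : w a ≠ w b := fun hh => (by omega : a ≠ b) (w.injective hh)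
      have hord' : (w * Equiv.swap a b) a < (w * Equiv.swap a b) b := by
        simp only [Equiv.Perm.mul_apply, Equiv.swap_apply_left, Equiv.swap_apply_right]
        omega
      have hf := len_mul_swap_int n (w * Equiv.swap a b) a b ha hab hbn hord'
      have hww : w * Equiv.swap a b * Equiv.swap a b = w := by
        rw [mul_assoc, Equiv.swap_mul_self, mul_one]
      rw [hww, h] at hf
      push_cast at hf
      omega
  · rintro ⟨hord, hcov⟩
    have hf := len_mul_swap_int n w a b ha hab hbn hord
    have hcard : ((Finset.Ioo a b).filter (fun d => w a < w d ∧ w d < w b)).card = 0 := by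
      rw [Finset.card_eq_zero, Finset.filter_eq_empty_iff]
      intro d hd
      rw [Finset.mem_Ioo] at hd
      exact hcov d hd.1 hd.2
    rw [hcard] at hf
    push_cast at hf
    omega

/-! ### SatChain vs saturated length condition -/

lemma satChain_iff_saturated (n : ℕ) (w : Equiv.Perm ℕ) (ts : List (ℕ × ℕ))
    (hts : ∀ p ∈ ts, 1 ≤ p.1 ∧ p.1 < p.2 ∧ p.2 ≤ n) :
    SatChain w ts ↔ ∀ i < ts.length,
      len n (applyT w (ts.take (i + 1))) = len n (applyT w (ts.take i)) + 1 := by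
  induction ts generalizing w with
  | nil => simp
  | cons p l ih =>
      obtain ⟨hp1, hp2, hp3⟩ := hts p (List.mem_cons_self)
      have ih' := ih (w * Equiv.swap p.1 p.2) (fun q hq => hts q (List.mem_cons_of_mem _ hq))
      constructor
      · rintro ⟨hcov, hsat⟩ i hi
        cases i with
        | zero =>
            simpa [applyT] using (len_succ_iff_cov n w p.1 p.2 hp1 hp2 hp3).2 hcov
        | succ j =>
            have hj : j < l.length := by simpa using Nat.lt_of_succ_lt_succ hi
            have := (ih'.1 hsat) j hj
            simpa [List.take_succ_cons, applyT_cons] using this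
      · intro h
        refine ⟨(len_succ_iff_cov n w p.1 p.2 hp1 hp2 hp3).1 ?_, ih'.2 fun j hj => ?_⟩
        · simpa [applyT] using h 0 (by simp)
        · have := h (j + 1) (by simpa using Nat.succ_lt_succ hj)
          simpa [List.take_succ_cons, applyT_cons] using this

/-! ### Block lemmas -/

lemma mem_of_sublist_map {i : ℕ} {cs : List ℕ} {T : List (ℕ × ℕ)}
    (hT : T.Sublist (cs.map fun c => (i, c))) {p : ℕ × ℕ} (hp : p ∈ T) :
    p.1 = i ∧ p.2 ∈ cs := by
  have := hT.mem hp
  simp only [List.mem_map] at this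
  obtain ⟨c, hc, hpc⟩ := this
  exact ⟨by rw [← hpc], by rw [← hpc]; exact hc⟩

lemma block_unique (π : Equiv.Perm ℕ) (i : ℕ) (cs : List ℕ)
    (hcs : cs.Pairwise (· < ·)) (hci : ∀ c ∈ cs, i < c) (T T' : List (ℕ × ℕ))
    (hT : T.Sublist (cs.map fun c => (i, c))) (hT' : T'.Sublist (cs.map fun c => (i, c)))
    (h : SatChain π T) (h' : SatChain π T')
    (hval : applyT π T i = applyT π T' i) : T = T' := by
  induction cs generalizing π T T' with
  | nil =>
      simp only [List.map_nil, List.sublist_nil] at hT hT'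
      rw [hT, hT']
  | cons c cs' ih =>
      rw [List.pairwise_cons] at hcs
      have hic : i < c := hci c (List.mem_cons_self)
      have hci' : ∀ c' ∈ cs', i < c' := fun c' hc' => hci c' (List.mem_cons_of_mem _ hc')
      simp only [List.map_cons, List.sublist_cons_iff] at hT hT'
      -- helper: a taken chain forces final value ≥ π c; a skipped chain keeps it < π c
      have keyGE : ∀ r : List (ℕ × ℕ), r.Sublist (cs'.map fun c' => (i, c')) →
          SatChain π ((i, c) :: r) → π c ≤ applyT (π * Equiv.swap i c) r i := by
        intro r hr hsat
        obtain ⟨hcov, hrest⟩ := hsat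
        have := satChain_mono (π * Equiv.swap i c) i r
          (fun q hq => (mem_of_sublist_map hr hq).1) hrest
        have hstep : (π * Equiv.swap i c) i = π c := by
          simp [Equiv.Perm.mul_apply, Equiv.swap_apply_left]
        omega
      have keyLT : ∀ r : List (ℕ × ℕ), r.Sublist (cs'.map fun c' => (i, c')) →
          SatChain π r → (π i < π c) → applyT π r i < π c := by
        intro r hr hsat hv
        exact (satChain_noJump π i c r
          (fun p hp => ⟨(mem_of_sublist_map hr hp).1,
            hcs.1 _ (mem_of_sublist_map hr hp).2⟩) hic hv hsat).1
      rcases hT with hT | ⟨r, rfl, hr⟩ <;> rcases hT' with hT' | ⟨r', rfl, hr'⟩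
      · exact ih π hcs.2 hci' _ _ hT hT' h h' hval
      · exfalso
        have h1 := keyGE r' hr' h'
        have h2 := keyLT T hT h h'.1.1
        simp only [applyT_cons] at hval
        omega
      · exfalso
        have h1 := keyGE r hr h
        have h2 := keyLT T' hT' h' h.1.1
        simp only [applyT_cons] at hval
        omega
      · obtain ⟨hcov, hrest⟩ := h
        obtain ⟨hcov', hrest'⟩ := h'
        simp only [applyT_cons] at hval
        rw [ih (π * Equiv.swap i c) hcs.2 hci' r r' hr hr' hrest hrest' hval]

lemma block_exists (π : Equiv.Perm ℕ) (i b : ℕ) (cs : List ℕ)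
    (hcs : cs.Pairwise (· < ·)) (hci : ∀ c ∈ cs, i < c) (hb : π i ≤ b)
    (havail : π i = b ∨ ∃ c ∈ cs, π c = b)
    (hout : ∀ d, i < d → d ∉ cs → ¬(π i < π d ∧ π d ≤ b)) :
    ∃ T, T.Sublist (cs.map fun c => (i, c)) ∧ SatChain π T ∧ applyT π T i = b := by
  induction cs generalizing π with
  | nil =>
      refine ⟨[], List.Sublist.refl _, trivial, ?_⟩
      simp only [applyT_nil]
      rcases havail with h | h
      · exact h
      · simp at h
  | cons c cs' ih =>
      rw [List.pairwise_cons] at hcs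
      have hic : i < c := hci c (List.mem_cons_self)
      have hci' : ∀ c' ∈ cs', i < c' := fun c' hc' => hci c' (List.mem_cons_of_mem _ hc')
      by_cases heq : π i = b
      · exact ⟨[], List.nil_sublist _, trivial, by simp [heq]⟩
      have hlt : π i < b := by omega
      by_cases hc : π i < π c ∧ π c ≤ b
      · -- take the step (i, c)
        have hcov : Cov π i c := by
          refine ⟨hc.1, fun d h1 h2 hdb => ?_⟩
          have hdnot : d ∉ c :: cs' := by
            intro hd
            rcases List.mem_cons.1 hd with rfl | hd'
            · omega
            · exact absurd (hcs.1 d hd') (by omega)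
          exact hout d h1 hdnot ⟨hdb.1, by omega⟩
        set π' := π * Equiv.swap i c with hπ'
        have hπ'i : π' i = π c := by simp [hπ', Equiv.Perm.mul_apply, Equiv.swap_apply_left]
        have hπ'c : π' c = π i := by simp [hπ', Equiv.Perm.mul_apply, Equiv.swap_apply_right]
        have hπ'd : ∀ d, d ≠ i → d ≠ c → π' d = π d := fun d h1 h2 => by
          simp [hπ', Equiv.Perm.mul_apply, Equiv.swap_apply_of_ne_of_ne h1 h2]
        have havail' : π' i = b ∨ ∃ c' ∈ cs', π' c' = b := by
          by_cases hcb : π c = b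
          · left; rw [hπ'i]; exact hcb
          · right
            rcases havail with h | ⟨c'', hc'', hv⟩
            · omega
            rcases List.mem_cons.1 hc'' with rfl | hc''
            · exact absurd hv hcb
            · refine ⟨c'', hc'', ?_⟩
              rw [hπ'd c'' (by have := hci' c'' hc''; omega)
                (fun hh => by subst hh; exact hcb hv)]
              exact hv
        have hout' : ∀ d, i < d → d ∉ cs' → ¬(π' i < π' d ∧ π' d ≤ b) := by
          intro d h1 h2
          by_cases hdc : d = c
          · subst hdc; rw [hπ'c, hπ'i]; omega
          · rw [hπ'd d (by omega) hdc, hπ'i]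
            have := hout d h1 (by simp [h2, hdc])
            intro hcon
            exact this ⟨by omega, hcon.2⟩
        obtain ⟨T', hT'sub, hT'sat, hT'val⟩ := ih π' hcs.2 hci'
          (by rw [hπ'i]; exact hc.2) havail' hout'
        refine ⟨(i, c) :: T', ?_, ⟨hcov, hT'sat⟩, ?_⟩
        · simpa using hT'sub.cons₂ (i, c)
        · rw [applyT_cons]; exact hT'val
      · -- skip c
        have havail' : π i = b ∨ ∃ c' ∈ cs', π c' = b := by
          rcases havail with h | ⟨c'', hc'', hv⟩
          · left; exact h
          rcases List.mem_cons.1 hc'' with rfl | hc''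
          · exfalso; exact hc ⟨by omega, by omega⟩
          · exact Or.inr ⟨c'', hc'', hv⟩
        have hout' : ∀ d, i < d → d ∉ cs' → ¬(π i < π d ∧ π d ≤ b) := by
          intro d h1 h2
          by_cases hdc : d = c
          · subst hdc; exact hc
          · exact hout d h1 (by simp [h2, hdc])
        obtain ⟨T, hTsub, hTsat, hTval⟩ := ih π hcs.2 hci' hb havail' hout'
        exact ⟨T, hTsub.trans (List.sublist_cons_self _ _), hTsat, hTval⟩

/-! ### Column structure -/

def ColCs (n k : ℕ) : List ℕ := List.range' (k + 1) (n - k)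

lemma colCs_sorted (n k : ℕ) : (ColCs n k).Pairwise (· < ·) :=
  List.pairwise_lt_range' (pos := Nat.one_pos)

lemma mem_colCs {n k c : ℕ} : c ∈ ColCs n k ↔ k + 1 ≤ c ∧ c ≤ n := by
  rw [ColCs, List.mem_range'_1]
  omega

lemma gammaKI_eq_map (n k i : ℕ) : GammaKI n k i = (ColCs n k).map fun c => (i, c) := by
  rw [GammaKI, ColCs, List.range'_eq_map_range, List.map_map]
  rfl

/-- `Blocks n k i = Γ_{k,i} ++ Γ_{k,i-1} ++ ⋯ ++ Γ_{k,1}` -/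
def Blocks (n k : ℕ) : ℕ → List (ℕ × ℕ)
  | 0 => []
  | i + 1 => GammaKI n k (i + 1) ++ Blocks n k i

lemma gammaK_aux (n k j : ℕ) :
    ((List.range j).map (fun d => GammaKI n k (j - d))).flatten = Blocks n k j := by
  induction j with
  | zero => simp [Blocks]
  | succ j ih =>
      rw [List.range_succ_eq_map, List.map_cons, List.map_map, List.flatten_cons]
      rw [Blocks, ← ih]
      simp only [Nat.sub_zero]
      congr 2
      apply List.map_congr_left
      intro d _
      simp only [Function.comp_apply]
      congr 1
      omega

lemma gammaK_eq_blocks (n k : ℕ) : GammaK n k = Blocks n k k := gammaK_aux n k k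

lemma mem_blocks {n k i : ℕ} {p : ℕ × ℕ} (hp : p ∈ Blocks n k i) :
    1 ≤ p.1 ∧ p.1 ≤ i ∧ k + 1 ≤ p.2 ∧ p.2 ≤ n := by
  induction i with
  | zero => simp [Blocks] at hp
  | succ i ih =>
      rw [Blocks, List.mem_append] at hp
      rcases hp with hp | hp
      · rw [gammaKI_eq_map, List.mem_map] at hp
        obtain ⟨c, hc, rfl⟩ := hp
        rw [mem_colCs] at hc
        exact ⟨by omega, by omega, hc.1, hc.2⟩
      · have := ih hp
        exact ⟨this.1, by omega, this.2.2⟩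

lemma mem_blocks_sub {n k i : ℕ} {T : List (ℕ × ℕ)} (hT : T.Sublist (Blocks n k i))
    {p : ℕ × ℕ} (hp : p ∈ T) : 1 ≤ p.1 ∧ p.1 ≤ i ∧ k + 1 ≤ p.2 ∧ p.2 ≤ n :=
  mem_blocks (hT.mem hp)

lemma mem_gammaKI_sub {n k i : ℕ} {X : List (ℕ × ℕ)} (hX : X.Sublist (GammaKI n k i))
    {p : ℕ × ℕ} (hp : p ∈ X) : p.1 = i ∧ k + 1 ≤ p.2 ∧ p.2 ≤ n := by
  rw [gammaKI_eq_map] at hX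
  obtain ⟨h1, h2⟩ := mem_of_sublist_map hX hp
  rw [mem_colCs] at h2
  exact ⟨h1, h2⟩

lemma blocks_forward (n k : ℕ) (hkn : k ≤ n) :
    ∀ i, i ≤ k → ∀ ρ T, T.Sublist (Blocks n k i) → SatChain ρ T →
      (∀ r s, 1 ≤ r → r < s → s ≤ k → ρ r < ρ s) →
      (∀ r, 1 ≤ r → r ≤ k → ρ r ≤ applyT ρ T r) ∧
      (∀ r s, 1 ≤ r → r < s → s ≤ k → applyT ρ T r < applyT ρ T s) ∧
      (∀ r, i < r → r ≤ k → applyT ρ T r = ρ r) := by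
  intro i
  induction i with
  | zero =>
      intro _ ρ T hT hsat hinc
      rw [show Blocks n k 0 = [] from rfl, List.sublist_nil] at hT
      subst hT
      exact ⟨fun r _ _ => le_refl _, fun r s h1 h2 h3 => hinc r s h1 h2 h3, fun r _ _ => rfl⟩
  | succ i ih =>
      intro hik ρ T hT hsat hinc
      rw [show Blocks n k (i+1) = GammaKI n k (i+1) ++ Blocks n k i from rfl,
        List.sublist_append_iff] at hT
      obtain ⟨X, Y, rfl, hX, hY⟩ := hT
      rw [satChain_append] at hsat
      obtain ⟨hsatX, hsatY⟩ := hsat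
      set ρ₁ := applyT ρ X with hρ₁
      have hXel : ∀ p ∈ X, p.1 = i + 1 ∧ k + 1 ≤ p.2 ∧ p.2 ≤ n :=
        fun p hp => mem_gammaKI_sub hX hp
      have hρ₁d : ∀ d, d ≤ k → d ≠ i + 1 → ρ₁ d = ρ d := by
        intro d hd hdne
        exact applyT_untouched ρ X d (fun p hp => by
          obtain ⟨h1, h2, h3⟩ := hXel p hp
          constructor <;> omega)
      have hmono : ρ (i + 1) ≤ ρ₁ (i + 1) :=
        satChain_mono ρ (i + 1) X (fun p hp => (hXel p hp).1) hsatX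
      have hjump : i + 1 < k → ρ₁ (i + 1) < ρ (i + 2) := by
        intro hik2
        exact (satChain_noJump ρ (i + 1) (i + 2) X
          (fun p hp => ⟨(hXel p hp).1, by have := (hXel p hp).2.1; omega⟩)
          (by omega) (hinc (i + 1) (i + 2) (by omega) (by omega) (by omega)) hsatX).1
      have hinc1 : ∀ r s, 1 ≤ r → r < s → s ≤ k → ρ₁ r < ρ₁ s := by
        intro r s h1 h2 h3
        by_cases hr : r = i + 1
        · subst hr
          have hik2 : i + 1 < k := by omega
          rw [hρ₁d s (by omega) (by omega)]
          have h4 := hjump hik2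
          rcases Nat.eq_or_lt_of_le (show i + 2 ≤ s by omega) with h5 | h5
          · rw [← h5]; exact h4
          · exact lt_trans h4 (hinc (i + 2) s (by omega) h5 h3)
        · by_cases hs : s = i + 1
          · subst hs
            rw [hρ₁d r (by omega) hr]
            exact lt_of_lt_of_le (hinc r (i + 1) h1 h2 (by omega)) hmono
          · rw [hρ₁d r (by omega) hr, hρ₁d s (by omega) hs]
            exact hinc r s h1 h2 h3
      obtain ⟨ih1, ih2, ih3⟩ := ih (by omega) ρ₁ Y hY hsatY hinc1
      rw [applyT_append]
      refine ⟨?_, ih2, ?_⟩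
      · intro r h1 h2
        refine le_trans ?_ (ih1 r h1 h2)
        by_cases hr : r = i + 1
        · subst hr; exact hmono
        · rw [hρ₁d r h2 hr]
      · intro r hr hrk
        rw [ih3 r (by omega) hrk]
        exact applyT_untouched ρ X r (fun p hp => by
          obtain ⟨h1, h2, h3⟩ := hXel p hp
          constructor <;> omega)

lemma blocks_unique (n k : ℕ) (hkn : k ≤ n) :
    ∀ i, i ≤ k → ∀ ρ T T', T.Sublist (Blocks n k i) → T'.Sublist (Blocks n k i) →
      SatChain ρ T → SatChain ρ T' →
      (∀ r, 1 ≤ r → r ≤ i → applyT ρ T r = applyT ρ T' r) → T = T' := by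
  intro i
  induction i with
  | zero =>
      intro _ ρ T T' hT hT' _ _ _
      rw [show Blocks n k 0 = [] from rfl, List.sublist_nil] at hT hT'
      rw [hT, hT']
  | succ i ih =>
      intro hik ρ T T' hT hT' hsat hsat' hval
      rw [show Blocks n k (i+1) = GammaKI n k (i+1) ++ Blocks n k i from rfl,
        List.sublist_append_iff] at hT hT'
      obtain ⟨X, Y, rfl, hX, hY⟩ := hT
      obtain ⟨X', Y', rfl, hX', hY'⟩ := hT'
      rw [satChain_append] at hsat hsat'
      obtain ⟨hsatX, hsatY⟩ := hsat
      obtain ⟨hsatX', hsatY'⟩ := hsat'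
      have hYfix : ∀ (Z : List (ℕ × ℕ)), Z.Sublist (Blocks n k i) →
          ∀ (τ : Equiv.Perm ℕ), applyT τ Z (i + 1) = τ (i + 1) := by
        intro Z hZ τ
        exact applyT_untouched τ Z (i + 1) (fun p hp => by
          obtain ⟨h1, h2, h3, h4⟩ := mem_blocks_sub hZ hp
          constructor <;> omega)
      have hvali : applyT ρ X (i + 1) = applyT ρ X' (i + 1) := by
        have h1 := hval (i + 1) (by omega) (le_refl _)
        rw [applyT_append, applyT_append, hYfix Y hY, hYfix Y' hY'] at h1
        exact h1
      have hXX' : X = X' := by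
        rw [gammaKI_eq_map] at hX hX'
        exact block_unique ρ (i + 1) (ColCs n k) (colCs_sorted n k)
          (fun c hc => by rw [mem_colCs] at hc; omega) X X' hX hX' hsatX hsatX' hvali
      subst hXX'
      have hYY' : Y = Y' := by
        refine ih (by omega) (applyT ρ X) Y Y' hY hY' hsatY hsatY' ?_
        intro r h1 h2
        have := hval r h1 (by omega)
        rw [applyT_append, applyT_append] at this
        exact this
      rw [hYY']

lemma FixOut.symm (hw : FixOut n w) : FixOut n w.symm := by
  intro i hi
  have := hw i hi
  exact (Equiv.symm_apply_eq w).2 this.symm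

lemma blocks_exists (n k : ℕ) (hkn : k ≤ n) (b : ℕ → ℕ)
    (hb1 : ∀ r s, 1 ≤ r → r < s → s ≤ k → b r < b s)
    (hb2 : ∀ r, 1 ≤ r → r ≤ k → 1 ≤ b r ∧ b r ≤ n) :
    ∀ i, i ≤ k → ∀ ρ, FixOut n ρ →
      (∀ r, 1 ≤ r → r ≤ i → ρ r ≤ b r) →
      (∀ r, i < r → r ≤ k → ρ r = b r) →
      ∃ T, T.Sublist (Blocks n k i) ∧ SatChain ρ T ∧
        (∀ r, 1 ≤ r → r ≤ k → applyT ρ T r = b r) := by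
  intro i
  induction i with
  | zero =>
      intro _ ρ _ _ h3
      exact ⟨[], List.Sublist.refl _, trivial, fun r h1 h2 => h3 r (by omega) h2⟩
  | succ i ih =>
      intro hik ρ hfix h2 h3
      have havail : ρ (i + 1) = b (i + 1) ∨ ∃ c ∈ ColCs n k, ρ c = b (i + 1) := by
        by_cases heq : ρ (i + 1) = b (i + 1)
        · exact Or.inl heq
        right
        set e := ρ.symm (b (i + 1)) with he
        have hρe : ρ e = b (i + 1) := Equiv.apply_symm_apply ρ _
        have hbn : 1 ≤ b (i + 1) ∧ b (i + 1) ≤ n := hb2 (i + 1) (by omega) (by omega)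
        have hen : 1 ≤ e ∧ e ≤ n := hfix.symm.mem hbn.1 hbn.2
        have hei : ¬(1 ≤ e ∧ e ≤ i) := by
          rintro ⟨ha, hb'⟩
          have := h2 e ha (by omega)
          have := hb1 e (i + 1) ha (by omega) (by omega)
          omega
        have hei1 : e ≠ i + 1 := fun hh => heq (hh ▸ hρe)
        have hek : ¬(i + 1 < e ∧ e ≤ k) := by
          rintro ⟨ha, hb'⟩
          have hbe := h3 e ha hb'
          have := hb1 (i + 1) e (by omega) ha hb'
          omega
        exact ⟨e, mem_colCs.2 ⟨by omega, hen.2⟩, hρe⟩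
      obtain ⟨X, hXsub, hXsat, hXval⟩ := block_exists ρ (i + 1) (b (i + 1)) (ColCs n k)
        (colCs_sorted n k) (fun c hc => by rw [mem_colCs] at hc; omega)
        (h2 (i + 1) (by omega) (le_refl _)) havail
        (by
          intro d hd hdcs
          rw [mem_colCs, not_and_or] at hdcs
          by_cases hdk : d ≤ k
          · have hbd := h3 d hd hdk
            have := hb1 (i + 1) d (by omega) hd hdk
            omega
          · have hdn : n < d := by omega
            have := hfix d (Or.inr hdn)
            have hbn := hb2 (i + 1) (by omega) (by omega)
            omega)
      set ρ₁ := applyT ρ X with hρ₁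
      have hXel : ∀ p ∈ X, p.1 = i + 1 ∧ k + 1 ≤ p.2 ∧ p.2 ≤ n := by
        intro p hp
        obtain ⟨h1', h2'⟩ := mem_of_sublist_map hXsub hp
        rw [mem_colCs] at h2'
        exact ⟨h1', h2'⟩
      have hfix1 : FixOut n ρ₁ := hfix.applyT X (fun p hp => by
        obtain ⟨ha, hb', hc⟩ := hXel p hp
        refine ⟨by omega, by omega, by omega, hc⟩)
      have hρ₁d : ∀ d, d ≤ k → d ≠ i + 1 → ρ₁ d = ρ d := by
        intro d hd hdne
        exact applyT_untouched ρ X d (fun p hp => by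
          obtain ⟨ha, hb', hc⟩ := hXel p hp
          constructor <;> omega)
      obtain ⟨Y, hYsub, hYsat, hYval⟩ := ih (by omega) ρ₁ hfix1
        (fun r h1' h2' => by rw [hρ₁d r (by omega) (by omega)]; exact h2 r h1' (by omega))
        (fun r h1' h2' => by
          by_cases hr : r = i + 1
          · subst hr; exact hXval
          · rw [hρ₁d r h2' hr]; exact h3 r (by omega) h2')
      refine ⟨X ++ Y, ?_, ?_, ?_⟩
      · rw [show Blocks n k (i+1) = GammaKI n k (i+1) ++ Blocks n k i from rfl]
        exact List.Sublist.append (by rw [gammaKI_eq_map]; exact hXsub) hYsub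
      · rw [satChain_append]
        exact ⟨hXsat, hYsat⟩
      · intro r h1' h2'
        rw [applyT_append]
        exact hYval r h1' h2'

/-! ### take/flatten bookkeeping -/

lemma take_succ_getD (l : List (List (ℕ × ℕ))) (j : ℕ) (h : j < l.length) :
    l.take (j + 1) = l.take j ++ [l.getD j []] := by
  rw [List.take_succ]
  simp [List.getElem?_eq_getElem h, List.getD_eq_getElem?_getD]

lemma flatten_take_succ (L : List (List (ℕ × ℕ))) (j : ℕ) (hj : j < L.length) :
    (L.take (j + 1)).flatten = (L.take j).flatten ++ (L.getD j []) := by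
  rw [take_succ_getD L j hj, List.flatten_append]
  show _ ++ (L.getD j [] ++ []) = _
  rw [List.append_nil]

lemma satChain_flatten_take (T : List (List (ℕ × ℕ))) (w : Equiv.Perm ℕ)
    (hsat : SatChain w T.flatten) (j : ℕ) (hj : j ≤ T.length) :
    SatChain w (T.take j).flatten := by
  have : T.flatten = (T.take j).flatten ++ (T.drop j).flatten := by
    rw [← List.flatten_append, List.take_append_drop]
  rw [this, satChain_append] at hsat
  exact hsat.1

lemma satChain_col (T : List (List (ℕ × ℕ))) (w : Equiv.Perm ℕ)
    (hsat : SatChain w T.flatten) (j : ℕ) (hj : j < T.length) :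
    SatChain (applyT w (T.take j).flatten) (T.getD j []) := by
  have h1 := satChain_flatten_take T w hsat (j + 1) (by omega)
  rw [flatten_take_succ T j hj, satChain_append] at h1
  exact h1.2

lemma mem_gammaK {n k : ℕ} {p : ℕ × ℕ} (hp : p ∈ GammaK n k) :
    1 ≤ p.1 ∧ p.1 < p.2 ∧ p.2 ≤ n := by
  rw [gammaK_eq_blocks] at hp
  have := mem_blocks hp
  exact ⟨this.1, by omega, this.2.2.2⟩

/-! ### conj lemmas -/

lemma conj_zero (n : ℕ) (lam : ℕ → ℕ) : conj n lam 0 = n := by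
  simp [conj]

lemma conj_anti (n : ℕ) (lam : ℕ → ℕ) {j j' : ℕ} (h : j ≤ j') :
    conj n lam j' ≤ conj n lam j := by
  apply Finset.card_le_card
  intro i hi
  rw [Finset.mem_filter] at hi ⊢
  exact ⟨hi.1, by omega⟩

lemma conj_le_pred (n : ℕ) (lam : ℕ → ℕ) (hn : 1 ≤ n) (hzero : ∀ i, n - 1 ≤ i → lam i = 0)
    {j : ℕ} (hj : 1 ≤ j) : conj n lam j ≤ n - 1 := by
  have : ((Finset.range n).filter fun i => j ≤ lam i) ⊆ Finset.range (n - 1) := by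
    intro i hi
    rw [Finset.mem_filter, Finset.mem_range] at hi
    rw [Finset.mem_range]
    by_contra hcon
    have : n - 1 ≤ i := by omega
    have := hzero i this
    omega
  calc conj n lam j ≤ (Finset.range (n - 1)).card := Finset.card_le_card this
    _ = n - 1 := Finset.card_range _

lemma lam_anti (n : ℕ) (lam : ℕ → ℕ) (hn : 1 ≤ n)
    (hdec : ∀ i, i + 1 < n → lam (i + 1) < lam i)
    (hzero : ∀ i, n - 1 ≤ i → lam i = 0) :
    ∀ i j, i ≤ j → lam j ≤ lam i := by
  have step : ∀ i, lam (i + 1) ≤ lam i := by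
    intro i
    by_cases h : i + 1 < n
    · exact le_of_lt (hdec i h)
    · rw [hzero (i + 1) (by omega)]
      omega
  intro i j hij
  induction j with
  | zero => simp at hij; subst hij; rfl
  | succ j ih =>
      rcases Nat.eq_or_lt_of_le hij with h | h
      · rw [h]
      · exact le_trans (step j) (ih (by omega))

lemma conj_pos (n : ℕ) (lam : ℕ → ℕ) (hn : 1 ≤ n) {j : ℕ} (hj : j ≤ lam 0) :
    1 ≤ conj n lam j := by
  rw [conj, Nat.one_le_iff_ne_zero, ← Nat.pos_iff_ne_zero, Finset.card_pos]
  exact ⟨0, by rw [Finset.mem_filter, Finset.mem_range]; exact ⟨by omega, hj⟩⟩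

lemma conj_eq_zero (n : ℕ) (lam : ℕ → ℕ) (hn : 1 ≤ n)
    (hdec : ∀ i, i + 1 < n → lam (i + 1) < lam i)
    (hzero : ∀ i, n - 1 ≤ i → lam i = 0) {j : ℕ} (hj : lam 0 < j) :
    conj n lam j = 0 := by
  rw [conj, Finset.card_eq_zero, Finset.filter_eq_empty_iff]
  intro i _
  have := lam_anti n lam hn hdec hzero 0 i (by omega)
  omega

section Global

variable (n : ℕ) (lam : ℕ → ℕ)

lemma global_forward (hn : 2 ≤ n)
    (hzero : ∀ i, n - 1 ≤ i → lam i = 0)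
    (T : List (List (ℕ × ℕ))) (hT : T.length = lam 0)
    (hsub : ∀ j < T.length, (T.getD j []).Sublist (GammaK n (conj n lam (j + 1))))
    (hsat : SatChain 1 T.flatten) :
    ∀ j, j ≤ T.length →
      FixOut n (applyT 1 (T.take j).flatten) ∧
      (∀ r s, 1 ≤ r → r < s → s ≤ conj n lam j →
        applyT 1 (T.take j).flatten r < applyT 1 (T.take j).flatten s) := by
  intro j
  induction j with
  | zero =>
      intro _
      simp only [List.take_zero]
      exact ⟨FixOut.one, fun r s h1 h2 h3 => by simpa using h2⟩
  | succ j ih =>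
      intro hj
      obtain ⟨hfix, hinc⟩ := ih (by omega)
      have hk_le : conj n lam (j + 1) ≤ conj n lam j := conj_anti n lam (by omega)
      have hkn : conj n lam (j + 1) ≤ n :=
        le_trans (conj_le_pred n lam (by omega) hzero (by omega)) (by omega)
      have hcolsub := hsub j (by omega)
      rw [gammaK_eq_blocks] at hcolsub
      have hcolsat := satChain_col T 1 hsat j (by omega)
      obtain ⟨f1, f2, f3⟩ := blocks_forward n (conj n lam (j + 1)) hkn (conj n lam (j + 1))
        (le_refl _) _ _ hcolsub hcolsat
        (fun r s h1 h2 h3 => hinc r s h1 h2 (le_trans h3 hk_le))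
      rw [flatten_take_succ T j (by omega), applyT_append]
      constructor
      · apply hfix.applyT
        intro p hp
        have hb := mem_gammaK ((hsub j (by omega)).mem hp)
        exact ⟨hb.1, by omega, by omega, hb.2.2⟩
      · exact f2

lemma global_row (hn : 2 ≤ n)
    (hzero : ∀ i, n - 1 ≤ i → lam i = 0)
    (T : List (List (ℕ × ℕ))) (hT : T.length = lam 0)
    (hsub : ∀ j < T.length, (T.getD j []).Sublist (GammaK n (conj n lam (j + 1))))
    (hsat : SatChain 1 T.flatten) :
    ∀ j, j < T.length → ∀ r, 1 ≤ r → r ≤ conj n lam (j + 1) →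
      applyT 1 (T.take j).flatten r ≤ applyT 1 (T.take (j + 1)).flatten r := by
  intro j hj r h1 h2
  obtain ⟨hfix, hinc⟩ := global_forward n lam hn hzero T hT hsub hsat j (by omega)
  have hk_le : conj n lam (j + 1) ≤ conj n lam j := conj_anti n lam (by omega)
  have hkn : conj n lam (j + 1) ≤ n :=
    le_trans (conj_le_pred n lam (by omega) hzero (by omega)) (by omega)
  have hcolsub := hsub j (by omega)
  rw [gammaK_eq_blocks] at hcolsub
  have hcolsat := satChain_col T 1 hsat j (by omega)
  obtain ⟨f1, f2, f3⟩ := blocks_forward n (conj n lam (j + 1)) hkn (conj n lam (j + 1))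
    (le_refl _) _ _ hcolsub hcolsat
    (fun r s h1 h2 h3 => hinc r s h1 h2 (le_trans h3 hk_le))
  rw [flatten_take_succ T j (by omega), applyT_append]
  exact f1 r h1 h2

end Global

lemma getD_append_lt (l : List (List (ℕ × ℕ))) (x : List (ℕ × ℕ)) {j : ℕ}
    (h : j < l.length) : (l ++ [x]).getD j [] = l.getD j [] := by
  simp [List.getD_eq_getElem?_getD, List.getElem?_append_left h]

lemma getD_append_last (l : List (List (ℕ × ℕ))) (x : List (ℕ × ℕ)) :
    (l ++ [x]).getD l.length [] = x := by
  simp [List.getD_eq_getElem?_getD, List.getElem?_concat_length]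

lemma getD_mem (l : List (List (ℕ × ℕ))) {y : List (ℕ × ℕ)} (hy : y ∈ l) :
    ∃ j, j < l.length ∧ l.getD j [] = y := by
  rw [List.mem_iff_getElem] at hy
  obtain ⟨j, hj, rfl⟩ := hy
  exact ⟨j, hj, by simp [List.getD_eq_getElem?_getD, List.getElem?_eq_getElem hj]⟩

lemma flatten_bounds {n : ℕ} {lam : ℕ → ℕ} (T : List (List (ℕ × ℕ)))
    (hsub : ∀ j < T.length, (T.getD j []).Sublist (GammaK n (conj n lam (j + 1)))) :
    ∀ p ∈ T.flatten, 1 ≤ p.1 ∧ p.1 < p.2 ∧ p.2 ≤ n := by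
  intro p hp
  rw [List.mem_flatten] at hp
  obtain ⟨l, hl, hpl⟩ := hp
  obtain ⟨j, hj, rfl⟩ := getD_mem T hl
  exact mem_gammaK ((hsub j hj).mem hpl)


/-- An admissible pair `(w, T)` for the partition `λ = (lam 0, …, lam (n-1))`:
`w` is a permutation of `{1, …, n}` (a permutation of `ℕ` fixing everything outside
`{1, …, n}`), and `T = T_1 T_2 ⋯ T_{λ_1}` where `T_j` is a subword of `Γ_{λ'_j}`, such
that the lengths `ℓ(w t_1 ⋯ t_i)` strictly increase along the concatenation
`t_1, …, t_m` of the `T_j`. -/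
structure AdmissiblePair (n : ℕ) (lam : ℕ → ℕ) where
  w : Equiv.Perm ℕ
  T : List (List (ℕ × ℕ))
  hw : ∀ i, i = 0 ∨ n < i → w i = i
  hT : T.length = lam 0
  hsub : ∀ j < T.length, (T.getD j []).Sublist (GammaK n (conj n lam (j + 1)))
  hchain : ∀ i < T.flatten.length,
    len n (applyT w (T.flatten.take i)) < len n (applyT w (T.flatten.take (i + 1)))

/-- The permutation `π_j = w T_1 ⋯ T_j` associated with an admissible pair. -/
def piCol {n : ℕ} {lam : ℕ → ℕ} (a : AdmissiblePair n lam) (j : ℕ) : Equiv.Perm ℕ :=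
  applyT a.w ((a.T.take j).flatten)

/-- The filling `σ(w, T)` of the Young diagram of `λ` associated with an admissible pair:
the `j`-th column contains `π_j(1), …, π_j(λ'_j)` from top to bottom (rows and columns
are `1`-indexed; the value is `0` outside the diagram). -/
def sigmaOf {n : ℕ} {lam : ℕ → ℕ} (a : AdmissiblePair n lam) : ℕ → ℕ → ℕ :=
  fun r c => if 1 ≤ r ∧ 1 ≤ c ∧ r ≤ conj n lam c then piCol a c r else 0

/-- `σ` is (the indicator-extension of) a semistandard Young tableau of shape `λ` with
entries in `{1, …, n}`: entries vanish outside the diagram, lie in `{1, …, n}` on the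
diagram, rows weakly increase and columns strictly increase. -/
def IsSSYT (n : ℕ) (lam : ℕ → ℕ) (σ : ℕ → ℕ → ℕ) : Prop :=
  (∀ r c, ¬(1 ≤ r ∧ 1 ≤ c ∧ r ≤ conj n lam c) → σ r c = 0) ∧
  (∀ r c, 1 ≤ r → 1 ≤ c → r ≤ conj n lam c → 1 ≤ σ r c ∧ σ r c ≤ n) ∧
  (∀ r c, 1 ≤ r → 1 ≤ c → r ≤ conj n lam (c + 1) → σ r c ≤ σ r (c + 1)) ∧
  (∀ r c, 1 ≤ r → 1 ≤ c → r + 1 ≤ conj n lam c → σ r c < σ (r + 1) c)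


lemma AdmissiblePair.ext' {n : ℕ} {lam : ℕ → ℕ} {a b : AdmissiblePair n lam}
    (h1 : a.w = b.w) (h2 : a.T = b.T) : a = b := by
  cases a; cases b
  dsimp only at h1 h2
  subst h1; subst h2
  rfl

lemma pair_satChain {n : ℕ} {lam : ℕ → ℕ} (a : AdmissiblePair n lam) (hw : a.w = 1)
    (hsat : ∀ i < a.T.flatten.length,
      len n (applyT a.w (a.T.flatten.take (i + 1))) =
        len n (applyT a.w (a.T.flatten.take i)) + 1) :
    SatChain 1 a.T.flatten := by
  apply (satChain_iff_saturated n 1 a.T.flatten (flatten_bounds a.T a.hsub)).2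
  intro i hi
  have := hsat i hi
  rwa [hw] at this

/-- The alcove model realizes SSYT as saturated chains in Bruhat order: for a partition
`λ` with distinct parts, the map `(w, T) ↦ σ(w, T)`, restricted to admissible pairs with
`w = id` whose Bruhat chain is saturated (each step raises the length by exactly `1`),
is a bijection onto `SSYT_{[n]}(λ)`. -/
theorem alcove_saturated_bijection_SSYT (n : ℕ) (hn : 2 ≤ n) (lam : ℕ → ℕ)
    (hdec : ∀ i, i + 1 < n → lam (i + 1) < lam i)
    (hzero : ∀ i, n - 1 ≤ i → lam i = 0) :
    Set.BijOn (fun a : AdmissiblePair n lam => sigmaOf a)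
      {a : AdmissiblePair n lam | a.w = 1 ∧
        ∀ i < a.T.flatten.length,
          len n (applyT a.w (a.T.flatten.take (i + 1))) =
            len n (applyT a.w (a.T.flatten.take i)) + 1}
      {σ : ℕ → ℕ → ℕ | IsSSYT n lam σ} := by
  have hn1 : 1 ≤ n := by omega
  have hconj_le : ∀ {j : ℕ}, 1 ≤ j → conj n lam j ≤ n - 1 :=
    fun hj => conj_le_pred n lam hn1 hzero hj
  refine ⟨?_, ?_, ?_⟩
  · -- MapsTo
    rintro a ⟨haw, hasat⟩
    have hsat : SatChain 1 a.T.flatten := pair_satChain a haw hasat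
    have hGF := global_forward n lam hn hzero a.T a.hT a.hsub hsat
    have hGR := global_row n lam hn hzero a.T a.hT a.hsub hsat
    have hpi : ∀ c, piCol a c = applyT 1 ((a.T.take c).flatten) := fun c => by
      rw [piCol, haw]
    refine ⟨?_, ?_, ?_, ?_⟩
    · intro r c h
      simp only [sigmaOf, if_neg h]
    · intro r c h1 h2 h3
      have hc : c ≤ lam 0 := by
        by_contra hcon
        rw [conj_eq_zero n lam hn1 hdec hzero (by omega)] at h3
        omega
      have hfix := (hGF c (by rw [a.hT]; exact hc)).1
      have hrn : r ≤ n := le_trans h3 (le_trans (hconj_le h2) (by omega))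
      have hcond : 1 ≤ r ∧ 1 ≤ c ∧ r ≤ conj n lam c := ⟨h1, h2, h3⟩
      simp only [sigmaOf]
      rw [if_pos hcond, hpi]
      exact hfix.mem h1 hrn
    · intro r c h1 h2 h3
      have hc1 : c + 1 ≤ lam 0 := by
        by_contra hcon
        rw [conj_eq_zero n lam hn1 hdec hzero (by omega)] at h3
        omega
      have h3' : r ≤ conj n lam c := le_trans h3 (conj_anti n lam (by omega))
      have hcond1 : 1 ≤ r ∧ 1 ≤ c ∧ r ≤ conj n lam c := ⟨h1, h2, h3'⟩
      have hcond2 : 1 ≤ r ∧ 1 ≤ c + 1 ∧ r ≤ conj n lam (c + 1) := ⟨h1, by omega, h3⟩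
      simp only [sigmaOf]
      rw [if_pos hcond1, if_pos hcond2, hpi, hpi]
      exact hGR c (by rw [a.hT]; omega) r h1 h3
    · intro r c h1 h2 h3
      have hc : c ≤ lam 0 := by
        by_contra hcon
        rw [conj_eq_zero n lam hn1 hdec hzero (by omega)] at h3
        omega
      have hinc := (hGF c (by rw [a.hT]; exact hc)).2
      have hcond1 : 1 ≤ r ∧ 1 ≤ c ∧ r ≤ conj n lam c := ⟨h1, h2, by omega⟩
      have hcond2 : 1 ≤ r + 1 ∧ 1 ≤ c ∧ r + 1 ≤ conj n lam c := ⟨by omega, h2, h3⟩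
      simp only [sigmaOf]
      rw [if_pos hcond1, if_pos hcond2, hpi]
      exact hinc r (r + 1) h1 (by omega) h3
  · -- InjOn
    rintro a ⟨haw, hasat⟩ a' ⟨haw', hasat'⟩ heq
    simp only at heq
    have hsatA : SatChain 1 a.T.flatten := pair_satChain a haw hasat
    have hsatA' : SatChain 1 a'.T.flatten := pair_satChain a' haw' hasat'
    have hlen : a.T.length = a'.T.length := by rw [a.hT, a'.hT]
    have keytake : ∀ j, j ≤ a.T.length → a.T.take j = a'.T.take j := by
      intro j
      induction j with
      | zero => simp
      | succ j ih =>
          intro hj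
          have htj := ih (by omega)
          have hjlt : j < a.T.length := by omega
          have hjlt' : j < a'.T.length := by omega
          have hjlam : j + 1 ≤ lam 0 := by rw [← a.hT]; omega
          have hkn : conj n lam (j + 1) ≤ n := le_trans (hconj_le (by omega)) (by omega)
          have hsubj := a.hsub j hjlt
          have hsubj' := a'.hsub j hjlt'
          rw [gammaK_eq_blocks] at hsubj hsubj'
          have hsatj := satChain_col a.T 1 hsatA j hjlt
          have hsatj' := satChain_col a'.T 1 hsatA' j hjlt'
          rw [← htj] at hsatj'
          have hvals : ∀ r, 1 ≤ r → r ≤ conj n lam (j + 1) →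
              applyT (applyT 1 (a.T.take j).flatten) (a.T.getD j []) r =
              applyT (applyT 1 (a.T.take j).flatten) (a'.T.getD j []) r := by
            intro r h1 h2
            have e1 : applyT (applyT 1 (a.T.take j).flatten) (a.T.getD j []) r =
                sigmaOf a r (j + 1) := by
              rw [← applyT_append, ← flatten_take_succ a.T j hjlt]
              have hcond : 1 ≤ r ∧ 1 ≤ j + 1 ∧ r ≤ conj n lam (j + 1) := ⟨h1, by omega, h2⟩
              simp only [sigmaOf]
              rw [if_pos hcond, piCol, haw]
            have e2 : applyT (applyT 1 (a.T.take j).flatten) (a'.T.getD j []) r =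
                sigmaOf a' r (j + 1) := by
              rw [htj, ← applyT_append, ← flatten_take_succ a'.T j hjlt']
              have hcond : 1 ≤ r ∧ 1 ≤ j + 1 ∧ r ≤ conj n lam (j + 1) := ⟨h1, by omega, h2⟩
              simp only [sigmaOf]
              rw [if_pos hcond, piCol, haw']
            rw [e1, e2, heq]
          have hcols : a.T.getD j [] = a'.T.getD j [] :=
            blocks_unique n (conj n lam (j + 1)) hkn (conj n lam (j + 1)) (le_refl _)
              (applyT 1 (a.T.take j).flatten) _ _ hsubj hsubj' hsatj hsatj' hvals
          rw [take_succ_getD a.T j hjlt, take_succ_getD a'.T j hjlt', htj, hcols]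
    have hTeq : a.T = a'.T := by
      have h2 := keytake a.T.length (le_refl _)
      rw [List.take_length, hlen, List.take_length] at h2
      exact h2
    exact AdmissiblePair.ext' (by rw [haw, haw']) hTeq
  · -- SurjOn
    rintro σ hσ
    obtain ⟨hv, hbnd, hrow, hcol⟩ := hσ
    have colstrict : ∀ c r s, 1 ≤ r → 1 ≤ c → r < s → s ≤ conj n lam c → σ r c < σ s c := by
      intro c r s h1 hc h2 h3
      induction s with
      | zero => omega
      | succ s ih =>
          rcases Nat.lt_succ_iff_lt_or_eq.1 h2 with h | h
          · exact lt_trans (ih h (le_trans (by omega) h3))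
              (hcol s c (by omega) hc h3)
          · subst h
            exact hcol r c h1 hc h3
    have rowge : ∀ c r, 1 ≤ r → 1 ≤ c → r ≤ conj n lam c → r ≤ σ r c := by
      intro c r
      induction r with
      | zero => omega
      | succ r ih =>
          intro _ hc hr
          by_cases hr0 : r = 0
          · subst hr0
            exact (hbnd 1 c (by omega) hc hr).1
          · have i1 := ih (by omega) hc (by omega)
            have i2 := hcol r c (by omega) hc hr
            omega
    have build : ∀ m, m ≤ lam 0 → ∃ TL : List (List (ℕ × ℕ)),
        TL.length = m ∧
        (∀ j < m, (TL.getD j []).Sublist (GammaK n (conj n lam (j + 1)))) ∧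
        SatChain 1 TL.flatten ∧
        (∀ j, j ≤ m → ∀ r, 1 ≤ r → r ≤ conj n lam j →
          applyT 1 (TL.take j).flatten r = if j = 0 then r else σ r j) := by
      intro m
      induction m with
      | zero =>
          intro _
          exact ⟨[], rfl, by omega, trivial, by
            intro j hj r h1 h2
            simp only [Nat.le_zero] at hj
            subst hj
            simp⟩
      | succ m ih =>
          intro hm
          obtain ⟨TL, hlen, hsub, hsat, hval⟩ := ih (by omega)
          set π := applyT 1 TL.flatten with hπ
          have hπtake : applyT 1 (TL.take m).flatten = π := by
            rw [hπ, ← hlen, List.take_length]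
          have hkpos : 1 ≤ conj n lam (m + 1) := conj_pos n lam hn1 (by omega)
          have hkn : conj n lam (m + 1) ≤ n := le_trans (hconj_le (by omega)) (by omega)
          have hfixπ : FixOut n π := FixOut.one.applyT TL.flatten (by
            intro p hp
            have := flatten_bounds TL (fun j hj => hsub j (by omega)) p hp
            exact ⟨this.1, by omega, by omega, this.2.2⟩)
          have hH2 : ∀ r, 1 ≤ r → r ≤ conj n lam (m + 1) → π r ≤ σ r (m + 1) := by
            intro r h1 h2
            have hvr := hval m (le_refl _) r h1 (le_trans h2 (conj_anti n lam (by omega)))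
            rw [hπtake] at hvr
            by_cases hm0 : m = 0
            · subst hm0
              simp only [if_pos rfl] at hvr
              rw [hvr]
              exact rowge 1 r h1 (by omega) (by simpa using h2)
            · rw [if_neg hm0] at hvr
              rw [hvr]
              exact hrow r m h1 (by omega) h2
          obtain ⟨X, hXsub, hXsat, hXval⟩ := blocks_exists n (conj n lam (m + 1)) hkn
            (fun r => σ r (m + 1))
            (fun r s h1 h2 h3 => colstrict (m + 1) r s h1 (by omega) h2 h3)
            (fun r h1 h2 => hbnd r (m + 1) h1 (by omega) h2)
            (conj n lam (m + 1)) (le_refl _) π hfixπ hH2 (fun r hr1 hr2 => by omega)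
          refine ⟨TL ++ [X], by simp [hlen], ?_, ?_, ?_⟩
          · intro j hj
            by_cases hjm : j < m
            · rw [getD_append_lt TL X (by omega)]
              exact hsub j hjm
            · have hjm' : j = m := by omega
              subst hjm'
              have hgd : (TL ++ [X]).getD j [] = X := by
                rw [← hlen]
                exact getD_append_last TL X
              rw [hgd, gammaK_eq_blocks]
              exact hXsub
          · rw [List.flatten_append, satChain_append]
            refine ⟨hsat, ?_⟩
            simpa using hXsat
          · intro j hj r h1 h2
            by_cases hjm : j ≤ m
            · rw [List.take_append_of_le_length (by omega)]
              exact hval j hjm r h1 h2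
            · have hjm' : j = m + 1 := by omega
              subst hjm'
              have htake : (TL ++ [X]).take (m + 1) = TL ++ [X] := by
                apply List.take_of_length_le
                simp [hlen]
              rw [htake, List.flatten_append, applyT_append, if_neg (by omega)]
              have : applyT (applyT 1 TL.flatten) [X].flatten r = applyT π X r := by
                rw [hπ]
                congr 1
                simp
              rw [this]
              exact hXval r h1 h2
    obtain ⟨TL, hlen, hsub, hsat, hval⟩ := build (lam 0) (le_refl _)
    have hbounds := flatten_bounds TL (fun j hj => hsub j (by omega))
    have hchain : ∀ i < TL.flatten.length,
        len n (applyT 1 (TL.flatten.take i)) < len n (applyT 1 (TL.flatten.take (i + 1))) := by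
      intro i hi
      have := (satChain_iff_saturated n 1 TL.flatten hbounds).1 hsat i hi
      omega
    refine ⟨⟨1, TL, fun i _ => rfl, hlen, fun j hj => hsub j (by omega), hchain⟩, ?_, ?_⟩
    · refine ⟨rfl, ?_⟩
      intro i hi
      exact (satChain_iff_saturated n 1 TL.flatten hbounds).1 hsat i hi
    · simp only
      funext r c
      by_cases h : 1 ≤ r ∧ 1 ≤ c ∧ r ≤ conj n lam c
      · have hc : c ≤ lam 0 := by
          by_contra hcon
          rw [conj_eq_zero n lam hn1 hdec hzero (by omega)] at h
          omega
        simp only [sigmaOf, if_pos h, piCol]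
        have := hval c hc r h.1 h.2.2
        rw [if_neg (by omega)] at this
        exact this
      · simp only [sigmaOf, if_neg h]
        exact (hv r c h).symm
end
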